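/- arXiv:2011.08620 — 8 statements merged into one kernel-verified Lean document; each statement's English description precedes it below -/
import Mathlib

section
/- Assume ψ_{pw}(i,j) > 0 for all i ∈ {1,…,n} and j ∈ {1,…,m}. Then the kernel of M is exactly the two-dimensional space spanned by u_1 = (e_n, 0) and u_2 = (0, e_m), where e_n ∈ ℝ^n and e_m ∈ ℝ^m are the all-ones vectors: M u = 0 if and only if u = (α e_n, β e_m) for some scalars α, β. In particular M has rank n + m − 2. -/
open Finset Matrix

theorem stmt_7 (n m l : ℕ) (hl : 1 ≤ l)
    (p : Fin (n+1) → ℝ) (q : Fin l → ℝ) (w : Fin (m+1) → ℝ)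
    (ψ : Fin (n+1) → Fin l → Fin (m+1) → ℝ)
    (hψ0 : ∀ i k j, 0 ≤ ψ i k j)
    (hψ1 : ∑ i, ∑ k, ∑ j, ψ i k j = 1)
    (ψp : Fin (n+1) → ℝ) (hψp : ∀ i, ψp i = ∑ k, ∑ j, ψ i k j)
    (ψw : Fin (m+1) → ℝ) (hψw : ∀ j, ψw j = ∑ i, ∑ k, ψ i k j)
    (ψpw : Matrix (Fin (n+1)) (Fin (m+1)) ℝ) (hψpw : ∀ i j, ψpw i j = ∑ k, ψ i k j)
    (M : Matrix (Fin (n+1) ⊕ Fin (m+1)) (Fin (n+1) ⊕ Fin (m+1)) ℝ)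
    (hMpp : ∀ i i', M (Sum.inl i) (Sum.inl i') = (if i = i' then ψp i else 0) - ψp i * ψp i')
    (hMww : ∀ j j', M (Sum.inr j) (Sum.inr j') = (if j = j' then ψw j else 0) - ψw j * ψw j')
    (hMpw : ∀ i j, M (Sum.inl i) (Sum.inr j) = ψpw i j - ψp i * ψw j)
    (hMwp : ∀ i j, M (Sum.inr j) (Sum.inl i) = ψpw i j - ψp i * ψw j)
    (hpos : ∀ i j, 0 < ψpw i j) :
    (∀ u : Fin (n+1) ⊕ Fin (m+1) → ℝ,
      M.mulVec u = 0 ↔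
        ∃ α β : ℝ, u = Sum.elim (fun _ => α) (fun _ => β)) ∧
    M.rank = n + m := by
  -- basic marginal identities
  have hψpS : ∀ i, ∑ j, ψpw i j = ψp i := by
    intro i
    rw [hψp, Finset.sum_comm]
    exact Finset.sum_congr rfl fun j _ => hψpw i j
  have hψwS : ∀ j, ∑ i, ψpw i j = ψw j := by
    intro j
    rw [hψw]
    exact Finset.sum_congr rfl fun i _ => hψpw i j
  have hpsum : ∑ i, ψp i = 1 := by
    rw [← hψ1]
    exact Finset.sum_congr rfl fun i _ => hψp i
  have hwsum : ∑ j, ψw j = 1 := by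
    have : ∑ j, ψw j = ∑ i, ∑ j, ψpw i j := by
      refine Eq.trans ?_ Finset.sum_comm
      exact Finset.sum_congr rfl fun j _ => (hψwS j).symm
    rw [this]
    simp_rw [hψpS]
    exact hpsum
  -- the kernel characterization
  have hker : ∀ u : Fin (n+1) ⊕ Fin (m+1) → ℝ,
      M.mulVec u = 0 ↔ ∃ α β : ℝ, u = Sum.elim (fun _ => α) (fun _ => β) := by
    intro u
    constructor
    · intro hMu
      set A := ∑ i, ψp i * u (Sum.inl i) with hA
      set B := ∑ j, ψw j * u (Sum.inr j) with hB
      obtain ⟨z, hzdef⟩ : ∃ z : Fin (n+1) → Fin (m+1) → ℝ,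
          ∀ i j, z i j = u (Sum.inl i) + u (Sum.inr j) - (A + B) :=
        ⟨_, fun _ _ => rfl⟩
      -- the rows of M u are weighted sums of z
      have hrow1 : ∀ i, ∑ j, ψpw i j * z i j = 0 := by
        intro i
        have h1 : M.mulVec u (Sum.inl i) = ∑ j, ψpw i j * z i j := by
          have e0 : M.mulVec u (Sum.inl i)
              = ∑ i', M (Sum.inl i) (Sum.inl i') * u (Sum.inl i')
                + ∑ j, M (Sum.inl i) (Sum.inr j) * u (Sum.inr j) := by
            simp [Matrix.mulVec, dotProduct, Fintype.sum_sum_type]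
          rw [e0]
          simp only [hMpp, hMpw, sub_mul, ite_mul, zero_mul]
          rw [Finset.sum_sub_distrib, Finset.sum_sub_distrib, Finset.sum_ite_eq]
          simp only [Finset.mem_univ, if_true]
          have e1 : ∑ i', ψp i * ψp i' * u (Sum.inl i') = ψp i * A := by
            rw [hA, Finset.mul_sum]
            exact Finset.sum_congr rfl fun i' _ => by ring
          have e2 : ∑ j, ψp i * ψw j * u (Sum.inr j) = ψp i * B := by
            rw [hB, Finset.mul_sum]
            exact Finset.sum_congr rfl fun j _ => by ring
          have e3 : ∑ j, ψpw i j * z i j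
              = ψpw i ⬝ᵥ (fun j => u (Sum.inr j)) + ψp i * u (Sum.inl i) - ψp i * (A + B) := by
            simp_rw [hzdef]
            have : ∀ j, ψpw i j * (u (Sum.inl i) + u (Sum.inr j) - (A + B))
                = ψpw i j * u (Sum.inr j) + ψpw i j * u (Sum.inl i) - ψpw i j * (A + B) := by
              intro j; ring
            simp_rw [this]
            rw [Finset.sum_sub_distrib, Finset.sum_add_distrib, ← Finset.sum_mul,
              ← Finset.sum_mul, hψpS]
            rfl
          rw [e1, e2, e3]
          simp only [dotProduct]
          ring
        rw [← h1, hMu]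
        rfl
      have hrow2 : ∀ j, ∑ i, ψpw i j * z i j = 0 := by
        intro j
        have h1 : M.mulVec u (Sum.inr j) = ∑ i, ψpw i j * z i j := by
          have e0 : M.mulVec u (Sum.inr j)
              = ∑ i, M (Sum.inr j) (Sum.inl i) * u (Sum.inl i)
                + ∑ j', M (Sum.inr j) (Sum.inr j') * u (Sum.inr j') := by
            simp [Matrix.mulVec, dotProduct, Fintype.sum_sum_type]
          rw [e0]
          simp only [hMwp, hMww, sub_mul, ite_mul, zero_mul]
          rw [Finset.sum_sub_distrib, Finset.sum_sub_distrib, Finset.sum_ite_eq]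
          simp only [Finset.mem_univ, if_true]
          have e1 : ∑ i, ψp i * ψw j * u (Sum.inl i) = ψw j * A := by
            rw [hA, Finset.mul_sum]
            exact Finset.sum_congr rfl fun i _ => by ring
          have e2 : ∑ j', ψw j * ψw j' * u (Sum.inr j') = ψw j * B := by
            rw [hB, Finset.mul_sum]
            exact Finset.sum_congr rfl fun j' _ => by ring
          have e3 : ∑ i, ψpw i j * z i j
              = (∑ i, ψpw i j * u (Sum.inl i)) + ψw j * u (Sum.inr j) - ψw j * (A + B) := by
            simp_rw [hzdef]
            have : ∀ i, ψpw i j * (u (Sum.inl i) + u (Sum.inr j) - (A + B))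
                = ψpw i j * u (Sum.inl i) + ψpw i j * u (Sum.inr j) - ψpw i j * (A + B) := by
              intro i; ring
            simp_rw [this]
            rw [Finset.sum_sub_distrib, Finset.sum_add_distrib, ← Finset.sum_mul,
              ← Finset.sum_mul, hψwS]
          rw [e1, e2, e3]
          ring
        rw [← h1, hMu]
        rfl
      -- sum of squares vanishes
      have hsq : ∑ i, ∑ j, ψpw i j * z i j ^ 2 = 0 := by
        have expand : ∀ i j, ψpw i j * z i j ^ 2
            = (u (Sum.inl i) - (A + B)) * (ψpw i j * z i j)
              + u (Sum.inr j) * (ψpw i j * z i j) := by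
          intro i j; rw [hzdef]; ring
        simp_rw [expand, Finset.sum_add_distrib]
        have t1 : ∀ i, ∑ j, (u (Sum.inl i) - (A + B)) * (ψpw i j * z i j) = 0 := by
          intro i
          rw [← Finset.mul_sum, hrow1, mul_zero]
        have t2 : ∑ i, ∑ j, u (Sum.inr j) * (ψpw i j * z i j) = 0 := by
          rw [Finset.sum_comm]
          have : ∀ j, ∑ i, u (Sum.inr j) * (ψpw i j * z i j) = 0 := by
            intro j
            rw [← Finset.mul_sum, hrow2, mul_zero]
          simp_rw [this]
          simp
        simp_rw [t1]
        rw [Finset.sum_const_zero, zero_add, t2]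
      have hzero : ∀ i j, z i j = 0 := by
        have hterm : ∀ i j, 0 ≤ ψpw i j * z i j ^ 2 :=
          fun i j => mul_nonneg (hpos i j).le (sq_nonneg _)
        intro i j
        have h1 := (Finset.sum_eq_zero_iff_of_nonneg
          (fun i _ => Finset.sum_nonneg fun j _ => hterm i j)).mp hsq i (Finset.mem_univ i)
        have h2 := (Finset.sum_eq_zero_iff_of_nonneg
          (fun j _ => hterm i j)).mp h1 j (Finset.mem_univ j)
        have h3 : z i j ^ 2 = 0 := by
          rcases mul_eq_zero.mp h2 with h | h
          · exact absurd h (hpos i j).ne'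
          · exact h
        exact pow_eq_zero_iff (by norm_num) |>.mp h3
      refine ⟨(A + B) - u (Sum.inr 0), (A + B) - u (Sum.inl 0), ?_⟩
      funext x
      cases x with
      | inl i =>
        have h1 := hzero i 0
        rw [hzdef] at h1
        simp only [Sum.elim_inl]
        linarith
      | inr j =>
        have h1 := hzero 0 j
        rw [hzdef] at h1
        simp only [Sum.elim_inr]
        linarith
    · rintro ⟨α, β, rfl⟩
      have c1 : ∀ i, ∑ i', M (Sum.inl i) (Sum.inl i') = 0 := by
        intro i
        simp only [hMpp]
        rw [Finset.sum_sub_distrib, Finset.sum_ite_eq, ← Finset.mul_sum, hpsum]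
        simp
      have c2 : ∀ i, ∑ j, M (Sum.inl i) (Sum.inr j) = 0 := by
        intro i
        simp only [hMpw]
        rw [Finset.sum_sub_distrib, hψpS, ← Finset.mul_sum, hwsum]
        simp
      have c3 : ∀ j, ∑ i, M (Sum.inr j) (Sum.inl i) = 0 := by
        intro j
        simp only [hMwp]
        rw [Finset.sum_sub_distrib, hψwS]
        have : ∑ i, ψp i * ψw j = (∑ i, ψp i) * ψw j := by rw [Finset.sum_mul]
        rw [this, hpsum]
        simp
      have c4 : ∀ j, ∑ j', M (Sum.inr j) (Sum.inr j') = 0 := by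
        intro j
        simp only [hMww]
        rw [Finset.sum_sub_distrib, Finset.sum_ite_eq, ← Finset.mul_sum, hwsum]
        simp
      funext x
      cases x with
      | inl i =>
        show M.mulVec _ (Sum.inl i) = 0
        simp only [Matrix.mulVec, dotProduct, Fintype.sum_sum_type, Sum.elim_inl, Sum.elim_inr]
        rw [← Finset.sum_mul, ← Finset.sum_mul, c1 i, c2 i]
        simp
      | inr j =>
        show M.mulVec _ (Sum.inr j) = 0
        simp only [Matrix.mulVec, dotProduct, Fintype.sum_sum_type, Sum.elim_inl, Sum.elim_inr]
        rw [← Finset.sum_mul, ← Finset.sum_mul, c3 j, c4 j]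
        simp
  refine ⟨hker, ?_⟩
  -- rank computation via rank-nullity
  set e1 : Fin (n+1) ⊕ Fin (m+1) → ℝ := Sum.elim (fun _ => (1:ℝ)) (fun _ => (0:ℝ)) with he1
  set e2 : Fin (n+1) ⊕ Fin (m+1) → ℝ := Sum.elim (fun _ => (0:ℝ)) (fun _ => (1:ℝ)) with he2
  have hkerspan : LinearMap.ker M.mulVecLin = Submodule.span ℝ {e1, e2} := by
    apply le_antisymm
    · intro u hu
      rw [LinearMap.mem_ker, Matrix.mulVecLin_apply] at hu
      obtain ⟨α, β, rfl⟩ := (hker u).mp hu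
      have : (Sum.elim (fun _ => α) (fun _ => β) : Fin (n+1) ⊕ Fin (m+1) → ℝ)
          = α • e1 + β • e2 := by
        funext x
        cases x <;> simp [he1, he2]
      rw [this]
      exact Submodule.add_mem _
        (Submodule.smul_mem _ _ (Submodule.subset_span (Set.mem_insert _ _)))
        (Submodule.smul_mem _ _ (Submodule.subset_span (Set.mem_insert_of_mem _ rfl)))
    · rw [Submodule.span_le]
      rintro v (rfl | rfl)
      · rw [SetLike.mem_coe, LinearMap.mem_ker, Matrix.mulVecLin_apply]
        exact (hker e1).mpr ⟨1, 0, rfl⟩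
      · rw [SetLike.mem_coe, LinearMap.mem_ker, Matrix.mulVecLin_apply]
        exact (hker e2).mpr ⟨0, 1, rfl⟩
  have hli : LinearIndependent ℝ ![e1, e2] := by
    rw [LinearIndependent.pair_iff]
    intro s t hst
    constructor
    · have := congrFun hst (Sum.inl 0)
      simpa [he1, he2] using this
    · have := congrFun hst (Sum.inr 0)
      simpa [he1, he2] using this
  have hfinker : Module.finrank ℝ (LinearMap.ker M.mulVecLin) = 2 := by
    rw [hkerspan]
    have hrange : Set.range ![e1, e2] = {e1, e2} := by
      ext v
      simp [Matrix.range_cons, Matrix.range_empty]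
      tauto
    rw [← hrange, finrank_span_eq_card hli]
    simp
  have hrn := LinearMap.finrank_range_add_finrank_ker M.mulVecLin
  rw [hfinker, Module.finrank_pi] at hrn
  simp only [Fintype.card_sum, Fintype.card_fin] at hrn
  have hrank : M.rank = Module.finrank ℝ (LinearMap.range M.mulVecLin) := rfl
  rw [hrank]
  omega
end

section
/- Assume ψ_{pw}(i,j) > 0 for all i, j. Let M̂ be the (n+m−2)×(n+m) matrix obtained from M by deleting its n-th row (the last p-row) and its (n+m)-th row (the last w-row). Then M̂ has full row rank n + m − 2, and moreover the two deleted rows are linear combinations of the remaining rows, so M̂ has the same row space as M. -/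
open Finset

lemma aux_const {A B : Type*} [Fintype A] [Fintype B] [DecidableEq A] [DecidableEq B]
    (r : A → B → ℝ) (P : A → ℝ) (W : B → ℝ) (u : A → ℝ) (v : B → ℝ)
    (hP : ∀ a, P a = ∑ b, r a b) (hW : ∀ b, W b = ∑ a, r a b)
    (htot : ∑ a, ∑ b, r a b = 1)
    (hpos : ∀ a b, 0 < r a b)
    (hz1 : ∀ a, (∑ i, u i * ((if i = a then P i else 0) - P i * P a))
        + (∑ j, v j * (r a j - P a * W j)) = 0)
    (hz2 : ∀ b, (∑ i, u i * (r i b - P i * W b))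
        + (∑ j, v j * ((if j = b then W j else 0) - W j * W b)) = 0) :
    ∀ a b, u a + v b = (∑ i, u i * P i) + (∑ j, v j * W j) := by
  set Sp := ∑ i, u i * P i with hSp
  set Sw := ∑ j, v j * W j with hSw
  set S := Sp + Sw with hS
  -- simplify hz1, hz2 inner sums
  have e1 : ∀ a, (∑ i, u i * ((if i = a then P i else 0) - P i * P a))
      = u a * P a - Sp * P a := by
    intro a
    simp only [mul_sub]
    rw [Finset.sum_sub_distrib]
    congr 1
    · simp [mul_ite, Finset.sum_ite_eq']
    · rw [hSp, Finset.sum_mul]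
      exact Finset.sum_congr rfl fun i _ => by ring
  have e2 : ∀ a, (∑ j, v j * (r a j - P a * W j))
      = (∑ j, v j * r a j) - Sw * P a := by
    intro a
    simp only [mul_sub]
    rw [Finset.sum_sub_distrib]
    congr 1
    rw [hSw, Finset.sum_mul]
    exact Finset.sum_congr rfl fun j _ => by ring
  have e3 : ∀ b, (∑ i, u i * (r i b - P i * W b))
      = (∑ i, u i * r i b) - Sp * W b := by
    intro b
    simp only [mul_sub]
    rw [Finset.sum_sub_distrib]
    congr 1
    rw [hSp, Finset.sum_mul]
    exact Finset.sum_congr rfl fun i _ => by ring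
  have e4 : ∀ b, (∑ j, v j * ((if j = b then W j else 0) - W j * W b))
      = v b * W b - Sw * W b := by
    intro b
    simp only [mul_sub]
    rw [Finset.sum_sub_distrib]
    congr 1
    · simp [mul_ite, Finset.sum_ite_eq']
    · rw [hSw, Finset.sum_mul]
      exact Finset.sum_congr rfl fun j _ => by ring
  have h1 : ∀ a, u a * P a + (∑ j, v j * r a j) = S * P a := by
    intro a
    have := hz1 a
    rw [e1 a, e2 a] at this
    rw [hS]; linarith
  have h2 : ∀ b, (∑ i, u i * r i b) + v b * W b = S * W b := by
    intro b
    have := hz2 b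
    rw [e3 b, e4 b] at this
    rw [hS]; linarith
  -- mean
  have hmean : ∑ a, ∑ b, r a b * (u a + v b) = S := by
    have : ∀ a, ∑ b, r a b * (u a + v b) = u a * P a + ∑ b, r a b * v b := by
      intro a
      rw [hP, Finset.mul_sum, ← Finset.sum_add_distrib]
      exact Finset.sum_congr rfl fun b _ => by ring
    rw [Finset.sum_congr rfl fun a _ => this a, Finset.sum_add_distrib, Finset.sum_comm]
    congr 1
    rw [hSw]
    refine Finset.sum_congr rfl fun b _ => ?_
    rw [hW, Finset.mul_sum]
    exact Finset.sum_congr rfl fun a _ => by ring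
  -- second moment
  set C := ∑ a, ∑ b, r a b * (u a * v b) with hC
  have hE2 : ∑ a, ∑ b, r a b * (u a + v b)^2
      = (∑ a, (u a)^2 * P a) + 2*C + (∑ b, (v b)^2 * W b) := by
    have step : ∀ a, ∑ b, r a b * (u a + v b)^2
        = (u a)^2 * P a + 2*(∑ b, r a b * (u a * v b)) + ∑ b, r a b * (v b)^2 := by
      intro a
      rw [hP, Finset.mul_sum, Finset.mul_sum, ← Finset.sum_add_distrib, ← Finset.sum_add_distrib]
      exact Finset.sum_congr rfl fun b _ => by ring
    rw [Finset.sum_congr rfl fun a _ => step a, Finset.sum_add_distrib, Finset.sum_add_distrib,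
      ← Finset.mul_sum]
    congr 1
    rw [Finset.sum_comm]
    refine Finset.sum_congr rfl fun b _ => ?_
    rw [hW, Finset.mul_sum]
    exact Finset.sum_congr rfl fun a _ => by ring
  have hE2S : ∑ a, ∑ b, r a b * (u a + v b)^2 = S * S := by
    have ha : ∑ a, (u a * P a + (∑ j, v j * r a j)) * u a = S * Sp := by
      rw [Finset.sum_congr rfl fun a _ => by rw [h1 a], hSp, Finset.mul_sum]
      exact Finset.sum_congr rfl fun a _ => by ring
    have hb : ∑ b, ((∑ i, u i * r i b) + v b * W b) * v b = S * Sw := by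
      rw [Finset.sum_congr rfl fun b _ => by rw [h2 b], hSw, Finset.mul_sum]
      exact Finset.sum_congr rfl fun b _ => by ring
    have expand : ∑ a, (u a * P a + (∑ j, v j * r a j)) * u a
        + ∑ b, ((∑ i, u i * r i b) + v b * W b) * v b
        = (∑ a, (u a)^2 * P a) + 2*C + (∑ b, (v b)^2 * W b) := by
      have l1 : ∀ a, (u a * P a + (∑ j, v j * r a j)) * u a
          = (u a)^2 * P a + ∑ j, r a j * (u a * v j) := by
        intro a
        rw [add_mul, Finset.sum_mul]
        congr 1
        · ring
        · exact Finset.sum_congr rfl fun j _ => by ring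
      have l2 : ∀ b, ((∑ i, u i * r i b) + v b * W b) * v b
          = (∑ i, r i b * (u i * v b)) + (v b)^2 * W b := by
        intro b
        rw [add_mul, Finset.sum_mul]
        congr 1
        · exact Finset.sum_congr rfl fun i _ => by ring
        · ring
      rw [Finset.sum_congr rfl fun a _ => l1 a, Finset.sum_congr rfl fun b _ => l2 b,
        Finset.sum_add_distrib, Finset.sum_add_distrib]
      have cross : ∑ b : B, ∑ i : A, r i b * (u i * v b)
          = ∑ a : A, ∑ b : B, r a b * (u a * v b) := Finset.sum_comm
      rw [cross, hC]
      ring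
    rw [hE2, ← expand, ha, hb]
    ring
  -- variance is zero
  have hvar : ∑ a, ∑ b, r a b * (u a + v b - S)^2 = 0 := by
    have expand : ∑ a, ∑ b, r a b * (u a + v b - S)^2
        = (∑ a, ∑ b, r a b * (u a + v b)^2) - 2*S*(∑ a, ∑ b, r a b * (u a + v b))
          + S^2 * (∑ a, ∑ b, r a b) := by
      rw [Finset.mul_sum, Finset.mul_sum, ← Finset.sum_sub_distrib, ← Finset.sum_add_distrib]
      refine Finset.sum_congr rfl fun a _ => ?_
      rw [Finset.mul_sum, Finset.mul_sum, ← Finset.sum_sub_distrib, ← Finset.sum_add_distrib]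
      exact Finset.sum_congr rfl fun b _ => by ring
    rw [expand, hE2S, hmean, htot]
    ring
  intro a b
  have hnn : ∀ a' ∈ Finset.univ (α := A), 0 ≤ ∑ b', r a' b' * (u a' + v b' - S)^2 := by
    intro a' _
    exact Finset.sum_nonneg fun b' _ => mul_nonneg (hpos a' b').le (sq_nonneg _)
  have h0 : ∑ b', r a b' * (u a + v b' - S)^2 = 0 :=
    (Finset.sum_eq_zero_iff_of_nonneg hnn).mp hvar a (Finset.mem_univ a)
  have hnn2 : ∀ b' ∈ Finset.univ (α := B), 0 ≤ r a b' * (u a + v b' - S)^2 :=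
    fun b' _ => mul_nonneg (hpos a b').le (sq_nonneg _)
  have h00 : r a b * (u a + v b - S)^2 = 0 :=
    (Finset.sum_eq_zero_iff_of_nonneg hnn2).mp h0 b (Finset.mem_univ b)
  have := (mul_eq_zero.mp h00).resolve_left (hpos a b).ne'
  have := pow_eq_zero_iff (n := 2) (by norm_num) |>.mp this
  linarith [this]
open Matrix

theorem stmt_8 (n m l : ℕ) (hl : 1 ≤ l)
    (p : Fin (n+1) → ℝ) (q : Fin l → ℝ) (w : Fin (m+1) → ℝ)
    (ψ : Fin (n+1) → Fin l → Fin (m+1) → ℝ)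
    (hψ0 : ∀ i k j, 0 ≤ ψ i k j)
    (hψ1 : ∑ i, ∑ k, ∑ j, ψ i k j = 1)
    (ψp : Fin (n+1) → ℝ) (hψp : ∀ i, ψp i = ∑ k, ∑ j, ψ i k j)
    (ψw : Fin (m+1) → ℝ) (hψw : ∀ j, ψw j = ∑ i, ∑ k, ψ i k j)
    (ψpw : Matrix (Fin (n+1)) (Fin (m+1)) ℝ) (hψpw : ∀ i j, ψpw i j = ∑ k, ψ i k j)
    (M : Matrix (Fin (n+1) ⊕ Fin (m+1)) (Fin (n+1) ⊕ Fin (m+1)) ℝ)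
    (hMpp : ∀ i i', M (Sum.inl i) (Sum.inl i') = (if i = i' then ψp i else 0) - ψp i * ψp i')
    (hMww : ∀ j j', M (Sum.inr j) (Sum.inr j') = (if j = j' then ψw j else 0) - ψw j * ψw j')
    (hMpw : ∀ i j, M (Sum.inl i) (Sum.inr j) = ψpw i j - ψp i * ψw j)
    (hMwp : ∀ i j, M (Sum.inr j) (Sum.inl i) = ψpw i j - ψp i * ψw j)
    (Mhat : Matrix (Fin n ⊕ Fin m) (Fin (n+1) ⊕ Fin (m+1)) ℝ)
    (hMhatp : ∀ (i : Fin n) t, Mhat (Sum.inl i) t = M (Sum.inl i.castSucc) t)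
    (hMhatw : ∀ (j : Fin m) t, Mhat (Sum.inr j) t = M (Sum.inr j.castSucc) t)
    (hpos : ∀ i j, 0 < ψpw i j) :
    Mhat.rank = n + m ∧
    (fun t => M (Sum.inl (Fin.last n)) t) ∈
      Submodule.span ℝ (Set.range fun s => fun t => Mhat s t) ∧
    (fun t => M (Sum.inr (Fin.last m)) t) ∈
      Submodule.span ℝ (Set.range fun s => fun t => Mhat s t) ∧
    Submodule.span ℝ (Set.range fun s => fun t => M s t)
      = Submodule.span ℝ (Set.range fun s => fun t => Mhat s t) := by
  classical
  -- marginal identities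
  have hψp' : ∀ i, ψp i = ∑ j, ψpw i j := by
    intro i
    rw [hψp, Finset.sum_comm]
    exact Finset.sum_congr rfl fun j _ => (hψpw i j).symm
  have hψw' : ∀ j, ψw j = ∑ i, ψpw i j := by
    intro j
    rw [hψw]
    exact Finset.sum_congr rfl fun i _ => (hψpw i j).symm
  have htot : ∑ i, ∑ j, ψpw i j = 1 := by
    rw [← hψ1]
    exact Finset.sum_congr rfl fun i _ => by
      rw [Finset.sum_comm]
      exact Finset.sum_congr rfl fun j _ => hψpw i j
  have hsum1p : ∑ i, ψp i = 1 := by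
    rw [Finset.sum_congr rfl fun i _ => hψp' i, htot]
  have hsum1w : ∑ j, ψw j = 1 := by
    rw [Finset.sum_congr rfl fun j _ => hψw' j, Finset.sum_comm, htot]
  -- rows sum to zero in each block
  have hrowp : ∀ t, ∑ i, M (Sum.inl i) t = 0 := by
    intro t
    cases t with
    | inl i' =>
      simp only [hMpp]
      rw [Finset.sum_sub_distrib]
      rw [Finset.sum_ite_eq' Finset.univ i' ψp]
      rw [← Finset.sum_mul, hsum1p]
      simp
    | inr j =>
      simp only [hMpw]
      rw [Finset.sum_sub_distrib, ← Finset.sum_mul, hsum1p, ← hψw' j]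
      simp
  have hroww : ∀ t, ∑ j, M (Sum.inr j) t = 0 := by
    intro t
    cases t with
    | inl i =>
      simp only [hMwp]
      rw [Finset.sum_sub_distrib, ← Finset.mul_sum, hsum1w, ← hψp' i]
      simp
    | inr j' =>
      simp only [hMww]
      rw [Finset.sum_sub_distrib]
      rw [Finset.sum_ite_eq' Finset.univ j' ψw]
      rw [← Finset.sum_mul, hsum1w]
      simp
  -- the two deleted rows are in the span of the kept rows
  have hlastp : (fun t => M (Sum.inl (Fin.last n)) t)
      = ∑ i : Fin n, (-1 : ℝ) • (fun t => Mhat (Sum.inl i) t) := by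
    funext t
    have h := hrowp t
    rw [Fin.sum_univ_castSucc] at h
    simp only [Finset.sum_apply, Pi.smul_apply, smul_eq_mul, neg_one_mul, hMhatp]
    rw [Finset.sum_neg_distrib]
    linarith
  have hlastw : (fun t => M (Sum.inr (Fin.last m)) t)
      = ∑ j : Fin m, (-1 : ℝ) • (fun t => Mhat (Sum.inr j) t) := by
    funext t
    have h := hroww t
    rw [Fin.sum_univ_castSucc] at h
    simp only [Finset.sum_apply, Pi.smul_apply, smul_eq_mul, neg_one_mul, hMhatw]
    rw [Finset.sum_neg_distrib]
    linarith
  have memp : (fun t => M (Sum.inl (Fin.last n)) t) ∈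
      Submodule.span ℝ (Set.range fun s => fun t => Mhat s t) := by
    rw [hlastp]
    exact Submodule.sum_mem _ fun i _ =>
      Submodule.smul_mem _ _ (Submodule.subset_span ⟨Sum.inl i, rfl⟩)
  have memw : (fun t => M (Sum.inr (Fin.last m)) t) ∈
      Submodule.span ℝ (Set.range fun s => fun t => Mhat s t) := by
    rw [hlastw]
    exact Submodule.sum_mem _ fun j _ =>
      Submodule.smul_mem _ _ (Submodule.subset_span ⟨Sum.inr j, rfl⟩)
  -- linear independence of the kept rows
  have hLI : LinearIndependent ℝ Mhat := by
    refine Fintype.linearIndependent_iff.mpr ?_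
    intro c hc
    set u : Fin (n+1) → ℝ := fun a => if h : (a : ℕ) < n then c (Sum.inl ⟨a, h⟩) else 0 with hu_def
    set v : Fin (m+1) → ℝ := fun b => if h : (b : ℕ) < m then c (Sum.inr ⟨b, h⟩) else 0 with hv_def
    have hu : ∀ i : Fin n, u i.castSucc = c (Sum.inl i) := by
      intro i
      rw [hu_def]
      simp only [Fin.coe_castSucc]
      rw [dif_pos i.isLt]
    have hv : ∀ j : Fin m, v j.castSucc = c (Sum.inr j) := by
      intro j
      rw [hv_def]
      simp only [Fin.coe_castSucc]
      rw [dif_pos j.isLt]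
    have hu0 : u (Fin.last n) = 0 := by
      rw [hu_def]
      simp
    have hv0 : v (Fin.last m) = 0 := by
      rw [hv_def]
      simp
    have hzero : ∀ t, (∑ a, u a * M (Sum.inl a) t) + (∑ b, v b * M (Sum.inr b) t) = 0 := by
      intro t
      have h := congrFun hc t
      rw [Finset.sum_apply] at h
      simp only [Pi.smul_apply, smul_eq_mul, Pi.zero_apply] at h
      rw [Fintype.sum_sum_type] at h
      rw [Fin.sum_univ_castSucc, Fin.sum_univ_castSucc, hu0, hv0]
      simp only [zero_mul, add_zero]
      rw [← h]
      congr 1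
      · exact Finset.sum_congr rfl fun i _ => by rw [hu i, hMhatp]
      · exact Finset.sum_congr rfl fun j _ => by rw [hv j, hMhatw]
    have hz1 : ∀ a, (∑ i, u i * ((if i = a then ψp i else 0) - ψp i * ψp a))
        + (∑ j, v j * (ψpw a j - ψp a * ψw j)) = 0 := by
      intro a
      have h := hzero (Sum.inl a)
      simp only [hMpp, hMwp] at h
      exact h
    have hz2 : ∀ b, (∑ i, u i * (ψpw i b - ψp i * ψw b))
        + (∑ j, v j * ((if j = b then ψw j else 0) - ψw j * ψw b)) = 0 := by
      intro b
      have h := hzero (Sum.inr b)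
      simp only [hMpw, hMww] at h
      exact h
    have hconst := aux_const ψpw ψp ψw u v hψp' hψw' htot hpos hz1 hz2
    have hS0 : (∑ i, u i * ψp i) + (∑ j, v j * ψw j) = 0 := by
      have h := hconst (Fin.last n) (Fin.last m)
      rw [hu0, hv0] at h
      linarith
    have hua : ∀ a, u a = 0 := by
      intro a
      have h := hconst a (Fin.last m)
      rw [hv0, hS0] at h
      linarith
    have hvb : ∀ b, v b = 0 := by
      intro b
      have h := hconst (Fin.last n) b
      rw [hu0, hS0] at h
      linarith
    intro s
    cases s with
    | inl i => rw [← hu i]; exact hua _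
    | inr j => rw [← hv j]; exact hvb _
  refine ⟨?_, memp, memw, ?_⟩
  · rw [hLI.rank_matrix]
    simp
  · apply le_antisymm
    · rw [Submodule.span_le]
      rintro _ ⟨s, rfl⟩
      cases s with
      | inl i =>
        induction i using Fin.lastCases with
        | last => exact memp
        | cast i =>
          have : (fun t => M (Sum.inl i.castSucc) t) = fun t => Mhat (Sum.inl i) t := by
            funext t; exact (hMhatp i t).symm
          show (fun t => M (Sum.inl i.castSucc) t) ∈ _
          rw [this]
          exact Submodule.subset_span ⟨Sum.inl i, rfl⟩
      | inr j =>
        induction j using Fin.lastCases with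
        | last => exact memw
        | cast j =>
          have : (fun t => M (Sum.inr j.castSucc) t) = fun t => Mhat (Sum.inr j) t := by
            funext t; exact (hMhatw j t).symm
          show (fun t => M (Sum.inr j.castSucc) t) ∈ _
          rw [this]
          exact Submodule.subset_span ⟨Sum.inr j, rfl⟩
    · rw [Submodule.span_le]
      rintro _ ⟨s, rfl⟩
      cases s with
      | inl i =>
        have : (fun t => Mhat (Sum.inl i) t) = fun t => M (Sum.inl i.castSucc) t := by
          funext t; exact hMhatp i t
        show (fun t => Mhat (Sum.inl i) t) ∈ _
        rw [this]
        exact Submodule.subset_span ⟨Sum.inl i.castSucc, rfl⟩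
      | inr j =>
        have : (fun t => Mhat (Sum.inr j) t) = fun t => M (Sum.inr j.castSucc) t := by
          funext t; exact hMhatw j t
        show (fun t => Mhat (Sum.inr j) t) ∈ _
        rw [this]
        exact Submodule.subset_span ⟨Sum.inr j.castSucc, rfl⟩
end

section
/- Let a > 0. A pair (x_P, x_W) ∈ ℝ^n × ℝ^m with x = (x_P, x_W) is an optimal solution of the hedging problem — i.e. it satisfies φ_p^T x_P = 0 and φ_w^T x_W = 0 and maximizes F_a(x_P,x_W) = E^ψ[Y] − a Var^ψ[Y] over all pairs satisfying those two constraints — if and only if there exist λ_p, λ_w ∈ ℝ such that 2a M x + B (λ_p, λ_w)^T = 2a c + d and B^T x = 0. -/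
open Finset Matrix

private lemma aux_sum_sq_zero {n : ℕ} (z : Fin n → ℝ) (h : ∑ i, z i * z i = 0) : ∀ i, z i = 0 := by
  intro i
  have h0 : ∀ j ∈ Finset.univ, 0 ≤ z j * z j := fun j _ => mul_self_nonneg _
  exact mul_self_eq_zero.1 ((Finset.sum_eq_zero_iff_of_nonneg h0).1 h i (Finset.mem_univ i))

private lemma aux_orth {n : ℕ} (φ g : Fin n → ℝ) (hφ : ∃ i, φ i ≠ 0)
    (h : ∀ z : Fin n → ℝ, (∑ i, φ i * z i) = 0 → (∑ i, g i * z i) = 0) :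
    ∃ lam : ℝ, ∀ i, g i = lam * φ i := by
  obtain ⟨i0, hi0⟩ := hφ
  have hφφ : 0 < ∑ i, φ i * φ i :=
    Finset.sum_pos' (fun i _ => mul_self_nonneg _) ⟨i0, Finset.mem_univ _, mul_self_pos.2 hi0⟩
  set lam := (∑ i, g i * φ i) / (∑ i, φ i * φ i) with hlam
  set z : Fin n → ℝ := fun i => g i - lam * φ i with hzdef
  have hφz : ∑ i, φ i * z i = 0 := by
    have e : ∑ i, φ i * z i = (∑ i, g i * φ i) - lam * (∑ i, φ i * φ i) := by
      rw [Finset.mul_sum, ← Finset.sum_sub_distrib]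
      exact Finset.sum_congr rfl fun i _ => by simp only [hzdef]; ring
    rw [e, hlam]
    rw [div_mul_cancel₀ _ hφφ.ne']; ring
  have hgz := h z hφz
  have hzz : ∑ i, z i * z i = 0 := by
    have e : ∑ i, z i * z i = (∑ i, g i * z i) - lam * (∑ i, φ i * z i) := by
      rw [Finset.mul_sum, ← Finset.sum_sub_distrib]
      exact Finset.sum_congr rfl fun i _ => by simp only [hzdef]; ring
    rw [e, hgz, hφz]; ring
  refine ⟨lam, fun i => ?_⟩
  have := aux_sum_sq_zero z hzz i
  simp only [hzdef] at this
  linarith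

private lemma aux_scalar (a c Q : ℝ) (ha : 0 < a) (hQ : 0 ≤ Q)
    (h : ∀ t : ℝ, t * c - a * (t ^ 2 * Q) ≤ 0) : c = 0 := by
  have hpos : 0 < 2 * a * Q + 1 := by positivity
  have h1 := h (c / (2 * a * Q + 1))
  have e : c / (2 * a * Q + 1) * c - a * ((c / (2 * a * Q + 1)) ^ 2 * Q)
      = c ^ 2 * (a * Q + 1) / (2 * a * Q + 1) ^ 2 := by
    field_simp
    ring
  rw [e] at h1
  have hD : (0:ℝ) < (2 * a * Q + 1) ^ 2 := by positivity
  have h2 : c ^ 2 * (a * Q + 1) ≤ 0 := by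
    have := mul_le_mul_of_nonneg_right h1 hD.le
    rw [div_mul_cancel₀] at this
    · simpa using this
    · positivity
  have h3 : c ^ 2 = 0 := le_antisymm (by nlinarith [mul_nonneg ha.le hQ]) (sq_nonneg c)
  exact pow_eq_zero_iff (by norm_num) |>.1 h3
theorem stmt_10 (n m l : ℕ) (hn : 1 ≤ n) (hm : 1 ≤ m) (hl : 1 ≤ l)
    (p : Fin n → ℝ) (q : Fin l → ℝ) (w : Fin m → ℝ)
    (ψ : Fin n → Fin l → Fin m → ℝ)
    (hψ0 : ∀ i k j, 0 ≤ ψ i k j)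
    (hψ1 : ∑ i, ∑ k, ∑ j, ψ i k j = 1)
    (ψp : Fin n → ℝ) (hψp : ∀ i, ψp i = ∑ k, ∑ j, ψ i k j)
    (ψw : Fin m → ℝ) (hψw : ∀ j, ψw j = ∑ i, ∑ k, ψ i k j)
    (ψpw : Matrix (Fin n) (Fin m) ℝ) (hψpw : ∀ i j, ψpw i j = ∑ k, ψ i k j)
    (r : ℝ) (y : Fin n → Fin l → ℝ) (hy : ∀ i k, y i k = (r - p i) * q k)
    (μy : ℝ) (hμy : μy = ∑ i, ∑ k, ∑ j, ψ i k j * y i k)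
    (vp : Fin n → ℝ) (hvp : ∀ i, vp i = ∑ k, ∑ j, ψ i k j * y i k)
    (vw : Fin m → ℝ) (hvw : ∀ j, vw j = ∑ i, ∑ k, ψ i k j * y i k)
    (cp : Fin n → ℝ) (hcp : ∀ i, cp i = μy * ψp i - vp i)
    (cw : Fin m → ℝ) (hcw : ∀ j, cw j = μy * ψw j - vw j)
    (M : Matrix (Fin n ⊕ Fin m) (Fin n ⊕ Fin m) ℝ)
    (hMpp : ∀ i i', M (Sum.inl i) (Sum.inl i') = (if i = i' then ψp i else 0) - ψp i * ψp i')
    (hMww : ∀ j j', M (Sum.inr j) (Sum.inr j') = (if j = j' then ψw j else 0) - ψw j * ψw j')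
    (hMpw : ∀ i j, M (Sum.inl i) (Sum.inr j) = ψpw i j - ψp i * ψw j)
    (hMwp : ∀ i j, M (Sum.inr j) (Sum.inl i) = ψpw i j - ψp i * ψw j)
    (φ : Fin n → Fin m → ℝ)
    (hφ0 : ∀ i j, 0 ≤ φ i j) (hφ1 : ∑ i, ∑ j, φ i j = 1)
    (φp : Fin n → ℝ) (hφp : ∀ i, φp i = ∑ j, φ i j)
    (φw : Fin m → ℝ) (hφw : ∀ j, φw j = ∑ i, φ i j)
    (B : Matrix (Fin n ⊕ Fin m) (Fin 2) ℝ)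
    (hBp0 : ∀ i, B (Sum.inl i) 0 = φp i) (hBp1 : ∀ i, B (Sum.inl i) 1 = 0)
    (hBw0 : ∀ j, B (Sum.inr j) 0 = 0) (hBw1 : ∀ j, B (Sum.inr j) 1 = φw j)
    (a : ℝ) (ha : 0 < a)
    (F : (Fin n → ℝ) → (Fin m → ℝ) → ℝ)
    (hF : ∀ (xP : Fin n → ℝ) (xW : Fin m → ℝ), F xP xW =
      (∑ i, ∑ k, ∑ j, ψ i k j * (y i k + xP i + xW j)) -
      a * (∑ i, ∑ k, ∑ j, ψ i k j *
        (y i k + xP i + xW j - ∑ i', ∑ k', ∑ j', ψ i' k' j' * (y i' k' + xP i' + xW j'))^2))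
    (xP : Fin n → ℝ) (xW : Fin m → ℝ) :
    ((∑ i, φp i * xP i) = 0 ∧ (∑ j, φw j * xW j) = 0 ∧
      ∀ (xP' : Fin n → ℝ) (xW' : Fin m → ℝ),
        (∑ i, φp i * xP' i) = 0 → (∑ j, φw j * xW' j) = 0 → F xP' xW' ≤ F xP xW)
    ↔ ∃ lp lw : ℝ,
        (2*a) • M.mulVec (Sum.elim xP xW) + B.mulVec ![lp, lw]
          = (2*a) • Sum.elim cp cw + Sum.elim ψp ψw ∧
        B.transpose.mulVec (Sum.elim xP xW) = 0 := by
  classical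
  -- ### sum plumbing
  have swap3 : ∀ f : Fin n → Fin l → Fin m → ℝ,
      (∑ i, ∑ k, ∑ j, f i k j) = ∑ j, ∑ i, ∑ k, f i k j := by
    intro f
    calc (∑ i, ∑ k, ∑ j, f i k j) = ∑ i, ∑ j, ∑ k, f i k j :=
          Finset.sum_congr rfl fun i _ => Finset.sum_comm
      _ = ∑ j, ∑ i, ∑ k, f i k j := Finset.sum_comm
  have margI : ∀ (f : Fin n → Fin l → Fin m → ℝ) (u : Fin n → ℝ),
      (∑ i, ∑ k, ∑ j, f i k j * u i) = ∑ i, (∑ k, ∑ j, f i k j) * u i := by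
    intro f u
    refine Finset.sum_congr rfl fun i _ => ?_
    rw [Finset.sum_mul]
    exact Finset.sum_congr rfl fun k _ => (Finset.sum_mul _ _ _).symm
  have margJ : ∀ (f : Fin n → Fin l → Fin m → ℝ) (v : Fin m → ℝ),
      (∑ i, ∑ k, ∑ j, f i k j * v j) = ∑ j, (∑ i, ∑ k, f i k j) * v j := by
    intro f v
    rw [swap3 (fun i k j => f i k j * v j)]
    refine Finset.sum_congr rfl fun j _ => ?_
    rw [Finset.sum_mul]
    exact Finset.sum_congr rfl fun i _ => (Finset.sum_mul _ _ _).symm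
  have margIJ : ∀ (f : Fin n → Fin l → Fin m → ℝ) (u : Fin n → ℝ) (v : Fin m → ℝ),
      (∑ i, ∑ k, ∑ j, f i k j * (u i * v j)) = ∑ i, ∑ j, (∑ k, f i k j) * (u i * v j) := by
    intro f u v
    refine Finset.sum_congr rfl fun i _ => ?_
    rw [Finset.sum_comm]
    exact Finset.sum_congr rfl fun j _ => (Finset.sum_mul _ _ _).symm
  have sP : ∀ u : Fin n → ℝ, (∑ i, ∑ k, ∑ j, ψ i k j * u i) = ∑ i, ψp i * u i := fun u => by
    rw [margI]; exact Finset.sum_congr rfl fun i _ => by rw [hψp]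
  have sW : ∀ v : Fin m → ℝ, (∑ i, ∑ k, ∑ j, ψ i k j * v j) = ∑ j, ψw j * v j := fun v => by
    rw [margJ]; exact Finset.sum_congr rfl fun j _ => by rw [hψw]
  have sPW : ∀ (u : Fin n → ℝ) (v : Fin m → ℝ),
      (∑ i, ∑ k, ∑ j, ψ i k j * (u i * v j)) = ∑ i, ∑ j, ψpw i j * (u i * v j) := fun u v => by
    rw [margIJ]
    exact Finset.sum_congr rfl fun i _ => Finset.sum_congr rfl fun j _ => by rw [hψpw]
  have sYP : ∀ u : Fin n → ℝ, (∑ i, ∑ k, ∑ j, ψ i k j * y i k * u i) = ∑ i, vp i * u i := by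
    intro u
    rw [margI (fun i k j => ψ i k j * y i k)]
    exact Finset.sum_congr rfl fun i _ => by rw [hvp]
  have sYW : ∀ v : Fin m → ℝ, (∑ i, ∑ k, ∑ j, ψ i k j * y i k * v j) = ∑ j, vw j * v j := by
    intro v
    rw [margJ (fun i k j => ψ i k j * y i k)]
    exact Finset.sum_congr rfl fun j _ => by rw [hvw]
  -- ### mean and second moment
  have hE : ∀ (u : Fin n → ℝ) (v : Fin m → ℝ),
      (∑ i, ∑ k, ∑ j, ψ i k j * (y i k + u i + v j))
        = μy + (∑ i, ψp i * u i) + (∑ j, ψw j * v j) := by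
    intro u v
    calc (∑ i, ∑ k, ∑ j, ψ i k j * (y i k + u i + v j))
        = ∑ i, ∑ k, ∑ j, (ψ i k j * y i k + ψ i k j * u i + ψ i k j * v j) :=
          Finset.sum_congr rfl fun i _ => Finset.sum_congr rfl fun k _ =>
            Finset.sum_congr rfl fun j _ => by ring
      _ = (∑ i, ∑ k, ∑ j, ψ i k j * y i k) + (∑ i, ∑ k, ∑ j, ψ i k j * u i)
            + (∑ i, ∑ k, ∑ j, ψ i k j * v j) := by
          simp only [Finset.sum_add_distrib]
      _ = μy + (∑ i, ψp i * u i) + (∑ j, ψw j * v j) := by rw [← hμy, sP, sW]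
  have hS2 : ∀ (u : Fin n → ℝ) (v : Fin m → ℝ),
      (∑ i, ∑ k, ∑ j, ψ i k j * (y i k + u i + v j) ^ 2)
        = (∑ i, ∑ k, ∑ j, ψ i k j * y i k ^ 2) + (∑ i, ψp i * u i ^ 2) + (∑ j, ψw j * v j ^ 2)
          + 2 * (∑ i, vp i * u i) + 2 * (∑ j, vw j * v j)
          + 2 * (∑ i, ∑ j, ψpw i j * (u i * v j)) := by
    intro u v
    calc (∑ i, ∑ k, ∑ j, ψ i k j * (y i k + u i + v j) ^ 2)
        = ∑ i, ∑ k, ∑ j, (ψ i k j * y i k ^ 2 + ψ i k j * u i ^ 2 + ψ i k j * v j ^ 2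
            + 2 * (ψ i k j * y i k * u i) + 2 * (ψ i k j * y i k * v j)
            + 2 * (ψ i k j * (u i * v j))) :=
          Finset.sum_congr rfl fun i _ => Finset.sum_congr rfl fun k _ =>
            Finset.sum_congr rfl fun j _ => by ring
      _ = (∑ i, ∑ k, ∑ j, ψ i k j * y i k ^ 2) + (∑ i, ∑ k, ∑ j, ψ i k j * u i ^ 2)
            + (∑ i, ∑ k, ∑ j, ψ i k j * v j ^ 2)
            + 2 * (∑ i, ∑ k, ∑ j, ψ i k j * y i k * u i)
            + 2 * (∑ i, ∑ k, ∑ j, ψ i k j * y i k * v j)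
            + 2 * (∑ i, ∑ k, ∑ j, ψ i k j * (u i * v j)) := by
          simp only [Finset.sum_add_distrib, ← Finset.mul_sum]
      _ = _ := by rw [sP (fun i => u i ^ 2), sW (fun j => v j ^ 2), sYP, sYW, sPW]
  have hVar : ∀ (u : Fin n → ℝ) (v : Fin m → ℝ),
      (∑ i, ∑ k, ∑ j, ψ i k j *
          (y i k + u i + v j - ∑ i', ∑ k', ∑ j', ψ i' k' j' * (y i' k' + u i' + v j')) ^ 2)
        = (∑ i, ∑ k, ∑ j, ψ i k j * (y i k + u i + v j) ^ 2)
          - (μy + (∑ i, ψp i * u i) + (∑ j, ψw j * v j)) ^ 2 := by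
    intro u v
    have hEe := hE u v
    set E := μy + (∑ i, ψp i * u i) + (∑ j, ψw j * v j) with hEdef
    simp only [hEe]
    calc (∑ i, ∑ k, ∑ j, ψ i k j * (y i k + u i + v j - E) ^ 2)
        = ∑ i, ∑ k, ∑ j, (ψ i k j * (y i k + u i + v j) ^ 2
            - (2 * E) * (ψ i k j * (y i k + u i + v j)) + E ^ 2 * ψ i k j) :=
          Finset.sum_congr rfl fun i _ => Finset.sum_congr rfl fun k _ =>
            Finset.sum_congr rfl fun j _ => by ring
      _ = (∑ i, ∑ k, ∑ j, ψ i k j * (y i k + u i + v j) ^ 2)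
            - (2 * E) * (∑ i, ∑ k, ∑ j, ψ i k j * (y i k + u i + v j))
            + E ^ 2 * (∑ i, ∑ k, ∑ j, ψ i k j) := by
          simp only [Finset.sum_add_distrib, Finset.sum_sub_distrib, ← Finset.mul_sum]
      _ = _ := by rw [hEe, hψ1]; ring
  -- ### quadratic-form objects
  set Q : (Fin n → ℝ) → (Fin m → ℝ) → ℝ := fun u v =>
    (∑ i, ψp i * u i ^ 2) + 2 * (∑ i, ∑ j, ψpw i j * (u i * v j)) + (∑ j, ψw j * v j ^ 2)
      - ((∑ i, ψp i * u i) + (∑ j, ψw j * v j)) ^ 2 with hQdef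
  set Gp : Fin n → ℝ := fun i => ψp i * xP i
      - ψp i * ((∑ i', ψp i' * xP i') + ∑ j, ψw j * xW j) + ∑ j, ψpw i j * xW j with hGpdef
  set Gw : Fin m → ℝ := fun j => (∑ i, ψpw i j * xP i) + ψw j * xW j
      - ψw j * ((∑ i, ψp i * xP i) + ∑ j', ψw j' * xW j') with hGwdef
  set gP : Fin n → ℝ := fun i => ψp i + 2 * a * cp i - 2 * a * Gp i with hgPdef
  set gW : Fin m → ℝ := fun j => ψw j + 2 * a * cw j - 2 * a * Gw j with hgWdef
  -- ### expansion of F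
  have e1cp : ∀ u : Fin n → ℝ, (∑ i, (ψp i + 2 * a * cp i) * u i)
      = (∑ i, ψp i * u i) + 2 * a * μy * (∑ i, ψp i * u i) - 2 * a * (∑ i, vp i * u i) := by
    intro u
    calc (∑ i, (ψp i + 2 * a * cp i) * u i)
        = ∑ i, (ψp i * u i + (2 * a * μy) * (ψp i * u i) - (2 * a) * (vp i * u i)) :=
          Finset.sum_congr rfl fun i _ => by rw [hcp i]; ring
      _ = _ := by
          simp only [Finset.sum_add_distrib, Finset.sum_sub_distrib, ← Finset.mul_sum]
  have e1cw : ∀ v : Fin m → ℝ, (∑ j, (ψw j + 2 * a * cw j) * v j)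
      = (∑ j, ψw j * v j) + 2 * a * μy * (∑ j, ψw j * v j) - 2 * a * (∑ j, vw j * v j) := by
    intro v
    calc (∑ j, (ψw j + 2 * a * cw j) * v j)
        = ∑ j, (ψw j * v j + (2 * a * μy) * (ψw j * v j) - (2 * a) * (vw j * v j)) :=
          Finset.sum_congr rfl fun j _ => by rw [hcw j]; ring
      _ = _ := by
          simp only [Finset.sum_add_distrib, Finset.sum_sub_distrib, ← Finset.mul_sum]
  have hFexp : ∀ (u : Fin n → ℝ) (v : Fin m → ℝ), F u v
      = (μy - a * ((∑ i, ∑ k, ∑ j, ψ i k j * y i k ^ 2) - μy ^ 2))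
        + ((∑ i, (ψp i + 2 * a * cp i) * u i) + (∑ j, (ψw j + 2 * a * cw j) * v j))
        - a * Q u v := by
    intro u v
    rw [hF u v, hVar u v, hS2 u v, hE u v, e1cp u, e1cw v]
    simp only [hQdef]
    ring
  -- ### bilinear expansion of Q around (xP, xW)
  have hQbil : ∀ (dP : Fin n → ℝ) (dW : Fin m → ℝ),
      Q (fun i => xP i + dP i) (fun j => xW j + dW j)
        = Q xP xW + 2 * ((∑ i, Gp i * dP i) + (∑ j, Gw j * dW j)) + Q dP dW := by
    intro dP dW
    have c1 : ∑ i, ψp i * (xP i + dP i) ^ 2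
        = (∑ i, ψp i * xP i ^ 2) + 2 * (∑ i, ψp i * (xP i * dP i)) + ∑ i, ψp i * dP i ^ 2 := by
      calc ∑ i, ψp i * (xP i + dP i) ^ 2
          = ∑ i, (ψp i * xP i ^ 2 + 2 * (ψp i * (xP i * dP i)) + ψp i * dP i ^ 2) :=
            Finset.sum_congr rfl fun i _ => by ring
        _ = _ := by simp only [Finset.sum_add_distrib, ← Finset.mul_sum]
    have c3 : ∑ j, ψw j * (xW j + dW j) ^ 2
        = (∑ j, ψw j * xW j ^ 2) + 2 * (∑ j, ψw j * (xW j * dW j)) + ∑ j, ψw j * dW j ^ 2 := by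
      calc ∑ j, ψw j * (xW j + dW j) ^ 2
          = ∑ j, (ψw j * xW j ^ 2 + 2 * (ψw j * (xW j * dW j)) + ψw j * dW j ^ 2) :=
            Finset.sum_congr rfl fun j _ => by ring
        _ = _ := by simp only [Finset.sum_add_distrib, ← Finset.mul_sum]
    have c2 : (∑ i, ∑ j, ψpw i j * ((xP i + dP i) * (xW j + dW j)))
        = (∑ i, ∑ j, ψpw i j * (xP i * xW j)) + (∑ i, ∑ j, ψpw i j * (xP i * dW j))
          + (∑ i, ∑ j, ψpw i j * (dP i * xW j)) + (∑ i, ∑ j, ψpw i j * (dP i * dW j)) := by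
      calc (∑ i, ∑ j, ψpw i j * ((xP i + dP i) * (xW j + dW j)))
          = ∑ i, ∑ j, (ψpw i j * (xP i * xW j) + ψpw i j * (xP i * dW j)
              + ψpw i j * (dP i * xW j) + ψpw i j * (dP i * dW j)) :=
            Finset.sum_congr rfl fun i _ => Finset.sum_congr rfl fun j _ => by ring
        _ = _ := by simp only [Finset.sum_add_distrib]
    have c4 : (∑ i, ψp i * (xP i + dP i)) = (∑ i, ψp i * xP i) + ∑ i, ψp i * dP i := by
      rw [← Finset.sum_add_distrib]; exact Finset.sum_congr rfl fun i _ => by ring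
    have c5 : (∑ j, ψw j * (xW j + dW j)) = (∑ j, ψw j * xW j) + ∑ j, ψw j * dW j := by
      rw [← Finset.sum_add_distrib]; exact Finset.sum_congr rfl fun j _ => by ring
    have g1 : (∑ i, Gp i * dP i)
        = (∑ i, ψp i * (xP i * dP i))
          - ((∑ i, ψp i * xP i) + ∑ j, ψw j * xW j) * (∑ i, ψp i * dP i)
          + ∑ i, ∑ j, ψpw i j * (dP i * xW j) := by
      calc (∑ i, Gp i * dP i)
          = ∑ i, (ψp i * (xP i * dP i)
              - ((∑ i', ψp i' * xP i') + ∑ j, ψw j * xW j) * (ψp i * dP i)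
              + ∑ j, ψpw i j * (dP i * xW j)) := by
            refine Finset.sum_congr rfl fun i _ => ?_
            simp only [hGpdef]
            rw [add_mul, sub_mul, Finset.sum_mul]
            have e : (∑ j, ψpw i j * xW j * dP i) = ∑ j, ψpw i j * (dP i * xW j) :=
              Finset.sum_congr rfl fun j _ => by ring
            rw [e]; ring
        _ = _ := by simp only [Finset.sum_add_distrib, Finset.sum_sub_distrib, ← Finset.mul_sum]
    have g2 : (∑ j, Gw j * dW j)
        = (∑ i, ∑ j, ψpw i j * (xP i * dW j))
          + (∑ j, ψw j * (xW j * dW j))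
          - ((∑ i, ψp i * xP i) + ∑ j, ψw j * xW j) * (∑ j, ψw j * dW j) := by
      calc (∑ j, Gw j * dW j)
          = ∑ j, ((∑ i, ψpw i j * (xP i * dW j))
              + ψw j * (xW j * dW j)
              - ((∑ i, ψp i * xP i) + ∑ j', ψw j' * xW j') * (ψw j * dW j)) := by
            refine Finset.sum_congr rfl fun j _ => ?_
            simp only [hGwdef]
            rw [sub_mul, add_mul, Finset.sum_mul]
            have e : (∑ i, ψpw i j * xP i * dW j) = ∑ i, ψpw i j * (xP i * dW j) :=
              Finset.sum_congr rfl fun i _ => by ring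
            rw [e]; ring
        _ = (∑ j, ∑ i, ψpw i j * (xP i * dW j)) + (∑ j, ψw j * (xW j * dW j))
              - ((∑ i, ψp i * xP i) + ∑ j', ψw j' * xW j') * (∑ j, ψw j * dW j) := by
            simp only [Finset.sum_add_distrib, Finset.sum_sub_distrib, ← Finset.mul_sum]
        _ = _ := by rw [Finset.sum_comm]
    simp only [hQdef]
    rw [c1, c2, c3, c4, c5, g1, g2]
    ring
  -- ### Q is nonnegative
  have hQnn : ∀ (dP : Fin n → ℝ) (dW : Fin m → ℝ), 0 ≤ Q dP dW := by
    intro dP dW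
    have expand : (∑ i, ∑ k, ∑ j,
        ψ i k j * (dP i + dW j - ((∑ i', ψp i' * dP i') + ∑ j', ψw j' * dW j')) ^ 2)
      = (∑ i, ψp i * dP i ^ 2) + (∑ j, ψw j * dW j ^ 2)
        + ((∑ i', ψp i' * dP i') + ∑ j', ψw j' * dW j') ^ 2 * (∑ i, ∑ k, ∑ j, ψ i k j)
        + 2 * (∑ i, ∑ j, ψpw i j * (dP i * dW j))
        - 2 * ((∑ i', ψp i' * dP i') + ∑ j', ψw j' * dW j') * (∑ i, ψp i * dP i)
        - 2 * ((∑ i', ψp i' * dP i') + ∑ j', ψw j' * dW j') * (∑ j, ψw j * dW j) := by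
      set μ := (∑ i', ψp i' * dP i') + ∑ j', ψw j' * dW j' with hμdef
      calc (∑ i, ∑ k, ∑ j, ψ i k j * (dP i + dW j - μ) ^ 2)
          = ∑ i, ∑ k, ∑ j, (ψ i k j * dP i ^ 2 + ψ i k j * dW j ^ 2
              + μ ^ 2 * ψ i k j + 2 * (ψ i k j * (dP i * dW j))
              - (2 * μ) * (ψ i k j * dP i) - (2 * μ) * (ψ i k j * dW j)) :=
            Finset.sum_congr rfl fun i _ => Finset.sum_congr rfl fun k _ =>
              Finset.sum_congr rfl fun j _ => by ring
        _ = (∑ i, ∑ k, ∑ j, ψ i k j * dP i ^ 2) + (∑ i, ∑ k, ∑ j, ψ i k j * dW j ^ 2)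
              + μ ^ 2 * (∑ i, ∑ k, ∑ j, ψ i k j)
              + 2 * (∑ i, ∑ k, ∑ j, ψ i k j * (dP i * dW j))
              - (2 * μ) * (∑ i, ∑ k, ∑ j, ψ i k j * dP i)
              - (2 * μ) * (∑ i, ∑ k, ∑ j, ψ i k j * dW j) := by
            simp only [Finset.sum_add_distrib, Finset.sum_sub_distrib, ← Finset.mul_sum]
        _ = _ := by
            rw [sP (fun i => dP i ^ 2), sW (fun j => dW j ^ 2), sPW, sP dP, sW dW]
    have key : Q dP dW = ∑ i, ∑ k, ∑ j,
        ψ i k j * (dP i + dW j - ((∑ i', ψp i' * dP i') + ∑ j', ψw j' * dW j')) ^ 2 := by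
      rw [expand, hψ1]
      simp only [hQdef]
      ring
    rw [key]
    exact Finset.sum_nonneg fun i _ => Finset.sum_nonneg fun k _ =>
      Finset.sum_nonneg fun j _ => mul_nonneg (hψ0 i k j) (sq_nonneg _)
  -- ### F difference formula
  have hFdiff : ∀ (dP : Fin n → ℝ) (dW : Fin m → ℝ),
      F (fun i => xP i + dP i) (fun j => xW j + dW j) - F xP xW
        = ((∑ i, gP i * dP i) + (∑ j, gW j * dW j)) - a * Q dP dW := by
    intro dP dW
    have l1 : (∑ i, (ψp i + 2 * a * cp i) * (xP i + dP i))
        = (∑ i, (ψp i + 2 * a * cp i) * xP i) + ∑ i, (ψp i + 2 * a * cp i) * dP i := by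
      rw [← Finset.sum_add_distrib]; exact Finset.sum_congr rfl fun i _ => by ring
    have l2 : (∑ j, (ψw j + 2 * a * cw j) * (xW j + dW j))
        = (∑ j, (ψw j + 2 * a * cw j) * xW j) + ∑ j, (ψw j + 2 * a * cw j) * dW j := by
      rw [← Finset.sum_add_distrib]; exact Finset.sum_congr rfl fun j _ => by ring
    have g1 : (∑ i, gP i * dP i)
        = (∑ i, (ψp i + 2 * a * cp i) * dP i) - 2 * a * (∑ i, Gp i * dP i) := by
      rw [Finset.mul_sum, ← Finset.sum_sub_distrib]
      exact Finset.sum_congr rfl fun i _ => by simp only [hgPdef]; ring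
    have g2 : (∑ j, gW j * dW j)
        = (∑ j, (ψw j + 2 * a * cw j) * dW j) - 2 * a * (∑ j, Gw j * dW j) := by
      rw [Finset.mul_sum, ← Finset.sum_sub_distrib]
      exact Finset.sum_congr rfl fun j _ => by simp only [hgWdef]; ring
    simp only [hFexp]
    rw [hQbil dP dW, l1, l2, g1, g2]
    ring
  -- ### Q with one zero argument, and scaling
  have hQP0 : ∀ u : Fin n → ℝ, Q u (fun _ => 0)
      = (∑ i, ψp i * u i ^ 2) - (∑ i, ψp i * u i) ^ 2 := by
    intro u; simp only [hQdef]; norm_num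
  have hQW0 : ∀ v : Fin m → ℝ, Q (fun _ => 0) v
      = (∑ j, ψw j * v j ^ 2) - (∑ j, ψw j * v j) ^ 2 := by
    intro v; simp only [hQdef]; norm_num
  -- ### matrix computations
  have hMx : ∀ s, M.mulVec (Sum.elim xP xW) s = Sum.elim Gp Gw s := by
    intro s
    cases s with
    | inl i =>
      simp only [Matrix.mulVec, dotProduct, Fintype.sum_sum_type, Sum.elim_inl,
        Sum.elim_inr, hMpp, hMpw]
      have e1 : (∑ i', ((if i = i' then ψp i else 0) - ψp i * ψp i') * xP i')
          = ψp i * xP i - ψp i * ∑ i', ψp i' * xP i' := by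
        have h0 : ∀ i', ((if i = i' then ψp i else 0) - ψp i * ψp i') * xP i'
            = (if i = i' then ψp i * xP i' else 0) - ψp i * (ψp i' * xP i') := by
          intro i'; split <;> ring
        rw [Finset.sum_congr rfl fun i' _ => h0 i', Finset.sum_sub_distrib,
          Finset.sum_ite_eq, ← Finset.mul_sum]
        simp
      have e2 : (∑ j, (ψpw i j - ψp i * ψw j) * xW j)
          = (∑ j, ψpw i j * xW j) - ψp i * ∑ j, ψw j * xW j := by
        calc (∑ j, (ψpw i j - ψp i * ψw j) * xW j)
            = ∑ j, (ψpw i j * xW j - ψp i * (ψw j * xW j)) :=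
              Finset.sum_congr rfl fun j _ => by ring
          _ = _ := by rw [Finset.sum_sub_distrib, ← Finset.mul_sum]
      rw [e1, e2]
      simp only [hGpdef]
      ring
    | inr j =>
      simp only [Matrix.mulVec, dotProduct, Fintype.sum_sum_type, Sum.elim_inl,
        Sum.elim_inr, hMwp, hMww]
      have e1 : (∑ i, (ψpw i j - ψp i * ψw j) * xP i)
          = (∑ i, ψpw i j * xP i) - ψw j * ∑ i, ψp i * xP i := by
        calc (∑ i, (ψpw i j - ψp i * ψw j) * xP i)
            = ∑ i, (ψpw i j * xP i - ψw j * (ψp i * xP i)) :=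
              Finset.sum_congr rfl fun i _ => by ring
          _ = _ := by rw [Finset.sum_sub_distrib, ← Finset.mul_sum]
      have e2 : (∑ j', ((if j = j' then ψw j else 0) - ψw j * ψw j') * xW j')
          = ψw j * xW j - ψw j * ∑ j', ψw j' * xW j' := by
        have h0 : ∀ j', ((if j = j' then ψw j else 0) - ψw j * ψw j') * xW j'
            = (if j = j' then ψw j * xW j' else 0) - ψw j * (ψw j' * xW j') := by
          intro j'; split <;> ring
        rw [Finset.sum_congr rfl fun j' _ => h0 j', Finset.sum_sub_distrib,
          Finset.sum_ite_eq, ← Finset.mul_sum]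
        simp
      rw [e1, e2]
      simp only [hGwdef]
      ring
  have hBvec : ∀ (lp lw : ℝ) (s : Fin n ⊕ Fin m), B.mulVec ![lp, lw] s
      = Sum.elim (fun i => φp i * lp) (fun j => φw j * lw) s := by
    intro lp lw s
    cases s with
    | inl i =>
      simp [Matrix.mulVec, dotProduct, Fin.sum_univ_two, hBp0 i, hBp1 i]
    | inr j =>
      simp [Matrix.mulVec, dotProduct, Fin.sum_univ_two, hBw0 j, hBw1 j]
  have hBT : B.transpose.mulVec (Sum.elim xP xW) = 0
      ↔ ((∑ i, φp i * xP i) = 0 ∧ (∑ j, φw j * xW j) = 0) := by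
    have hc0 : B.transpose.mulVec (Sum.elim xP xW) 0 = ∑ i, φp i * xP i := by
      simp [Matrix.mulVec, dotProduct, Fintype.sum_sum_type, Matrix.transpose_apply,
        hBp0, hBw0]
    have hc1 : B.transpose.mulVec (Sum.elim xP xW) 1 = ∑ j, φw j * xW j := by
      simp [Matrix.mulVec, dotProduct, Fintype.sum_sum_type, Matrix.transpose_apply,
        hBp1, hBw1]
    constructor
    · intro h
      refine ⟨?_, ?_⟩
      · rw [← hc0, h]; rfl
      · rw [← hc1, h]; rfl
    · rintro ⟨h1, h2⟩
      funext t
      fin_cases t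
      · simpa [hc0] using h1
      · simpa [hc1] using h2
  have heqiff : ∀ lp lw : ℝ,
      ((2*a) • M.mulVec (Sum.elim xP xW) + B.mulVec ![lp, lw]
        = (2*a) • Sum.elim cp cw + Sum.elim ψp ψw)
      ↔ ((∀ i, gP i = lp * φp i) ∧ (∀ j, gW j = lw * φw j)) := by
    intro lp lw
    constructor
    · intro h
      constructor
      · intro i
        have h' := congrFun h (Sum.inl i)
        simp only [Pi.add_apply, Pi.smul_apply, smul_eq_mul, hMx, hBvec, Sum.elim_inl] at h'
        simp only [hgPdef]
        linarith
      · intro j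
        have h' := congrFun h (Sum.inr j)
        simp only [Pi.add_apply, Pi.smul_apply, smul_eq_mul, hMx, hBvec, Sum.elim_inr] at h'
        simp only [hgWdef]
        linarith
    · rintro ⟨h1, h2⟩
      funext s
      cases s with
      | inl i =>
        simp only [Pi.add_apply, Pi.smul_apply, smul_eq_mul, hMx, hBvec, Sum.elim_inl]
        have h' := h1 i
        simp only [hgPdef] at h'
        linarith
      | inr j =>
        simp only [Pi.add_apply, Pi.smul_apply, smul_eq_mul, hMx, hBvec, Sum.elim_inr]
        have h' := h2 j
        simp only [hgWdef] at h'
        linarith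
  -- ### nontriviality of marginals
  have hφpne : ∃ i, φp i ≠ 0 := by
    by_contra h
    push_neg at h
    have hs : (∑ i, φp i) = 1 := by
      rw [← hφ1]; exact Finset.sum_congr rfl fun i _ => hφp i
    rw [Finset.sum_congr rfl fun i _ => h i] at hs
    simp at hs
  have hφwne : ∃ j, φw j ≠ 0 := by
    by_contra h
    push_neg at h
    have hs : (∑ j, φw j) = 1 := by
      rw [← hφ1]
      calc (∑ j, φw j) = ∑ j, ∑ i, φ i j := Finset.sum_congr rfl fun j _ => hφw j
        _ = ∑ i, ∑ j, φ i j := Finset.sum_comm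
    rw [Finset.sum_congr rfl fun j _ => h j] at hs
    simp at hs
  -- ### main equivalence
  constructor
  · rintro ⟨hfP, hfW, hopt⟩
    have stP : ∀ z : Fin n → ℝ, (∑ i, φp i * z i) = 0 → (∑ i, gP i * z i) = 0 := by
      intro z hz
      refine aux_scalar a (∑ i, gP i * z i) (Q z (fun _ => 0)) ha (hQnn z _) fun t => ?_
      have hfeas1 : (∑ i, φp i * (xP i + t * z i)) = 0 := by
        have e : (∑ i, φp i * (xP i + t * z i))
            = (∑ i, φp i * xP i) + t * ∑ i, φp i * z i := by
          rw [Finset.mul_sum, ← Finset.sum_add_distrib]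
          exact Finset.sum_congr rfl fun i _ => by ring
        rw [e, hfP, hz]; ring
      have hfeas2 : (∑ j, φw j * (xW j + 0)) = 0 := by simpa using hfW
      have hle := hopt (fun i => xP i + t * z i) (fun j => xW j + 0) hfeas1 hfeas2
      have hdiff := hFdiff (fun i => t * z i) (fun _ => 0)
      have e1 : (∑ i, gP i * (t * z i)) = t * ∑ i, gP i * z i := by
        rw [Finset.mul_sum]; exact Finset.sum_congr rfl fun i _ => by ring
      have e2 : (∑ j, gW j * 0) = 0 := by simp
      have a1 : (∑ i, ψp i * (t * z i) ^ 2) = t ^ 2 * ∑ i, ψp i * z i ^ 2 := by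
        rw [Finset.mul_sum]; exact Finset.sum_congr rfl fun i _ => by ring
      have a2 : (∑ i, ψp i * (t * z i)) = t * ∑ i, ψp i * z i := by
        rw [Finset.mul_sum]; exact Finset.sum_congr rfl fun i _ => by ring
      have e3 : Q (fun i => t * z i) (fun _ => 0) = t ^ 2 * Q z (fun _ => 0) := by
        rw [hQP0, hQP0, a1, a2]; ring
      rw [e1, e2, e3] at hdiff
      linarith
    have stW : ∀ z : Fin m → ℝ, (∑ j, φw j * z j) = 0 → (∑ j, gW j * z j) = 0 := by
      intro z hz
      refine aux_scalar a (∑ j, gW j * z j) (Q (fun _ => 0) z) ha (hQnn _ z) fun t => ?_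
      have hfeas1 : (∑ i, φp i * (xP i + 0)) = 0 := by simpa using hfP
      have hfeas2 : (∑ j, φw j * (xW j + t * z j)) = 0 := by
        have e : (∑ j, φw j * (xW j + t * z j))
            = (∑ j, φw j * xW j) + t * ∑ j, φw j * z j := by
          rw [Finset.mul_sum, ← Finset.sum_add_distrib]
          exact Finset.sum_congr rfl fun j _ => by ring
        rw [e, hfW, hz]; ring
      have hle := hopt (fun i => xP i + 0) (fun j => xW j + t * z j) hfeas1 hfeas2
      have hdiff := hFdiff (fun _ => 0) (fun j => t * z j)
      have e1 : (∑ i, gP i * 0) = 0 := by simp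
      have e2 : (∑ j, gW j * (t * z j)) = t * ∑ j, gW j * z j := by
        rw [Finset.mul_sum]; exact Finset.sum_congr rfl fun j _ => by ring
      have a1 : (∑ j, ψw j * (t * z j) ^ 2) = t ^ 2 * ∑ j, ψw j * z j ^ 2 := by
        rw [Finset.mul_sum]; exact Finset.sum_congr rfl fun j _ => by ring
      have a2 : (∑ j, ψw j * (t * z j)) = t * ∑ j, ψw j * z j := by
        rw [Finset.mul_sum]; exact Finset.sum_congr rfl fun j _ => by ring
      have e3 : Q (fun _ => 0) (fun j => t * z j) = t ^ 2 * Q (fun _ => 0) z := by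
        rw [hQW0, hQW0, a1, a2]; ring
      rw [e1, e2, e3] at hdiff
      linarith
    obtain ⟨lp, hlp⟩ := aux_orth φp gP hφpne stP
    obtain ⟨lw, hlw⟩ := aux_orth φw gW hφwne stW
    exact ⟨lp, lw, (heqiff lp lw).mpr ⟨hlp, hlw⟩, hBT.mpr ⟨hfP, hfW⟩⟩
  · rintro ⟨lp, lw, heq, hker⟩
    obtain ⟨hfP, hfW⟩ := hBT.mp hker
    obtain ⟨hlp, hlw⟩ := (heqiff lp lw).mp heq
    refine ⟨hfP, hfW, fun u v hu hv => ?_⟩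
    have hdiff := hFdiff (fun i => u i - xP i) (fun j => v j - xW j)
    have efun1 : (fun i => xP i + (u i - xP i)) = u := by funext i; ring
    have efun2 : (fun j => xW j + (v j - xW j)) = v := by funext j; ring
    rw [efun1, efun2] at hdiff
    have e1 : (∑ i, gP i * (u i - xP i)) = 0 := by
      have e : (∑ i, gP i * (u i - xP i))
          = lp * ((∑ i, φp i * u i) - ∑ i, φp i * xP i) := by
        calc (∑ i, gP i * (u i - xP i))
            = ∑ i, (lp * (φp i * u i) - lp * (φp i * xP i)) :=
              Finset.sum_congr rfl fun i _ => by rw [hlp i]; ring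
          _ = _ := by
              rw [Finset.sum_sub_distrib, ← Finset.mul_sum, ← Finset.mul_sum]; ring
      rw [e, hu, hfP]; ring
    have e2 : (∑ j, gW j * (v j - xW j)) = 0 := by
      have e : (∑ j, gW j * (v j - xW j))
          = lw * ((∑ j, φw j * v j) - ∑ j, φw j * xW j) := by
        calc (∑ j, gW j * (v j - xW j))
            = ∑ j, (lw * (φw j * v j) - lw * (φw j * xW j)) :=
              Finset.sum_congr rfl fun j _ => by rw [hlw j]; ring
          _ = _ := by
              rw [Finset.sum_sub_distrib, ← Finset.mul_sum, ← Finset.mul_sum]; ring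
      rw [e, hv, hfW]; ring
    rw [e1, e2] at hdiff
    have hq := hQnn (fun i => u i - xP i) (fun j => v j - xW j)
    nlinarith [mul_nonneg ha.le hq]
end

section
/- Let a > 0. If x ∈ ℝ^{n+m} and λ_p, λ_w ∈ ℝ satisfy the first-order conditions 2a M x + B (λ_p, λ_w)^T = 2a c + d and B^T x = 0, then necessarily λ_p = 1 and λ_w = 1. -/
open Finset Matrix

theorem stmt_11 (n m l : ℕ) (hn : 1 ≤ n) (hm : 1 ≤ m) (hl : 1 ≤ l)
    (p : Fin n → ℝ) (q : Fin l → ℝ) (w : Fin m → ℝ)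
    (ψ : Fin n → Fin l → Fin m → ℝ)
    (hψ0 : ∀ i k j, 0 ≤ ψ i k j)
    (hψ1 : ∑ i, ∑ k, ∑ j, ψ i k j = 1)
    (ψp : Fin n → ℝ) (hψp : ∀ i, ψp i = ∑ k, ∑ j, ψ i k j)
    (ψw : Fin m → ℝ) (hψw : ∀ j, ψw j = ∑ i, ∑ k, ψ i k j)
    (ψpw : Matrix (Fin n) (Fin m) ℝ) (hψpw : ∀ i j, ψpw i j = ∑ k, ψ i k j)
    (r : ℝ) (y : Fin n → Fin l → ℝ) (hy : ∀ i k, y i k = (r - p i) * q k)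
    (μy : ℝ) (hμy : μy = ∑ i, ∑ k, ∑ j, ψ i k j * y i k)
    (vp : Fin n → ℝ) (hvp : ∀ i, vp i = ∑ k, ∑ j, ψ i k j * y i k)
    (vw : Fin m → ℝ) (hvw : ∀ j, vw j = ∑ i, ∑ k, ψ i k j * y i k)
    (cp : Fin n → ℝ) (hcp : ∀ i, cp i = μy * ψp i - vp i)
    (cw : Fin m → ℝ) (hcw : ∀ j, cw j = μy * ψw j - vw j)
    (M : Matrix (Fin n ⊕ Fin m) (Fin n ⊕ Fin m) ℝ)
    (hMpp : ∀ i i', M (Sum.inl i) (Sum.inl i') = (if i = i' then ψp i else 0) - ψp i * ψp i')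
    (hMww : ∀ j j', M (Sum.inr j) (Sum.inr j') = (if j = j' then ψw j else 0) - ψw j * ψw j')
    (hMpw : ∀ i j, M (Sum.inl i) (Sum.inr j) = ψpw i j - ψp i * ψw j)
    (hMwp : ∀ i j, M (Sum.inr j) (Sum.inl i) = ψpw i j - ψp i * ψw j)
    (φ : Fin n → Fin m → ℝ)
    (hφ0 : ∀ i j, 0 ≤ φ i j) (hφ1 : ∑ i, ∑ j, φ i j = 1)
    (φp : Fin n → ℝ) (hφp : ∀ i, φp i = ∑ j, φ i j)
    (φw : Fin m → ℝ) (hφw : ∀ j, φw j = ∑ i, φ i j)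
    (B : Matrix (Fin n ⊕ Fin m) (Fin 2) ℝ)
    (hBp0 : ∀ i, B (Sum.inl i) 0 = φp i) (hBp1 : ∀ i, B (Sum.inl i) 1 = 0)
    (hBw0 : ∀ j, B (Sum.inr j) 0 = 0) (hBw1 : ∀ j, B (Sum.inr j) 1 = φw j)
    (a : ℝ) (ha : 0 < a) :
    ∀ (x : Fin n ⊕ Fin m → ℝ) (lp lw : ℝ),
      (2*a) • M.mulVec x + B.mulVec ![lp, lw]
        = (2*a) • Sum.elim cp cw + Sum.elim ψp ψw →
      B.transpose.mulVec x = 0 →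
      lp = 1 ∧ lw = 1 := by
  intro x lp lw heq _
  have hψpsum : ∑ i, ψp i = 1 := by simp_rw [hψp]; exact hψ1
  have hψwsum : ∑ j, ψw j = 1 := by
    simp_rw [hψw]
    rw [Finset.sum_comm]
    rw [← hψ1]
    exact Finset.sum_congr rfl fun i _ => Finset.sum_comm
  have hcol : ∀ j, ∑ i, ψpw i j = ψw j := by
    intro j; simp_rw [hψpw, hψw]
  have hrow : ∀ i, ∑ j, ψpw i j = ψp i := by
    intro i; simp_rw [hψpw, hψp]; exact Finset.sum_comm
  have hvpsum : ∑ i, vp i = μy := by simp_rw [hvp]; rw [hμy]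
  have hvwsum : ∑ j, vw j = μy := by
    simp_rw [hvw]
    rw [Finset.sum_comm, hμy]
    exact Finset.sum_congr rfl fun i _ => Finset.sum_comm
  have hcpsum : ∑ i, cp i = 0 := by
    simp_rw [hcp]
    rw [Finset.sum_sub_distrib, ← Finset.mul_sum, hψpsum, hvpsum, mul_one, sub_self]
  have hcwsum : ∑ j, cw j = 0 := by
    simp_rw [hcw]
    rw [Finset.sum_sub_distrib, ← Finset.mul_sum, hψwsum, hvwsum, mul_one, sub_self]
  have hφpsum : ∑ i, φp i = 1 := by simp_rw [hφp]; exact hφ1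
  have hφwsum : ∑ j, φw j = 1 := by
    simp_rw [hφw]; rw [Finset.sum_comm]; exact hφ1
  -- p-block
  have hMl : ∑ i, M.mulVec x (Sum.inl i) = 0 := by
    simp only [Matrix.mulVec, dotProduct]
    rw [Finset.sum_comm]
    apply Finset.sum_eq_zero
    intro v _
    rw [← Finset.sum_mul]
    cases v with
    | inl i' =>
        have : ∑ i, M (Sum.inl i) (Sum.inl i') = 0 := by
          simp_rw [hMpp]
          rw [Finset.sum_sub_distrib, Finset.sum_ite_eq' Finset.univ i' ψp,
            ← Finset.sum_mul, hψpsum, one_mul]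
          simp
        rw [this, zero_mul]
    | inr j =>
        have : ∑ i, M (Sum.inl i) (Sum.inr j) = 0 := by
          simp_rw [hMpw]
          rw [Finset.sum_sub_distrib, hcol, ← Finset.sum_mul, hψpsum, one_mul, sub_self]
        rw [this, zero_mul]
  have hMr : ∑ j, M.mulVec x (Sum.inr j) = 0 := by
    simp only [Matrix.mulVec, dotProduct]
    rw [Finset.sum_comm]
    apply Finset.sum_eq_zero
    intro v _
    rw [← Finset.sum_mul]
    cases v with
    | inl i =>
        have : ∑ j, M (Sum.inr j) (Sum.inl i) = 0 := by
          simp_rw [hMwp]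
          rw [Finset.sum_sub_distrib, hrow, ← Finset.mul_sum, hψwsum, mul_one, sub_self]
        rw [this, zero_mul]
    | inr j' =>
        have : ∑ j, M (Sum.inr j) (Sum.inr j') = 0 := by
          simp_rw [hMww]
          rw [Finset.sum_sub_distrib, Finset.sum_ite_eq' Finset.univ j' ψw,
            ← Finset.sum_mul, hψwsum, one_mul]
          simp
        rw [this, zero_mul]
  have hBl : ∑ i, B.mulVec ![lp, lw] (Sum.inl i) = lp := by
    simp only [Matrix.mulVec, dotProduct, Fin.sum_univ_two]
    simp_rw [hBp0, hBp1, zero_mul, add_zero, Matrix.cons_val_zero, ← Finset.sum_mul,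
      hφpsum, one_mul]
  have hBr : ∑ j, B.mulVec ![lp, lw] (Sum.inr j) = lw := by
    simp only [Matrix.mulVec, dotProduct, Fin.sum_univ_two]
    simp_rw [hBw0, hBw1, zero_mul, zero_add, Matrix.cons_val_one, Matrix.cons_val_zero,
      ← Finset.sum_mul, hφwsum, one_mul]
  have h1 : ∑ i, ((2*a) • M.mulVec x + B.mulVec ![lp, lw]) (Sum.inl i)
      = ∑ i, ((2*a) • Sum.elim cp cw + Sum.elim ψp ψw) (Sum.inl i) := by rw [heq]
  have h2 : ∑ j, ((2*a) • M.mulVec x + B.mulVec ![lp, lw]) (Sum.inr j)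
      = ∑ j, ((2*a) • Sum.elim cp cw + Sum.elim ψp ψw) (Sum.inr j) := by rw [heq]
  simp only [Pi.add_apply, Pi.smul_apply, smul_eq_mul, Sum.elim_inl, Sum.elim_inr,
    Finset.sum_add_distrib, ← Finset.mul_sum] at h1 h2
  rw [hMl, hBl, hcpsum, hψpsum] at h1
  rw [hMr, hBr, hcwsum, hψwsum] at h2
  constructor <;> linarith
end

section
/- Let a > 0 and x ∈ ℝ^{n+m}. Then x satisfies the first-order conditions with multipliers λ_p = λ_w = 1, i.e. 2a M x + b = 2a c + d and B^T x = 0, if and only if x satisfies the reduced system M̂ x = ĉ + (1/(2a))(d̂ − b̂) and B^T x = 0, where M̂, ĉ, d̂, b̂ are obtained from M, c, d, b by deleting the n-th and (n+m)-th rows/entries. -/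
open Finset Matrix

theorem stmt_12 (n m l : ℕ) (hl : 1 ≤ l)
    (p : Fin (n+1) → ℝ) (q : Fin l → ℝ) (w : Fin (m+1) → ℝ)
    (ψ : Fin (n+1) → Fin l → Fin (m+1) → ℝ)
    (hψ0 : ∀ i k j, 0 ≤ ψ i k j)
    (hψ1 : ∑ i, ∑ k, ∑ j, ψ i k j = 1)
    (ψp : Fin (n+1) → ℝ) (hψp : ∀ i, ψp i = ∑ k, ∑ j, ψ i k j)
    (ψw : Fin (m+1) → ℝ) (hψw : ∀ j, ψw j = ∑ i, ∑ k, ψ i k j)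
    (ψpw : Matrix (Fin (n+1)) (Fin (m+1)) ℝ) (hψpw : ∀ i j, ψpw i j = ∑ k, ψ i k j)
    (r : ℝ) (y : Fin (n+1) → Fin l → ℝ) (hy : ∀ i k, y i k = (r - p i) * q k)
    (μy : ℝ) (hμy : μy = ∑ i, ∑ k, ∑ j, ψ i k j * y i k)
    (vp : Fin (n+1) → ℝ) (hvp : ∀ i, vp i = ∑ k, ∑ j, ψ i k j * y i k)
    (vw : Fin (m+1) → ℝ) (hvw : ∀ j, vw j = ∑ i, ∑ k, ψ i k j * y i k)
    (cp : Fin (n+1) → ℝ) (hcp : ∀ i, cp i = μy * ψp i - vp i)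
    (cw : Fin (m+1) → ℝ) (hcw : ∀ j, cw j = μy * ψw j - vw j)
    (M : Matrix (Fin (n+1) ⊕ Fin (m+1)) (Fin (n+1) ⊕ Fin (m+1)) ℝ)
    (hMpp : ∀ i i', M (Sum.inl i) (Sum.inl i') = (if i = i' then ψp i else 0) - ψp i * ψp i')
    (hMww : ∀ j j', M (Sum.inr j) (Sum.inr j') = (if j = j' then ψw j else 0) - ψw j * ψw j')
    (hMpw : ∀ i j, M (Sum.inl i) (Sum.inr j) = ψpw i j - ψp i * ψw j)
    (hMwp : ∀ i j, M (Sum.inr j) (Sum.inl i) = ψpw i j - ψp i * ψw j)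
    (φ : Fin (n+1) → Fin (m+1) → ℝ)
    (hφ0 : ∀ i j, 0 ≤ φ i j) (hφ1 : ∑ i, ∑ j, φ i j = 1)
    (φp : Fin (n+1) → ℝ) (hφp : ∀ i, φp i = ∑ j, φ i j)
    (φw : Fin (m+1) → ℝ) (hφw : ∀ j, φw j = ∑ i, φ i j)
    (B : Matrix (Fin (n+1) ⊕ Fin (m+1)) (Fin 2) ℝ)
    (hBp0 : ∀ i, B (Sum.inl i) 0 = φp i) (hBp1 : ∀ i, B (Sum.inl i) 1 = 0)
    (hBw0 : ∀ j, B (Sum.inr j) 0 = 0) (hBw1 : ∀ j, B (Sum.inr j) 1 = φw j)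
    (Mhat : Matrix (Fin n ⊕ Fin m) (Fin (n+1) ⊕ Fin (m+1)) ℝ)
    (hMhatp : ∀ (i : Fin n) t, Mhat (Sum.inl i) t = M (Sum.inl i.castSucc) t)
    (hMhatw : ∀ (j : Fin m) t, Mhat (Sum.inr j) t = M (Sum.inr j.castSucc) t)
    (chat : Fin n ⊕ Fin m → ℝ)
    (hchatp : ∀ i : Fin n, chat (Sum.inl i) = cp i.castSucc)
    (hchatw : ∀ j : Fin m, chat (Sum.inr j) = cw j.castSucc)
    (dhat : Fin n ⊕ Fin m → ℝ)
    (hdhatp : ∀ i : Fin n, dhat (Sum.inl i) = ψp i.castSucc)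
    (hdhatw : ∀ j : Fin m, dhat (Sum.inr j) = ψw j.castSucc)
    (bhat : Fin n ⊕ Fin m → ℝ)
    (hbhatp : ∀ i : Fin n, bhat (Sum.inl i) = φp i.castSucc)
    (hbhatw : ∀ j : Fin m, bhat (Sum.inr j) = φw j.castSucc)
    (a : ℝ) (ha : 0 < a) :
    ∀ x : Fin (n+1) ⊕ Fin (m+1) → ℝ,
      ((2*a) • M.mulVec x + Sum.elim φp φw
          = (2*a) • Sum.elim cp cw + Sum.elim ψp ψw ∧
        B.transpose.mulVec x = 0)
      ↔ (Mhat.mulVec x = (fun s => chat s + (1/(2*a)) * (dhat s - bhat s)) ∧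
          B.transpose.mulVec x = 0) := by
  intro x
  have ha2 : (2*a) ≠ 0 := by positivity
  -- marginal sums
  have hsψp : ∑ i, ψp i = 1 := by simpa [hψp] using hψ1
  have hsψw : ∑ j, ψw j = 1 := by
    have : ∑ j, ψw j = ∑ i, ∑ k, ∑ j, ψ i k j := by
      simp only [hψw]
      rw [Finset.sum_comm]
      exact Finset.sum_congr rfl fun i _ => Finset.sum_comm
    rw [this, hψ1]
  have hsφp : ∑ i, φp i = 1 := by simpa [hφp] using hφ1
  have hsφw : ∑ j, φw j = 1 := by
    have : ∑ j, φw j = ∑ i, ∑ j, φ i j := by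
      simp only [hφw]; exact Finset.sum_comm
    rw [this, hφ1]
  have hpwcol : ∀ j, ∑ i, ψpw i j = ψw j := by
    intro j; simp [hψpw, hψw]
  have hpwrow : ∀ i, ∑ j, ψpw i j = ψp i := by
    intro i; simp only [hψpw, hψp]; exact Finset.sum_comm
  have hscp : ∑ i, cp i = 0 := by
    have hsvp : ∑ i, vp i = μy := by simp [hvp, hμy]
    simp [hcp, Finset.sum_sub_distrib, ← Finset.mul_sum, hsψp, hsvp]
  have hscw : ∑ j, cw j = 0 := by
    have hsvw : ∑ j, vw j = μy := by
      simp only [hvw, hμy]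
      rw [Finset.sum_comm]
      exact Finset.sum_congr rfl fun i _ => Finset.sum_comm
    simp [hcw, Finset.sum_sub_distrib, ← Finset.mul_sum, hsψw, hsvw]
  -- row sums of M vanish
  have hMrowp : ∀ t, ∑ i, M (Sum.inl i) t = 0 := by
    intro t
    cases t with
    | inl i' =>
      simp only [hMpp, Finset.sum_sub_distrib]
      rw [Finset.sum_ite_eq' Finset.univ i' ψp]
      simp [← Finset.sum_mul, hsψp]
    | inr j =>
      simp only [hMpw, Finset.sum_sub_distrib]
      rw [hpwcol]
      simp [← Finset.sum_mul, hsψp]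
  have hMroww : ∀ t, ∑ j, M (Sum.inr j) t = 0 := by
    intro t
    cases t with
    | inl i =>
      simp only [hMwp, Finset.sum_sub_distrib]
      rw [hpwrow]
      simp [← Finset.mul_sum, hsψw]
    | inr j' =>
      simp only [hMww, Finset.sum_sub_distrib]
      rw [Finset.sum_ite_eq' Finset.univ j' ψw]
      simp [← Finset.sum_mul, hsψw]
  have hMxp : ∑ i, (M.mulVec x) (Sum.inl i) = 0 := by
    simp only [Matrix.mulVec, dotProduct]
    rw [Finset.sum_comm]
    simp only [← Finset.sum_mul, hMrowp, zero_mul, Finset.sum_const_zero]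
  have hMxw : ∑ j, (M.mulVec x) (Sum.inr j) = 0 := by
    simp only [Matrix.mulVec, dotProduct]
    rw [Finset.sum_comm]
    simp only [← Finset.sum_mul, hMroww, zero_mul, Finset.sum_const_zero]
  have hhatrowp : ∀ i : Fin n, (Mhat.mulVec x) (Sum.inl i) = (M.mulVec x) (Sum.inl i.castSucc) := by
    intro i; simp [Matrix.mulVec, dotProduct, hMhatp]
  have hhatroww : ∀ j : Fin m, (Mhat.mulVec x) (Sum.inr j) = (M.mulVec x) (Sum.inr j.castSucc) := by
    intro j; simp [Matrix.mulVec, dotProduct, hMhatw]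
  constructor
  · rintro ⟨h1, h2⟩
    refine ⟨?_, h2⟩
    have hpt : ∀ t, 2*a*(M.mulVec x) t + Sum.elim φp φw t
        = 2*a*(Sum.elim cp cw t) + Sum.elim ψp ψw t := by
      intro t
      have := congrFun h1 t
      simpa [Pi.add_apply, Pi.smul_apply, smul_eq_mul] using this
    funext s
    cases s with
    | inl i =>
      have h := hpt (Sum.inl (Fin.castSucc i))
      simp only [Sum.elim_inl] at h
      rw [hhatrowp, hchatp, hdhatp, hbhatp]
      field_simp
      linarith
    | inr j =>
      have h := hpt (Sum.inr (Fin.castSucc j))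
      simp only [Sum.elim_inr] at h
      rw [hhatroww, hchatw, hdhatw, hbhatw]
      field_simp
      linarith
  · rintro ⟨h1, h2⟩
    refine ⟨?_, h2⟩
    have hhp : ∀ i : Fin n, 2*a*(M.mulVec x) (Sum.inl i.castSucc) + φp i.castSucc
        = 2*a*cp i.castSucc + ψp i.castSucc := by
      intro i
      have := congrFun h1 (Sum.inl i)
      rw [hhatrowp, hchatp, hdhatp, hbhatp] at this
      field_simp at this
      linarith
    have hhw : ∀ j : Fin m, 2*a*(M.mulVec x) (Sum.inr j.castSucc) + φw j.castSucc
        = 2*a*cw j.castSucc + ψw j.castSucc := by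
      intro j
      have := congrFun h1 (Sum.inr j)
      rw [hhatroww, hchatw, hdhatw, hbhatw] at this
      field_simp at this
      linarith
    -- last rows from sum identities
    have hlastp : 2*a*(M.mulVec x) (Sum.inl (Fin.last n)) + φp (Fin.last n)
        = 2*a*cp (Fin.last n) + ψp (Fin.last n) := by
      have hsumF : ∑ i, (2*a*(M.mulVec x) (Sum.inl i) + φp i - (2*a*cp i + ψp i)) = 0 := by
        simp only [Finset.sum_add_distrib, Finset.sum_sub_distrib, ← Finset.mul_sum,
          hMxp, hscp, hsψp, hsφp]
        ring
      rw [Fin.sum_univ_castSucc] at hsumF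
      have hz : ∀ i : Fin n, (2*a*(M.mulVec x) (Sum.inl i.castSucc) + φp i.castSucc
          - (2*a*cp i.castSucc + ψp i.castSucc)) = 0 := fun i => by linarith [hhp i]
      rw [Finset.sum_congr rfl (fun i _ => hz i)] at hsumF
      simp at hsumF
      linarith
    have hlastw : 2*a*(M.mulVec x) (Sum.inr (Fin.last m)) + φw (Fin.last m)
        = 2*a*cw (Fin.last m) + ψw (Fin.last m) := by
      have hsumF : ∑ j, (2*a*(M.mulVec x) (Sum.inr j) + φw j - (2*a*cw j + ψw j)) = 0 := by
        simp only [Finset.sum_add_distrib, Finset.sum_sub_distrib, ← Finset.mul_sum,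
          hMxw, hscw, hsψw, hsφw]
        ring
      rw [Fin.sum_univ_castSucc] at hsumF
      have hz : ∀ j : Fin m, (2*a*(M.mulVec x) (Sum.inr j.castSucc) + φw j.castSucc
          - (2*a*cw j.castSucc + ψw j.castSucc)) = 0 := fun j => by linarith [hhw j]
      rw [Finset.sum_congr rfl (fun j _ => hz j)] at hsumF
      simp at hsumF
      linarith
    funext t
    cases t with
    | inl i =>
      simp only [Pi.add_apply, Pi.smul_apply, Sum.elim_inl, smul_eq_mul]
      induction i using Fin.lastCases with
      | last => linarith [hlastp]
      | cast i => linarith [hhp i]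
    | inr j =>
      simp only [Pi.add_apply, Pi.smul_apply, Sum.elim_inr, smul_eq_mul]
      induction j using Fin.lastCases with
      | last => linarith [hlastw]
      | cast j => linarith [hhw j]
end

section
/- Let a > 0. Assume the (n+m)×(n+m) matrix K obtained by stacking M̂ on top of B^T is invertible. Then x^a = K^{-1} · (ĉ + (1/(2a))(d̂ − b̂), 0, 0) is the unique optimal solution of the hedging problem: its components (x_P, x_W) satisfy φ_p^T x_P = 0 and φ_w^T x_W = 0, they maximize F_a over all pairs satisfying those constraints, and any other feasible maximizer of F_a equals x^a. -/
open Finset Matrix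

section HedgeAux

variable {n' m' l : ℕ}

lemma sum_rot (f : Fin n' → Fin l → Fin m' → ℝ) :
    ∑ i, ∑ k, ∑ j, f i k j = ∑ j, ∑ i, ∑ k, f i k j := by
  calc ∑ i, ∑ k, ∑ j, f i k j = ∑ i, ∑ j, ∑ k, f i k j :=
        Finset.sum_congr rfl (fun i _ => Finset.sum_comm)
    _ = ∑ j, ∑ i, ∑ k, f i k j := Finset.sum_comm

lemma extractP (f : Fin n' → Fin l → Fin m' → ℝ) (g : Fin n' → ℝ) :
    ∑ i, ∑ k, ∑ j, f i k j * g i = ∑ i, (∑ k, ∑ j, f i k j) * g i := by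
  simp [Finset.sum_mul]

lemma extractW (f : Fin n' → Fin l → Fin m' → ℝ) (g : Fin m' → ℝ) :
    ∑ i, ∑ k, ∑ j, f i k j * g j = ∑ j, (∑ i, ∑ k, f i k j) * g j := by
  rw [sum_rot (fun i k j => f i k j * g j)]
  simp [Finset.sum_mul]

lemma triple_zero {f : Fin n' → Fin l → Fin m' → ℝ} (h0 : ∀ i k j, 0 ≤ f i k j)
    (hs : ∑ i, ∑ k, ∑ j, f i k j = 0) : ∀ i k j, f i k j = 0 := by
  intro i k j
  have h1 : ∀ i' ∈ Finset.univ, (0:ℝ) ≤ ∑ k', ∑ j', f i' k' j' :=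
    fun i' _ => Finset.sum_nonneg fun k' _ => Finset.sum_nonneg fun j' _ => h0 i' k' j'
  have h2 := (Finset.sum_eq_zero_iff_of_nonneg h1).mp hs i (Finset.mem_univ i)
  have h3 : ∀ k' ∈ Finset.univ, (0:ℝ) ≤ ∑ j', f i k' j' :=
    fun k' _ => Finset.sum_nonneg fun j' _ => h0 i k' j'
  have h4 := (Finset.sum_eq_zero_iff_of_nonneg h3).mp h2 k (Finset.mem_univ k)
  exact (Finset.sum_eq_zero_iff_of_nonneg (fun j' _ => h0 i k j')).mp h4 j (Finset.mem_univ j)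

/-- mean of the pure-hedge payoff -/
def mval (ψp : Fin n' → ℝ) (ψw : Fin m' → ℝ) (uP : Fin n' → ℝ) (uW : Fin m' → ℝ) : ℝ :=
  (∑ i, ψp i * uP i) + (∑ j, ψw j * uW j)

/-- quadratic form (variance of hedge part) -/
def qf (ψ : Fin n' → Fin l → Fin m' → ℝ) (ψp : Fin n' → ℝ) (ψw : Fin m' → ℝ)
    (uP : Fin n' → ℝ) (uW : Fin m' → ℝ) : ℝ :=
  ∑ i, ∑ k, ∑ j, ψ i k j * (uP i + uW j - mval ψp ψw uP uW)^2

def gPf (ψ : Fin n' → Fin l → Fin m' → ℝ) (ψp : Fin n' → ℝ) (ψw : Fin m' → ℝ)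
    (uP : Fin n' → ℝ) (uW : Fin m' → ℝ) (i : Fin n') : ℝ :=
  ∑ k, ∑ j, ψ i k j * (uP i + uW j - mval ψp ψw uP uW)

def gWf (ψ : Fin n' → Fin l → Fin m' → ℝ) (ψp : Fin n' → ℝ) (ψw : Fin m' → ℝ)
    (uP : Fin n' → ℝ) (uW : Fin m' → ℝ) (j : Fin m') : ℝ :=
  ∑ i, ∑ k, ψ i k j * (uP i + uW j - mval ψp ψw uP uW)

def bil (ψ : Fin n' → Fin l → Fin m' → ℝ) (ψp : Fin n' → ℝ) (ψw : Fin m' → ℝ)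
    (uP : Fin n' → ℝ) (uW : Fin m' → ℝ) (hP : Fin n' → ℝ) (hW : Fin m' → ℝ) : ℝ :=
  ∑ i, ∑ k, ∑ j, ψ i k j * ((uP i + uW j - mval ψp ψw uP uW) *
    (hP i + hW j - mval ψp ψw hP hW))

lemma mval_add (ψp : Fin n' → ℝ) (ψw : Fin m' → ℝ) (uP hP : Fin n' → ℝ) (uW hW : Fin m' → ℝ) :
    mval ψp ψw (fun i => uP i + hP i) (fun j => uW j + hW j)
      = mval ψp ψw uP uW + mval ψp ψw hP hW := by
  simp only [mval, mul_add, Finset.sum_add_distrib]; ring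

lemma qf_expand (ψ : Fin n' → Fin l → Fin m' → ℝ) (ψp : Fin n' → ℝ) (ψw : Fin m' → ℝ)
    (uP hP : Fin n' → ℝ) (uW hW : Fin m' → ℝ) :
    qf ψ ψp ψw (fun i => uP i + hP i) (fun j => uW j + hW j)
      = qf ψ ψp ψw uP uW + 2 * bil ψ ψp ψw uP uW hP hW + qf ψ ψp ψw hP hW := by
  simp only [qf, bil, mval_add]
  have key : ∀ i k j, ψ i k j *
      (uP i + hP i + (uW j + hW j) - (mval ψp ψw uP uW + mval ψp ψw hP hW)) ^ 2
      = ψ i k j * (uP i + uW j - mval ψp ψw uP uW)^2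
        + 2 * (ψ i k j * ((uP i + uW j - mval ψp ψw uP uW) *
            (hP i + hW j - mval ψp ψw hP hW)))
        + ψ i k j * (hP i + hW j - mval ψp ψw hP hW)^2 := fun i k j => by ring
  simp only [key, Finset.sum_add_distrib, Finset.mul_sum]

lemma qf_nonneg (ψ : Fin n' → Fin l → Fin m' → ℝ) (h0 : ∀ i k j, 0 ≤ ψ i k j)
    (ψp : Fin n' → ℝ) (ψw : Fin m' → ℝ) (uP : Fin n' → ℝ) (uW : Fin m' → ℝ) :
    0 ≤ qf ψ ψp ψw uP uW :=
  Finset.sum_nonneg fun i _ => Finset.sum_nonneg fun k _ => Finset.sum_nonneg fun j _ =>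
    mul_nonneg (h0 i k j) (sq_nonneg _)

lemma extractC (f : Fin n' → Fin l → Fin m' → ℝ) (c : ℝ) :
    ∑ i, ∑ k, ∑ j, f i k j * c = (∑ i, ∑ k, ∑ j, f i k j) * c := by
  simp [Finset.sum_mul]

lemma gA_sum (ψ : Fin n' → Fin l → Fin m' → ℝ) (hψ1 : ∑ i, ∑ k, ∑ j, ψ i k j = 1)
    (ψp : Fin n' → ℝ) (hψp : ∀ i, ψp i = ∑ k, ∑ j, ψ i k j)
    (ψw : Fin m' → ℝ) (hψw : ∀ j, ψw j = ∑ i, ∑ k, ψ i k j)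
    (uP : Fin n' → ℝ) (uW : Fin m' → ℝ) :
    ∑ i, ∑ k, ∑ j, ψ i k j * (uP i + uW j - mval ψp ψw uP uW) = 0 := by
  have key : ∀ i k j, ψ i k j * (uP i + uW j - mval ψp ψw uP uW)
      = ψ i k j * uP i + ψ i k j * uW j - ψ i k j * mval ψp ψw uP uW :=
    fun i k j => by ring
  simp only [key, Finset.sum_add_distrib, Finset.sum_sub_distrib]
  rw [extractP ψ uP, extractW ψ uW, extractC ψ (mval ψp ψw uP uW), hψ1]
  simp only [← hψp, ← hψw, mval]
  ring

lemma gPf_sum (ψ : Fin n' → Fin l → Fin m' → ℝ) (hψ1 : ∑ i, ∑ k, ∑ j, ψ i k j = 1)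
    (ψp : Fin n' → ℝ) (hψp : ∀ i, ψp i = ∑ k, ∑ j, ψ i k j)
    (ψw : Fin m' → ℝ) (hψw : ∀ j, ψw j = ∑ i, ∑ k, ψ i k j)
    (uP : Fin n' → ℝ) (uW : Fin m' → ℝ) :
    ∑ i, gPf ψ ψp ψw uP uW i = 0 := by
  simp only [gPf]; exact gA_sum ψ hψ1 ψp hψp ψw hψw uP uW

lemma gWf_sum (ψ : Fin n' → Fin l → Fin m' → ℝ) (hψ1 : ∑ i, ∑ k, ∑ j, ψ i k j = 1)
    (ψp : Fin n' → ℝ) (hψp : ∀ i, ψp i = ∑ k, ∑ j, ψ i k j)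
    (ψw : Fin m' → ℝ) (hψw : ∀ j, ψw j = ∑ i, ∑ k, ψ i k j)
    (uP : Fin n' → ℝ) (uW : Fin m' → ℝ) :
    ∑ j, gWf ψ ψp ψw uP uW j = 0 := by
  simp only [gWf]
  rw [← sum_rot (fun i k j => ψ i k j * (uP i + uW j - mval ψp ψw uP uW))]
  exact gA_sum ψ hψ1 ψp hψp ψw hψw uP uW

lemma bil_eq (ψ : Fin n' → Fin l → Fin m' → ℝ) (hψ1 : ∑ i, ∑ k, ∑ j, ψ i k j = 1)
    (ψp : Fin n' → ℝ) (hψp : ∀ i, ψp i = ∑ k, ∑ j, ψ i k j)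
    (ψw : Fin m' → ℝ) (hψw : ∀ j, ψw j = ∑ i, ∑ k, ψ i k j)
    (uP hP : Fin n' → ℝ) (uW hW : Fin m' → ℝ) :
    bil ψ ψp ψw uP uW hP hW
      = (∑ i, gPf ψ ψp ψw uP uW i * hP i) + ∑ j, gWf ψ ψp ψw uP uW j * hW j := by
  have key : ∀ i k j, ψ i k j * ((uP i + uW j - mval ψp ψw uP uW) *
        (hP i + hW j - mval ψp ψw hP hW))
      = (ψ i k j * (uP i + uW j - mval ψp ψw uP uW)) * hP i
        + (ψ i k j * (uP i + uW j - mval ψp ψw uP uW)) * hW j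
        - (ψ i k j * (uP i + uW j - mval ψp ψw uP uW)) * mval ψp ψw hP hW :=
    fun i k j => by ring
  simp only [bil, key, Finset.sum_add_distrib, Finset.sum_sub_distrib]
  rw [extractP (fun i k j => ψ i k j * (uP i + uW j - mval ψp ψw uP uW)) hP,
      extractW (fun i k j => ψ i k j * (uP i + uW j - mval ψp ψw uP uW)) hW,
      extractC (fun i k j => ψ i k j * (uP i + uW j - mval ψp ψw uP uW)) (mval ψp ψw hP hW),
      gA_sum ψ hψ1 ψp hψp ψw hψw uP uW]
  simp [gPf, gWf]

lemma qf_zero (ψ : Fin n' → Fin l → Fin m' → ℝ) (h0 : ∀ i k j, 0 ≤ ψ i k j)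
    (ψp : Fin n' → ℝ) (ψw : Fin m' → ℝ) (uP : Fin n' → ℝ) (uW : Fin m' → ℝ)
    (hq : qf ψ ψp ψw uP uW = 0) :
    (∀ i, gPf ψ ψp ψw uP uW i = 0) ∧ (∀ j, gWf ψ ψp ψw uP uW j = 0) := by
  have hterm : ∀ i k j, ψ i k j * (uP i + uW j - mval ψp ψw uP uW)^2 = 0 :=
    triple_zero (fun i k j => mul_nonneg (h0 i k j) (sq_nonneg _)) hq
  have hterm' : ∀ i k j, ψ i k j * (uP i + uW j - mval ψp ψw uP uW) = 0 := by
    intro i k j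
    rcases mul_eq_zero.mp (hterm i k j) with h | h
    · simp [h]
    · rw [sq_eq_zero_iff.mp h, mul_zero]
  constructor
  · intro i
    exact Finset.sum_eq_zero fun k _ => Finset.sum_eq_zero fun j _ => hterm' i k j
  · intro j
    exact Finset.sum_eq_zero fun i _ => Finset.sum_eq_zero fun k _ => hterm' i k j

lemma Fexp (ψ : Fin n' → Fin l → Fin m' → ℝ) (hψ1 : ∑ i, ∑ k, ∑ j, ψ i k j = 1)
    (ψp : Fin n' → ℝ) (hψp : ∀ i, ψp i = ∑ k, ∑ j, ψ i k j)
    (ψw : Fin m' → ℝ) (hψw : ∀ j, ψw j = ∑ i, ∑ k, ψ i k j)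
    (y : Fin n' → Fin l → ℝ)
    (μy : ℝ) (hμy : μy = ∑ i, ∑ k, ∑ j, ψ i k j * y i k)
    (σy2 : ℝ) (hσy2 : σy2 = ∑ i, ∑ k, ∑ j, ψ i k j * (y i k - μy)^2)
    (vp : Fin n' → ℝ) (hvp : ∀ i, vp i = ∑ k, ∑ j, ψ i k j * y i k)
    (vw : Fin m' → ℝ) (hvw : ∀ j, vw j = ∑ i, ∑ k, ψ i k j * y i k)
    (cp : Fin n' → ℝ) (hcp : ∀ i, cp i = μy * ψp i - vp i)
    (cw : Fin m' → ℝ) (hcw : ∀ j, cw j = μy * ψw j - vw j)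
    (a : ℝ) (xP : Fin n' → ℝ) (xW : Fin m' → ℝ) :
    (∑ i, ∑ k, ∑ j, ψ i k j * (y i k + xP i + xW j)) -
      a * (∑ i, ∑ k, ∑ j, ψ i k j *
        (y i k + xP i + xW j - ∑ i', ∑ k', ∑ j', ψ i' k' j' * (y i' k' + xP i' + xW j'))^2)
    = (μy - a*σy2) + (∑ i, (ψp i + 2*a*cp i) * xP i) + (∑ j, (ψw j + 2*a*cw j) * xW j)
      - a * qf ψ ψp ψw xP xW := by
  have hS1 : (∑ i, ∑ k, ∑ j, ψ i k j * (y i k + xP i + xW j))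
      = μy + mval ψp ψw xP xW := by
    have key : ∀ i k j, ψ i k j * (y i k + xP i + xW j)
        = ψ i k j * y i k + ψ i k j * xP i + ψ i k j * xW j := fun i k j => by ring
    simp only [key, Finset.sum_add_distrib]
    rw [extractP ψ xP, extractW ψ xW, ← hμy]
    simp only [← hψp, ← hψw, mval]
    ring
  rw [hS1]
  have hA0 : ∑ i, ∑ k, ∑ j, ψ i k j * (y i k - μy) = 0 := by
    have k3 : ∀ i k j, ψ i k j * (y i k - μy) = ψ i k j * y i k - ψ i k j * μy :=
      fun i k j => by ring
    simp only [k3, Finset.sum_sub_distrib]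
    rw [← hμy, extractC ψ μy, hψ1]; ring
  have key2 : ∀ i k j, ψ i k j * (y i k + xP i + xW j - (μy + mval ψp ψw xP xW))^2
      = ψ i k j * (y i k - μy)^2
        + (2*(ψ i k j * (y i k - μy))) * xP i
        + (2*(ψ i k j * (y i k - μy))) * xW j
        + (ψ i k j * (y i k - μy)) * (-(2*mval ψp ψw xP xW))
        + ψ i k j * (xP i + xW j - mval ψp ψw xP xW)^2 := fun i k j => by ring
  simp only [key2, Finset.sum_add_distrib]
  rw [extractP (fun i k j => 2*(ψ i k j * (y i k - μy))) xP,
      extractW (fun i k j => 2*(ψ i k j * (y i k - μy))) xW,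
      extractC (fun i k j => ψ i k j * (y i k - μy)) (-(2*mval ψp ψw xP xW)),
      hA0, ← hσy2]
  have hB1 : ∑ i, (∑ k, ∑ j, 2*(ψ i k j * (y i k - μy))) * xP i
      = ∑ i, (-(2*cp i)) * xP i := by
    refine Finset.sum_congr rfl fun i _ => ?_
    congr 1
    have k4 : ∀ (k : Fin l) (j : Fin m'), 2*(ψ i k j * (y i k - μy))
        = 2*(ψ i k j * y i k) - (2*μy)*(ψ i k j) := fun k j => by ring
    simp only [k4, Finset.sum_sub_distrib, ← Finset.mul_sum]
    rw [← hvp i, ← hψp i, hcp i]; ring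
  have hB2 : ∑ j, (∑ i, ∑ k, 2*(ψ i k j * (y i k - μy))) * xW j
      = ∑ j, (-(2*cw j)) * xW j := by
    refine Finset.sum_congr rfl fun j _ => ?_
    congr 1
    have k4 : ∀ (i : Fin n') (k : Fin l), 2*(ψ i k j * (y i k - μy))
        = 2*(ψ i k j * y i k) - (2*μy)*(ψ i k j) := fun i k => by ring
    simp only [k4, Finset.sum_sub_distrib, ← Finset.mul_sum]
    rw [← hvw j, ← hψw j, hcw j]; ring
  rw [hB1, hB2]
  simp only [qf, mval, add_mul, neg_mul, Finset.sum_add_distrib, Finset.sum_neg_distrib,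
    mul_assoc, ← Finset.mul_sum]
  ring

end HedgeAux

theorem stmt_13 (n m l : ℕ) (hl : 1 ≤ l)
    (p : Fin (n+1) → ℝ) (q : Fin l → ℝ) (w : Fin (m+1) → ℝ)
    (ψ : Fin (n+1) → Fin l → Fin (m+1) → ℝ)
    (hψ0 : ∀ i k j, 0 ≤ ψ i k j)
    (hψ1 : ∑ i, ∑ k, ∑ j, ψ i k j = 1)
    (ψp : Fin (n+1) → ℝ) (hψp : ∀ i, ψp i = ∑ k, ∑ j, ψ i k j)
    (ψw : Fin (m+1) → ℝ) (hψw : ∀ j, ψw j = ∑ i, ∑ k, ψ i k j)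
    (ψpw : Matrix (Fin (n+1)) (Fin (m+1)) ℝ) (hψpw : ∀ i j, ψpw i j = ∑ k, ψ i k j)
    (r : ℝ) (y : Fin (n+1) → Fin l → ℝ) (hy : ∀ i k, y i k = (r - p i) * q k)
    (μy : ℝ) (hμy : μy = ∑ i, ∑ k, ∑ j, ψ i k j * y i k)
    (σy2 : ℝ) (hσy2 : σy2 = ∑ i, ∑ k, ∑ j, ψ i k j * (y i k - μy)^2)
    (vp : Fin (n+1) → ℝ) (hvp : ∀ i, vp i = ∑ k, ∑ j, ψ i k j * y i k)
    (vw : Fin (m+1) → ℝ) (hvw : ∀ j, vw j = ∑ i, ∑ k, ψ i k j * y i k)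
    (cp : Fin (n+1) → ℝ) (hcp : ∀ i, cp i = μy * ψp i - vp i)
    (cw : Fin (m+1) → ℝ) (hcw : ∀ j, cw j = μy * ψw j - vw j)
    (M : Matrix (Fin (n+1) ⊕ Fin (m+1)) (Fin (n+1) ⊕ Fin (m+1)) ℝ)
    (hMpp : ∀ i i', M (Sum.inl i) (Sum.inl i') = (if i = i' then ψp i else 0) - ψp i * ψp i')
    (hMww : ∀ j j', M (Sum.inr j) (Sum.inr j') = (if j = j' then ψw j else 0) - ψw j * ψw j')
    (hMpw : ∀ i j, M (Sum.inl i) (Sum.inr j) = ψpw i j - ψp i * ψw j)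
    (hMwp : ∀ i j, M (Sum.inr j) (Sum.inl i) = ψpw i j - ψp i * ψw j)
    (φ : Fin (n+1) → Fin (m+1) → ℝ)
    (hφ0 : ∀ i j, 0 ≤ φ i j) (hφ1 : ∑ i, ∑ j, φ i j = 1)
    (φp : Fin (n+1) → ℝ) (hφp : ∀ i, φp i = ∑ j, φ i j)
    (φw : Fin (m+1) → ℝ) (hφw : ∀ j, φw j = ∑ i, φ i j)
    (B : Matrix (Fin (n+1) ⊕ Fin (m+1)) (Fin 2) ℝ)
    (hBp0 : ∀ i, B (Sum.inl i) 0 = φp i) (hBp1 : ∀ i, B (Sum.inl i) 1 = 0)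
    (hBw0 : ∀ j, B (Sum.inr j) 0 = 0) (hBw1 : ∀ j, B (Sum.inr j) 1 = φw j)
    (Mhat : Matrix (Fin n ⊕ Fin m) (Fin (n+1) ⊕ Fin (m+1)) ℝ)
    (hMhatp : ∀ (i : Fin n) t, Mhat (Sum.inl i) t = M (Sum.inl i.castSucc) t)
    (hMhatw : ∀ (j : Fin m) t, Mhat (Sum.inr j) t = M (Sum.inr j.castSucc) t)
    (chat : Fin n ⊕ Fin m → ℝ)
    (hchatp : ∀ i : Fin n, chat (Sum.inl i) = cp i.castSucc)
    (hchatw : ∀ j : Fin m, chat (Sum.inr j) = cw j.castSucc)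
    (dhat : Fin n ⊕ Fin m → ℝ)
    (hdhatp : ∀ i : Fin n, dhat (Sum.inl i) = ψp i.castSucc)
    (hdhatw : ∀ j : Fin m, dhat (Sum.inr j) = ψw j.castSucc)
    (bhat : Fin n ⊕ Fin m → ℝ)
    (hbhatp : ∀ i : Fin n, bhat (Sum.inl i) = φp i.castSucc)
    (hbhatw : ∀ j : Fin m, bhat (Sum.inr j) = φw j.castSucc)
    (K : Matrix ((Fin n ⊕ Fin m) ⊕ Fin 2) (Fin (n+1) ⊕ Fin (m+1)) ℝ)
    (hKM : ∀ s t, K (Sum.inl s) t = Mhat s t)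
    (hKB : ∀ (u : Fin 2) t, K (Sum.inr u) t = B t u)
    (K' : Matrix (Fin (n+1) ⊕ Fin (m+1)) ((Fin n ⊕ Fin m) ⊕ Fin 2) ℝ)
    (hKK' : K * K' = 1) (hK'K : K' * K = 1)
    (a : ℝ) (ha : 0 < a)
    (F : (Fin (n+1) → ℝ) → (Fin (m+1) → ℝ) → ℝ)
    (hF : ∀ (xP : Fin (n+1) → ℝ) (xW : Fin (m+1) → ℝ), F xP xW =
      (∑ i, ∑ k, ∑ j, ψ i k j * (y i k + xP i + xW j)) -
      a * (∑ i, ∑ k, ∑ j, ψ i k j *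
        (y i k + xP i + xW j - ∑ i', ∑ k', ∑ j', ψ i' k' j' * (y i' k' + xP i' + xW j'))^2))
    (xa : Fin (n+1) ⊕ Fin (m+1) → ℝ)
    (hxa : xa = K'.mulVec
      (Sum.elim (fun s => chat s + (1/(2*a)) * (dhat s - bhat s)) (fun _ => 0)))
    (xaP : Fin (n+1) → ℝ) (hxaP : ∀ i, xaP i = xa (Sum.inl i))
    (xaW : Fin (m+1) → ℝ) (hxaW : ∀ j, xaW j = xa (Sum.inr j)) :
    ((∑ i, φp i * xaP i) = 0 ∧ (∑ j, φw j * xaW j) = 0) ∧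
    (∀ (xP : Fin (n+1) → ℝ) (xW : Fin (m+1) → ℝ),
      (∑ i, φp i * xP i) = 0 → (∑ j, φw j * xW j) = 0 → F xP xW ≤ F xaP xaW) ∧
    (∀ (xP : Fin (n+1) → ℝ) (xW : Fin (m+1) → ℝ),
      (∑ i, φp i * xP i) = 0 → (∑ j, φw j * xW j) = 0 →
      (∀ (xP' : Fin (n+1) → ℝ) (xW' : Fin (m+1) → ℝ),
        (∑ i, φp i * xP' i) = 0 → (∑ j, φw j * xW' j) = 0 → F xP' xW' ≤ F xP xW) →
      xP = xaP ∧ xW = xaW) := by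
  classical
  -- basic normalization facts
  have h1p : ∑ i, ψp i = 1 := by simp only [hψp]; exact hψ1
  have h1w : ∑ j, ψw j = 1 := by simp only [hψw]; rw [← sum_rot ψ]; exact hψ1
  have hφpsum : ∑ i, φp i = 1 := by simp only [hφp]; exact hφ1
  have hφwsum : ∑ j, φw j = 1 := by
    simp only [hφw]; rw [← Finset.sum_comm]; exact hφ1
  have hcpsum : ∑ i, cp i = 0 := by
    simp only [hcp, Finset.sum_sub_distrib, ← Finset.mul_sum, h1p]
    simp only [hvp]; rw [← hμy]; ring
  have hcwsum : ∑ j, cw j = 0 := by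
    simp only [hcw, Finset.sum_sub_distrib, ← Finset.mul_sum, h1w]
    simp only [hvw]
    rw [← sum_rot (fun i k j => ψ i k j * y i k), ← hμy]; ring
  have ha2 : (2*a) ≠ 0 := by positivity
  -- closed forms for gPf / gWf
  have hgP : ∀ (uP : Fin (n+1) → ℝ) (uW : Fin (m+1) → ℝ) (i : Fin (n+1)),
      gPf ψ ψp ψw uP uW i
        = ψp i * uP i + (∑ j, ψpw i j * uW j) - ψp i * mval ψp ψw uP uW := by
    intro uP uW i
    have key : ∀ (k : Fin l) (j : Fin (m+1)),
        ψ i k j * (uP i + uW j - mval ψp ψw uP uW)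
          = ψ i k j * uP i + ψ i k j * uW j - ψ i k j * mval ψp ψw uP uW :=
      fun k j => by ring
    simp only [gPf, key, Finset.sum_add_distrib, Finset.sum_sub_distrib]
    rw [show (∑ k, ∑ j, ψ i k j * uW j) = ∑ j, ∑ k, ψ i k j * uW j from Finset.sum_comm]
    simp only [← Finset.sum_mul, ← hψp, ← hψpw]
  have hgW : ∀ (uP : Fin (n+1) → ℝ) (uW : Fin (m+1) → ℝ) (j : Fin (m+1)),
      gWf ψ ψp ψw uP uW j
        = (∑ i, ψpw i j * uP i) + ψw j * uW j - ψw j * mval ψp ψw uP uW := by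
    intro uP uW j
    have key : ∀ (i : Fin (n+1)) (k : Fin l),
        ψ i k j * (uP i + uW j - mval ψp ψw uP uW)
          = ψ i k j * uP i + ψ i k j * uW j - ψ i k j * mval ψp ψw uP uW :=
      fun i k => by ring
    simp only [gWf, key, Finset.sum_add_distrib, Finset.sum_sub_distrib]
    simp only [← Finset.sum_mul, ← hψpw]
    rw [show (∑ i, ψpw i j) = ψw j from by
      simp only [hψpw]; exact (hψw j).symm]
  -- matrix rows compute gPf / gWf
  have hrowP : ∀ (u : (Fin (n+1) ⊕ Fin (m+1)) → ℝ) (i : Fin (n+1)),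
      (∑ t, M (Sum.inl i) t * u t)
        = gPf ψ ψp ψw (fun i' => u (Sum.inl i')) (fun j' => u (Sum.inr j')) i := by
    intro u i
    rw [Fintype.sum_sum_type, hgP]
    simp only [hMpp, hMpw, sub_mul, Finset.sum_sub_distrib, ite_mul, zero_mul,
      Finset.sum_ite_eq, Finset.mem_univ, if_true, mval]
    simp only [mul_assoc, ← Finset.mul_sum]
    ring
  have hrowW : ∀ (u : (Fin (n+1) ⊕ Fin (m+1)) → ℝ) (j : Fin (m+1)),
      (∑ t, M (Sum.inr j) t * u t)
        = gWf ψ ψp ψw (fun i' => u (Sum.inl i')) (fun j' => u (Sum.inr j')) j := by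
    intro u j
    rw [Fintype.sum_sum_type, hgW]
    simp only [hMwp, hMww, sub_mul, Finset.sum_sub_distrib, ite_mul, zero_mul,
      Finset.sum_ite_eq, Finset.mem_univ, if_true, mval]
    simp only [mul_assoc, ← Finset.mul_sum]
    rw [show (∑ x : Fin (n+1), ψp x * (ψw j * u (Sum.inl x)))
        = ψw j * ∑ x : Fin (n+1), ψp x * u (Sum.inl x) from by
      rw [Finset.mul_sum]; exact Finset.sum_congr rfl fun x _ => by ring]
    ring
  -- K applied to xa
  have hKxa : K.mulVec xa
      = Sum.elim (fun s => chat s + (1/(2*a)) * (dhat s - bhat s)) (fun _ => 0) := by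
    rw [hxa, Matrix.mulVec_mulVec, hKK', Matrix.one_mulVec]
  have hxaPe : (fun i => xa (Sum.inl i)) = xaP := funext fun i => (hxaP i).symm
  have hxaWe : (fun j => xa (Sum.inr j)) = xaW := funext fun j => (hxaW j).symm
  -- feasibility of xa
  have hfeasP : ∑ i, φp i * xaP i = 0 := by
    have h := congrFun hKxa (Sum.inr 0)
    simp only [Matrix.mulVec, dotProduct, Fintype.sum_sum_type, hKB, hBp0, hBw0,
      Sum.elim_inr, zero_mul, Finset.sum_const_zero, add_zero] at h
    simpa [hxaP] using h
  have hfeasW : ∑ j, φw j * xaW j = 0 := by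
    have h := congrFun hKxa (Sum.inr 1)
    simp only [Matrix.mulVec, dotProduct, Fintype.sum_sum_type, hKB, hBp1, hBw1,
      Sum.elim_inr, zero_mul, Finset.sum_const_zero, zero_add] at h
    simpa [hxaW] using h
  -- stationarity
  have hstatP : ∀ i : Fin (n+1),
      gPf ψ ψp ψw xaP xaW i = cp i + (1/(2*a)) * (ψp i - φp i) := by
    have hcs : ∀ i : Fin n,
        gPf ψ ψp ψw xaP xaW i.castSucc
          = cp i.castSucc + (1/(2*a)) * (ψp i.castSucc - φp i.castSucc) := by
      intro i
      have h := congrFun hKxa (Sum.inl (Sum.inl i))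
      simp only [Matrix.mulVec, dotProduct, hKM, hMhatp, Sum.elim_inl,
        hchatp, hdhatp, hbhatp] at h
      rw [hrowP xa i.castSucc, hxaPe, hxaWe] at h
      exact h
    intro i
    induction i using Fin.lastCases with
    | cast i => exact hcs i
    | last =>
      have hsum0 : ∑ i, gPf ψ ψp ψw xaP xaW i = 0 :=
        gPf_sum ψ hψ1 ψp hψp ψw hψw xaP xaW
      have hsum1 : ∑ i : Fin (n+1), (cp i + (1/(2*a)) * (ψp i - φp i)) = 0 := by
        simp only [Finset.sum_add_distrib, Finset.sum_sub_distrib, ← Finset.mul_sum,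
          hcpsum, h1p, hφpsum]
        ring
      rw [Fin.sum_univ_castSucc] at hsum0 hsum1
      have e : ∑ i : Fin n, gPf ψ ψp ψw xaP xaW i.castSucc
          = ∑ i : Fin n, (cp i.castSucc + (1/(2*a)) * (ψp i.castSucc - φp i.castSucc)) :=
        Finset.sum_congr rfl fun i _ => hcs i
      linarith
  have hstatW : ∀ j : Fin (m+1),
      gWf ψ ψp ψw xaP xaW j = cw j + (1/(2*a)) * (ψw j - φw j) := by
    have hcs : ∀ j : Fin m,
        gWf ψ ψp ψw xaP xaW j.castSucc
          = cw j.castSucc + (1/(2*a)) * (ψw j.castSucc - φw j.castSucc) := by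
      intro j
      have h := congrFun hKxa (Sum.inl (Sum.inr j))
      simp only [Matrix.mulVec, dotProduct, hKM, hMhatw, Sum.elim_inl,
        hchatw, hdhatw, hbhatw] at h
      rw [hrowW xa j.castSucc, hxaPe, hxaWe] at h
      exact h
    intro j
    induction j using Fin.lastCases with
    | cast j => exact hcs j
    | last =>
      have hsum0 : ∑ j, gWf ψ ψp ψw xaP xaW j = 0 :=
        gWf_sum ψ hψ1 ψp hψp ψw hψw xaP xaW
      have hsum1 : ∑ j : Fin (m+1), (cw j + (1/(2*a)) * (ψw j - φw j)) = 0 := by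
        simp only [Finset.sum_add_distrib, Finset.sum_sub_distrib, ← Finset.mul_sum,
          hcwsum, h1w, hφwsum]
        ring
      rw [Fin.sum_univ_castSucc] at hsum0 hsum1
      have e : ∑ j : Fin m, gWf ψ ψp ψw xaP xaW j.castSucc
          = ∑ j : Fin m, (cw j.castSucc + (1/(2*a)) * (ψw j.castSucc - φw j.castSucc)) :=
        Finset.sum_congr rfl fun j _ => hcs j
      linarith
  -- expansion of F
  have hFe : ∀ (xP : Fin (n+1) → ℝ) (xW : Fin (m+1) → ℝ),
      F xP xW = (μy - a*σy2) + (∑ i, (ψp i + 2*a*cp i) * xP i)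
        + (∑ j, (ψw j + 2*a*cw j) * xW j) - a * qf ψ ψp ψw xP xW := by
    intro xP xW
    rw [hF]
    exact Fexp ψ hψ1 ψp hψp ψw hψw y μy hμy σy2 hσy2 vp hvp vw hvw cp hcp cw hcw a xP xW
  -- master identity
  have hmaster : ∀ (xP : Fin (n+1) → ℝ) (xW : Fin (m+1) → ℝ),
      F xP xW = F xaP xaW + ((∑ i, φp i * xP i) - ∑ i, φp i * xaP i)
        + ((∑ j, φw j * xW j) - ∑ j, φw j * xaW j)
        - a * qf ψ ψp ψw (fun i => xP i - xaP i) (fun j => xW j - xaW j) := by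
    intro xP xW
    have hx : xP = fun i => xaP i + (xP i - xaP i) := by funext i; ring
    have hw' : xW = fun j => xaW j + (xW j - xaW j) := by funext j; ring
    have hq : qf ψ ψp ψw xP xW
        = qf ψ ψp ψw xaP xaW
          + 2 * bil ψ ψp ψw xaP xaW (fun i => xP i - xaP i) (fun j => xW j - xaW j)
          + qf ψ ψp ψw (fun i => xP i - xaP i) (fun j => xW j - xaW j) := by
      conv_lhs => rw [hx, hw']
      exact qf_expand ψ ψp ψw xaP _ xaW _
    have hb : bil ψ ψp ψw xaP xaW (fun i => xP i - xaP i) (fun j => xW j - xaW j)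
        = (∑ i, (cp i + (1/(2*a)) * (ψp i - φp i)) * (xP i - xaP i))
          + ∑ j, (cw j + (1/(2*a)) * (ψw j - φw j)) * (xW j - xaW j) := by
      rw [bil_eq ψ hψ1 ψp hψp ψw hψw xaP _ xaW _]
      congr 1
      · exact Finset.sum_congr rfl fun i _ => by rw [hstatP i]
      · exact Finset.sum_congr rfl fun j _ => by rw [hstatW j]
    have hcomb1 : (∑ i, (ψp i + 2*a*cp i) * xP i) - (∑ i, (ψp i + 2*a*cp i) * xaP i)
        - 2*a*(∑ i, (cp i + (1/(2*a)) * (ψp i - φp i)) * (xP i - xaP i))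
        = (∑ i, φp i * xP i) - ∑ i, φp i * xaP i := by
      rw [Finset.mul_sum, ← Finset.sum_sub_distrib, ← Finset.sum_sub_distrib,
        ← Finset.sum_sub_distrib]
      refine Finset.sum_congr rfl fun i _ => ?_
      field_simp
      ring
    have hcomb2 : (∑ j, (ψw j + 2*a*cw j) * xW j) - (∑ j, (ψw j + 2*a*cw j) * xaW j)
        - 2*a*(∑ j, (cw j + (1/(2*a)) * (ψw j - φw j)) * (xW j - xaW j))
        = (∑ j, φw j * xW j) - ∑ j, φw j * xaW j := by
      rw [Finset.mul_sum, ← Finset.sum_sub_distrib, ← Finset.sum_sub_distrib,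
        ← Finset.sum_sub_distrib]
      refine Finset.sum_congr rfl fun j _ => ?_
      field_simp
      ring
    rw [hFe xP xW, hFe xaP xaW, hq, hb]
    linear_combination hcomb1 + hcomb2
  refine ⟨⟨hfeasP, hfeasW⟩, ?_, ?_⟩
  · intro xP xW hxp hxw
    have hm := hmaster xP xW
    rw [hxp, hfeasP, hxw, hfeasW] at hm
    have hqn := qf_nonneg ψ hψ0 ψp ψw (fun i => xP i - xaP i) (fun j => xW j - xaW j)
    have := mul_nonneg ha.le hqn
    linarith
  · intro xP xW hxp hxw hmax
    have hle := hmax xaP xaW hfeasP hfeasW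
    have hm := hmaster xP xW
    rw [hxp, hfeasP, hxw, hfeasW] at hm
    have hqn := qf_nonneg ψ hψ0 ψp ψw (fun i => xP i - xaP i) (fun j => xW j - xaW j)
    have hq0 : qf ψ ψp ψw (fun i => xP i - xaP i) (fun j => xW j - xaW j) = 0 := by
      have h1 : a * qf ψ ψp ψw (fun i => xP i - xaP i) (fun j => xW j - xaW j) ≤ 0 := by
        linarith
      have h2 := mul_nonneg ha.le hqn
      rcases mul_eq_zero.mp (le_antisymm h1 h2) with h | h
      · exact absurd h ha.ne'
      · exact h
    obtain ⟨hgp0, hgw0⟩ := qf_zero ψ hψ0 ψp ψw _ _ hq0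
    have hfp : ∑ i, φp i * (xP i - xaP i) = 0 := by
      simp only [mul_sub, Finset.sum_sub_distrib, hxp, hfeasP]; ring
    have hfw : ∑ j, φw j * (xW j - xaW j) = 0 := by
      simp only [mul_sub, Finset.sum_sub_distrib, hxw, hfeasW]; ring
    set hv : (Fin (n+1) ⊕ Fin (m+1)) → ℝ :=
      Sum.elim (fun i => xP i - xaP i) (fun j => xW j - xaW j) with hhv
    have hvP : (fun i' => hv (Sum.inl i')) = fun i => xP i - xaP i := by
      funext i'; simp [hhv]
    have hvW : (fun j' => hv (Sum.inr j')) = fun j => xW j - xaW j := by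
      funext j'; simp [hhv]
    have hK0 : K.mulVec hv = 0 := by
      funext t
      match t with
      | Sum.inl (Sum.inl i) =>
        show ∑ t, K (Sum.inl (Sum.inl i)) t * hv t = 0
        simp only [hKM, hMhatp]
        rw [hrowP hv i.castSucc, hvP, hvW]
        exact hgp0 i.castSucc
      | Sum.inl (Sum.inr j) =>
        show ∑ t, K (Sum.inl (Sum.inr j)) t * hv t = 0
        simp only [hKM, hMhatw]
        rw [hrowW hv j.castSucc, hvP, hvW]
        exact hgw0 j.castSucc
      | Sum.inr u =>
        show ∑ t, K (Sum.inr u) t * hv t = 0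
        fin_cases u
        · show ∑ t, K (Sum.inr 0) t * hv t = 0
          simp only [hKB, Fintype.sum_sum_type, hBp0, hBw0, hhv, Sum.elim_inl,
            Sum.elim_inr, zero_mul, Finset.sum_const_zero, add_zero]
          exact hfp
        · show ∑ t, K (Sum.inr 1) t * hv t = 0
          simp only [hKB, Fintype.sum_sum_type, hBp1, hBw1, hhv, Sum.elim_inl,
            Sum.elim_inr, zero_mul, Finset.sum_const_zero, zero_add]
          exact hfw
    have hv0 : hv = 0 := by
      have h := congrArg (fun v => K'.mulVec v) hK0
      simp only [Matrix.mulVec_mulVec, hK'K, Matrix.one_mulVec, Matrix.mulVec_zero] at h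
      exact h
    constructor
    · funext i
      have h := congrFun hv0 (Sum.inl i)
      simp only [hhv, Sum.elim_inl, Pi.zero_apply] at h
      linarith
    · funext j
      have h := congrFun hv0 (Sum.inr j)
      simp only [hhv, Sum.elim_inr, Pi.zero_apply] at h
      linarith
end

section
/- Two-fund theorem: Assume K (the matrix obtained by stacking M̂ on top of B^T) is invertible, and define x^o = K^{-1} · (d̂ − b̂, 0, 0) and x^∞ = K^{-1} · (ĉ, 0, 0). Then for every a > 0, the unique optimal solution x^a of the hedging problem satisfies x^a = x^∞ + (1/(2a)) x^o. -/
open Finset Matrix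

lemma tf_sum2_mul {α β : Type*} [Fintype α] [Fintype β] (f : α → β → ℝ) (c : ℝ) :
    (∑ i, ∑ j, f i j) * c = ∑ i, ∑ j, f i j * c := by
  rw [Finset.sum_mul]
  exact Finset.sum_congr rfl fun i _ => Finset.sum_mul _ _ _

lemma tf_split4 {α : Type*} [Fintype α] (f g h k : α → ℝ) :
    ∑ i, (f i - g i + h i - k i) = (∑ i, f i) - (∑ i, g i) + (∑ i, h i) - (∑ i, k i) := by
  rw [Finset.sum_sub_distrib, Finset.sum_add_distrib, Finset.sum_sub_distrib]

lemma tf_add3 {α β γ : Type*} [Fintype α] [Fintype β] [Fintype γ] (f g : α → β → γ → ℝ) :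
    ∑ i, ∑ k, ∑ j, (f i k j + g i k j)
      = (∑ i, ∑ k, ∑ j, f i k j) + ∑ i, ∑ k, ∑ j, g i k j := by
  simp_rw [Finset.sum_add_distrib]

lemma tf_sub3 {α β γ : Type*} [Fintype α] [Fintype β] [Fintype γ] (f g : α → β → γ → ℝ) :
    ∑ i, ∑ k, ∑ j, (f i k j - g i k j)
      = (∑ i, ∑ k, ∑ j, f i k j) - ∑ i, ∑ k, ∑ j, g i k j := by
  simp_rw [Finset.sum_sub_distrib]

lemma tf_mul3 {α β γ : Type*} [Fintype α] [Fintype β] [Fintype γ] (c : ℝ) (f : α → β → γ → ℝ) :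
    ∑ i, ∑ k, ∑ j, c * f i k j = c * ∑ i, ∑ k, ∑ j, f i k j := by
  rw [Finset.mul_sum]
  refine Finset.sum_congr rfl fun i _ => ?_
  rw [Finset.mul_sum]
  exact Finset.sum_congr rfl fun k _ => (Finset.mul_sum _ _ _).symm

lemma tf_mulVec_lin {ρ σ : Type*} [Fintype σ] (A : Matrix ρ σ ℝ) (v w : σ → ℝ) (c : ℝ) (s : ρ) :
    A.mulVec (fun t => v t + c * w t) s = A.mulVec v s + c * A.mulVec w s := by
  show ∑ t, A s t * (v t + c * w t) = (∑ t, A s t * v t) + c * ∑ t, A s t * w t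
  rw [Finset.mul_sum, ← Finset.sum_add_distrib]
  exact Finset.sum_congr rfl fun t _ => by ring

lemma tf_mulVec_sub {ρ σ : Type*} [Fintype σ] (A : Matrix ρ σ ℝ) (v w : σ → ℝ) (s : ρ) :
    A.mulVec (fun t => v t - w t) s = A.mulVec v s - A.mulVec w s := by
  show ∑ t, A s t * (v t - w t) = (∑ t, A s t * v t) - ∑ t, A s t * w t
  rw [← Finset.sum_sub_distrib]
  exact Finset.sum_congr rfl fun t _ => by ring

lemma tf_dot_sub {σ : Type*} [Fintype σ] (v w u : σ → ℝ) :
    (fun t => v t - w t) ⬝ᵥ u = v ⬝ᵥ u - w ⬝ᵥ u := by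
  show ∑ t, (v t - w t) * u t = (∑ t, v t * u t) - ∑ t, w t * u t
  rw [← Finset.sum_sub_distrib]
  exact Finset.sum_congr rfl fun t _ => by ring

set_option maxHeartbeats 4000000 in
theorem stmt_14 (n m l : ℕ) (hl : 1 ≤ l)
    (p : Fin (n+1) → ℝ) (q : Fin l → ℝ) (w : Fin (m+1) → ℝ)
    (ψ : Fin (n+1) → Fin l → Fin (m+1) → ℝ)
    (hψ0 : ∀ i k j, 0 ≤ ψ i k j)
    (hψ1 : ∑ i, ∑ k, ∑ j, ψ i k j = 1)
    (ψp : Fin (n+1) → ℝ) (hψp : ∀ i, ψp i = ∑ k, ∑ j, ψ i k j)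
    (ψw : Fin (m+1) → ℝ) (hψw : ∀ j, ψw j = ∑ i, ∑ k, ψ i k j)
    (ψpw : Matrix (Fin (n+1)) (Fin (m+1)) ℝ) (hψpw : ∀ i j, ψpw i j = ∑ k, ψ i k j)
    (r : ℝ) (y : Fin (n+1) → Fin l → ℝ) (hy : ∀ i k, y i k = (r - p i) * q k)
    (μy : ℝ) (hμy : μy = ∑ i, ∑ k, ∑ j, ψ i k j * y i k)
    (σy2 : ℝ) (hσy2 : σy2 = ∑ i, ∑ k, ∑ j, ψ i k j * (y i k - μy)^2)
    (vp : Fin (n+1) → ℝ) (hvp : ∀ i, vp i = ∑ k, ∑ j, ψ i k j * y i k)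
    (vw : Fin (m+1) → ℝ) (hvw : ∀ j, vw j = ∑ i, ∑ k, ψ i k j * y i k)
    (cp : Fin (n+1) → ℝ) (hcp : ∀ i, cp i = μy * ψp i - vp i)
    (cw : Fin (m+1) → ℝ) (hcw : ∀ j, cw j = μy * ψw j - vw j)
    (M : Matrix (Fin (n+1) ⊕ Fin (m+1)) (Fin (n+1) ⊕ Fin (m+1)) ℝ)
    (hMpp : ∀ i i', M (Sum.inl i) (Sum.inl i') = (if i = i' then ψp i else 0) - ψp i * ψp i')
    (hMww : ∀ j j', M (Sum.inr j) (Sum.inr j') = (if j = j' then ψw j else 0) - ψw j * ψw j')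
    (hMpw : ∀ i j, M (Sum.inl i) (Sum.inr j) = ψpw i j - ψp i * ψw j)
    (hMwp : ∀ i j, M (Sum.inr j) (Sum.inl i) = ψpw i j - ψp i * ψw j)
    (φ : Fin (n+1) → Fin (m+1) → ℝ)
    (hφ0 : ∀ i j, 0 ≤ φ i j) (hφ1 : ∑ i, ∑ j, φ i j = 1)
    (φp : Fin (n+1) → ℝ) (hφp : ∀ i, φp i = ∑ j, φ i j)
    (φw : Fin (m+1) → ℝ) (hφw : ∀ j, φw j = ∑ i, φ i j)
    (B : Matrix (Fin (n+1) ⊕ Fin (m+1)) (Fin 2) ℝ)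
    (hBp0 : ∀ i, B (Sum.inl i) 0 = φp i) (hBp1 : ∀ i, B (Sum.inl i) 1 = 0)
    (hBw0 : ∀ j, B (Sum.inr j) 0 = 0) (hBw1 : ∀ j, B (Sum.inr j) 1 = φw j)
    (Mhat : Matrix (Fin n ⊕ Fin m) (Fin (n+1) ⊕ Fin (m+1)) ℝ)
    (hMhatp : ∀ (i : Fin n) t, Mhat (Sum.inl i) t = M (Sum.inl i.castSucc) t)
    (hMhatw : ∀ (j : Fin m) t, Mhat (Sum.inr j) t = M (Sum.inr j.castSucc) t)
    (chat : Fin n ⊕ Fin m → ℝ)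
    (hchatp : ∀ i : Fin n, chat (Sum.inl i) = cp i.castSucc)
    (hchatw : ∀ j : Fin m, chat (Sum.inr j) = cw j.castSucc)
    (dhat : Fin n ⊕ Fin m → ℝ)
    (hdhatp : ∀ i : Fin n, dhat (Sum.inl i) = ψp i.castSucc)
    (hdhatw : ∀ j : Fin m, dhat (Sum.inr j) = ψw j.castSucc)
    (bhat : Fin n ⊕ Fin m → ℝ)
    (hbhatp : ∀ i : Fin n, bhat (Sum.inl i) = φp i.castSucc)
    (hbhatw : ∀ j : Fin m, bhat (Sum.inr j) = φw j.castSucc)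
    (K : Matrix ((Fin n ⊕ Fin m) ⊕ Fin 2) (Fin (n+1) ⊕ Fin (m+1)) ℝ)
    (hKM : ∀ s t, K (Sum.inl s) t = Mhat s t)
    (hKB : ∀ (u : Fin 2) t, K (Sum.inr u) t = B t u)
    (K' : Matrix (Fin (n+1) ⊕ Fin (m+1)) ((Fin n ⊕ Fin m) ⊕ Fin 2) ℝ)
    (hKK' : K * K' = 1) (hK'K : K' * K = 1)
    (F : ℝ → (Fin (n+1) → ℝ) → (Fin (m+1) → ℝ) → ℝ)
    (hF : ∀ (a : ℝ) (xP : Fin (n+1) → ℝ) (xW : Fin (m+1) → ℝ), F a xP xW =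
      (∑ i, ∑ k, ∑ j, ψ i k j * (y i k + xP i + xW j)) -
      a * (∑ i, ∑ k, ∑ j, ψ i k j *
        (y i k + xP i + xW j - ∑ i', ∑ k', ∑ j', ψ i' k' j' * (y i' k' + xP i' + xW j'))^2))
    (xo : Fin (n+1) ⊕ Fin (m+1) → ℝ)
    (hxo : xo = K'.mulVec (Sum.elim (fun s => dhat s - bhat s) (fun _ => 0)))
    (xInf : Fin (n+1) ⊕ Fin (m+1) → ℝ)
    (hxInf : xInf = K'.mulVec (Sum.elim chat (fun _ => 0))) :
    ∀ a : ℝ, 0 < a →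
      ((∑ i, φp i * (xInf (Sum.inl i) + (1/(2*a)) * xo (Sum.inl i))) = 0 ∧
       (∑ j, φw j * (xInf (Sum.inr j) + (1/(2*a)) * xo (Sum.inr j))) = 0 ∧
       (∀ (xP : Fin (n+1) → ℝ) (xW : Fin (m+1) → ℝ),
         (∑ i, φp i * xP i) = 0 → (∑ j, φw j * xW j) = 0 →
         F a xP xW ≤ F a (fun i => xInf (Sum.inl i) + (1/(2*a)) * xo (Sum.inl i))
                        (fun j => xInf (Sum.inr j) + (1/(2*a)) * xo (Sum.inr j)))) ∧
      (∀ (xP : Fin (n+1) → ℝ) (xW : Fin (m+1) → ℝ),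
        (∑ i, φp i * xP i) = 0 → (∑ j, φw j * xW j) = 0 →
        (∀ (xP' : Fin (n+1) → ℝ) (xW' : Fin (m+1) → ℝ),
          (∑ i, φp i * xP' i) = 0 → (∑ j, φw j * xW' j) = 0 → F a xP' xW' ≤ F a xP xW) →
        Sum.elim xP xW = fun s => xInf s + (1/(2*a)) * xo s) := by
  
  intro a ha
  have ha2 : (2*a) ≠ 0 := by positivity
  -- triple sum reorder
  have swap3 : ∀ (g : Fin (n+1) → Fin l → Fin (m+1) → ℝ),
      (∑ i, ∑ k, ∑ j, g i k j) = ∑ j, ∑ i, ∑ k, g i k j := by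
    intro g
    rw [show (∑ i, ∑ k, ∑ j, g i k j) = ∑ i, ∑ j, ∑ k, g i k j from
      Finset.sum_congr rfl fun i _ => Finset.sum_comm]
    exact Finset.sum_comm
  -- basic marginal facts
  have hψpsum : ∑ i, ψp i = 1 := by simp_rw [hψp]; exact hψ1
  have hψwsum : ∑ j, ψw j = 1 := by simp_rw [hψw]; rw [← swap3]; exact hψ1
  have hφpsum : ∑ i, φp i = 1 := by simp_rw [hφp]; exact hφ1
  have hφwsum : ∑ j, φw j = 1 := by simp_rw [hφw]; rw [Finset.sum_comm]; exact hφ1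
  have hvpsum : ∑ i, vp i = μy := by simp_rw [hvp]; exact hμy.symm
  have hvwsum : ∑ j, vw j = μy := by
    simp_rw [hvw]; rw [← swap3]; exact hμy.symm
  have hcpsum : ∑ i, cp i = 0 := by
    simp_rw [hcp]; rw [Finset.sum_sub_distrib, ← Finset.mul_sum, hψpsum, hvpsum]; ring
  have hcwsum : ∑ j, cw j = 0 := by
    simp_rw [hcw]; rw [Finset.sum_sub_distrib, ← Finset.mul_sum, hψwsum, hvwsum]; ring
  have hψpwrow : ∀ i, ∑ j, ψpw i j = ψp i := by
    intro i; simp_rw [hψpw, hψp]; exact Finset.sum_comm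
  have hψpwcol : ∀ j, ∑ i, ψpw i j = ψw j := by
    intro j; simp_rw [hψpw, hψw]
  -- row formulas for M.mulVec
  have hMrowP : ∀ (e : Fin (n+1) ⊕ Fin (m+1) → ℝ) (i : Fin (n+1)),
      M.mulVec e (Sum.inl i) = ψp i * e (Sum.inl i)
        - ψp i * (∑ i', ψp i' * e (Sum.inl i'))
        + (∑ j, ψpw i j * e (Sum.inr j))
        - ψp i * (∑ j, ψw j * e (Sum.inr j)) := by
    intro e i
    show ∑ t, M (Sum.inl i) t * e t = _
    rw [Fintype.sum_sum_type]
    simp_rw [hMpp, hMpw, sub_mul, ite_mul, zero_mul, Finset.sum_sub_distrib,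
      Finset.sum_ite_eq, Finset.mem_univ, if_true, mul_assoc, ← Finset.mul_sum]
    ring
  have hMrowW : ∀ (e : Fin (n+1) ⊕ Fin (m+1) → ℝ) (j : Fin (m+1)),
      M.mulVec e (Sum.inr j) = ψw j * e (Sum.inr j)
        - ψw j * (∑ j', ψw j' * e (Sum.inr j'))
        + (∑ i, ψpw i j * e (Sum.inl i))
        - ψw j * (∑ i, ψp i * e (Sum.inl i)) := by
    intro e j
    show ∑ t, M (Sum.inr j) t * e t = _
    rw [Fintype.sum_sum_type]
    have h1 : ∑ i, M (Sum.inr j) (Sum.inl i) * e (Sum.inl i)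
        = (∑ i, ψpw i j * e (Sum.inl i)) - ψw j * ∑ i, ψp i * e (Sum.inl i) := by
      rw [Finset.mul_sum, ← Finset.sum_sub_distrib]
      exact Finset.sum_congr rfl fun i _ => by rw [hMwp]; ring
    have h2 : ∑ j', M (Sum.inr j) (Sum.inr j') * e (Sum.inr j')
        = ψw j * e (Sum.inr j) - ψw j * ∑ j', ψw j' * e (Sum.inr j') := by
      have hpt : ∀ j', M (Sum.inr j) (Sum.inr j') * e (Sum.inr j')
          = (if j = j' then ψw j' * e (Sum.inr j') else 0)
            - ψw j * (ψw j' * e (Sum.inr j')) := fun j' => by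
        rw [hMww]; split <;> rename_i h
        · rw [h]; ring
        · ring
      simp_rw [hpt, Finset.sum_sub_distrib, Finset.sum_ite_eq, Finset.mem_univ,
        if_true, ← Finset.mul_sum]
    rw [h1, h2]
    ring
  -- rows of M sum to zero
  have hMsumP : ∀ (e : Fin (n+1) ⊕ Fin (m+1) → ℝ),
      ∑ i, M.mulVec e (Sum.inl i) = 0 := by
    intro e
    simp_rw [hMrowP]
    rw [Finset.sum_sub_distrib, Finset.sum_add_distrib, Finset.sum_sub_distrib,
      ← Finset.sum_mul, ← Finset.sum_mul, hψpsum]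
    have : ∑ i, ∑ j, ψpw i j * e (Sum.inr j)
        = ∑ j, ψw j * e (Sum.inr j) := by
      rw [Finset.sum_comm]
      refine Finset.sum_congr rfl fun j _ => ?_
      rw [← Finset.sum_mul, hψpwcol]
    rw [this]
    ring_nf
  have hMsumW : ∀ (e : Fin (n+1) ⊕ Fin (m+1) → ℝ),
      ∑ j, M.mulVec e (Sum.inr j) = 0 := by
    intro e
    simp_rw [hMrowW]
    rw [Finset.sum_sub_distrib, Finset.sum_add_distrib, Finset.sum_sub_distrib,
      ← Finset.sum_mul, ← Finset.sum_mul, hψwsum]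
    have : ∑ j, ∑ i, ψpw i j * e (Sum.inl i)
        = ∑ i, ψp i * e (Sum.inl i) := by
      rw [Finset.sum_comm]
      refine Finset.sum_congr rfl fun i _ => ?_
      rw [← Finset.sum_mul, hψpwrow]
    rw [this]
    ring_nf
  -- symmetry of M
  have hMsym : ∀ s t, M s t = M t s := by
    rintro (i | j) (i' | j')
    · rw [hMpp, hMpp]
      rcases eq_or_ne i i' with h | h
      · subst h; simp [mul_comm]
      · simp [h, Ne.symm h, mul_comm]
    · rw [hMpw, hMwp]
    · rw [hMwp, hMpw]
    · rw [hMww, hMww]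
      rcases eq_or_ne j j' with h | h
      · subst h; simp [mul_comm]
      · simp [h, Ne.symm h, mul_comm]
  -- symmetry of the quadratic pairing
  have hsymdot : ∀ v w : Fin (n+1) ⊕ Fin (m+1) → ℝ,
      v ⬝ᵥ M.mulVec w = w ⬝ᵥ M.mulVec v := by
    intro v w
    show ∑ s, v s * ∑ t, M s t * w t = ∑ t, w t * ∑ s, M t s * v s
    simp_rw [Finset.mul_sum]
    rw [Finset.sum_comm]
    refine Finset.sum_congr rfl fun t _ => Finset.sum_congr rfl fun s _ => ?_
    rw [hMsym t s]; ring
  -- mean of hedged profit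
  have hmean : ∀ (xP : Fin (n+1) → ℝ) (xW : Fin (m+1) → ℝ),
      (∑ i, ∑ k, ∑ j, ψ i k j * (y i k + xP i + xW j))
        = μy + ((∑ i, ψp i * xP i) + (∑ j, ψw j * xW j)) := by
    intro xP xW
    have h1 : ∀ i k (j : Fin (m+1)), ψ i k j * (y i k + xP i + xW j)
        = ψ i k j * y i k + ψ i k j * xP i + ψ i k j * xW j := fun i k j => by ring
    simp_rw [h1, Finset.sum_add_distrib]
    have h2 : ∑ i, ∑ k, ∑ j, ψ i k j * xP i = ∑ i, ψp i * xP i := by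
      refine Finset.sum_congr rfl fun i _ => ?_
      rw [hψp, Finset.sum_mul]
      exact Finset.sum_congr rfl fun k _ => (Finset.sum_mul _ _ _).symm
    have h3 : ∑ i, ∑ k, ∑ j, ψ i k j * xW j = ∑ j, ψw j * xW j := by
      rw [swap3]
      refine Finset.sum_congr rfl fun j _ => ?_
      rw [hψw, Finset.sum_mul]
      exact Finset.sum_congr rfl fun i _ => (Finset.sum_mul _ _ _).symm
    rw [h2, h3, ← hμy]
    ring
  -- the same for u alone (no y)
  have hmeanu : ∀ (xP : Fin (n+1) → ℝ) (xW : Fin (m+1) → ℝ),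
      (∑ i, ∑ k, ∑ j, ψ i k j * (xP i + xW j))
        = (∑ i, ψp i * xP i) + (∑ j, ψw j * xW j) := by
    intro xP xW
    have h1 : ∀ i k (j : Fin (m+1)), ψ i k j * (xP i + xW j)
        = ψ i k j * xP i + ψ i k j * xW j := fun i k j => by ring
    simp_rw [h1, Finset.sum_add_distrib]
    have h2 : ∑ i, ∑ k, ∑ j, ψ i k j * xP i = ∑ i, ψp i * xP i := by
      refine Finset.sum_congr rfl fun i _ => ?_
      rw [hψp, Finset.sum_mul]
      exact Finset.sum_congr rfl fun k _ => (Finset.sum_mul _ _ _).symm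
    have h3 : ∑ i, ∑ k, ∑ j, ψ i k j * xW j = ∑ j, ψw j * xW j := by
      rw [swap3]
      refine Finset.sum_congr rfl fun j _ => ?_
      rw [hψw, Finset.sum_mul]
      exact Finset.sum_congr rfl fun i _ => (Finset.sum_mul _ _ _).symm
    rw [h2, h3]
  -- centered cross moments
  have hinP : ∀ i, ∑ k, ∑ j, ψ i k j * (y i k - μy) = vp i - μy * ψp i := by
    intro i
    rw [hvp, hψp, Finset.mul_sum, ← Finset.sum_sub_distrib]
    refine Finset.sum_congr rfl fun k _ => ?_
    rw [Finset.mul_sum, ← Finset.sum_sub_distrib]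
    exact Finset.sum_congr rfl fun j _ => by ring
  have hinW : ∀ j, ∑ i, ∑ k, ψ i k j * (y i k - μy) = vw j - μy * ψw j := by
    intro j
    rw [hvw, hψw, Finset.mul_sum, ← Finset.sum_sub_distrib]
    refine Finset.sum_congr rfl fun i _ => ?_
    rw [Finset.mul_sum, ← Finset.sum_sub_distrib]
    exact Finset.sum_congr rfl fun k _ => by ring
  have hcross0 : (∑ i, ∑ k, ∑ j, ψ i k j * (y i k - μy)) = 0 := by
    simp_rw [hinP]
    rw [Finset.sum_sub_distrib, ← Finset.mul_sum, hvpsum, hψpsum]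
    ring
  have hcrossP : ∀ (xP : Fin (n+1) → ℝ),
      (∑ i, ∑ k, ∑ j, ψ i k j * (y i k - μy) * xP i) = -(∑ i, cp i * xP i) := by
    intro xP
    rw [← Finset.sum_neg_distrib]
    refine Finset.sum_congr rfl fun i _ => ?_
    rw [← tf_sum2_mul, hinP i, hcp]
    ring
  have hcrossW : ∀ (xW : Fin (m+1) → ℝ),
      (∑ i, ∑ k, ∑ j, ψ i k j * (y i k - μy) * xW j) = -(∑ j, cw j * xW j) := by
    intro xW
    rw [swap3, ← Finset.sum_neg_distrib]
    refine Finset.sum_congr rfl fun j _ => ?_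
    rw [← tf_sum2_mul, hinW j, hcw]
    ring
  -- quadratic form identity : variance of the hedge equals the M-quadratic form
  have hQvar : ∀ (xP : Fin (n+1) → ℝ) (xW : Fin (m+1) → ℝ),
      (∑ i, ∑ k, ∑ j, ψ i k j *
          (xP i + xW j - ((∑ i', ψp i' * xP i') + (∑ j', ψw j' * xW j')))^2)
        = Sum.elim xP xW ⬝ᵥ M.mulVec (Sum.elim xP xW) := by
    intro xP xW
    have hA : ∑ i, ∑ k, ∑ j, ψ i k j * xP i ^ 2 = ∑ i, ψp i * xP i ^ 2 := by
      refine Finset.sum_congr rfl fun i _ => ?_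
      rw [← tf_sum2_mul, ← hψp]
    have hB : ∑ i, ∑ k, ∑ j, ψ i k j * (xP i * xW j)
        = ∑ i, ∑ j, ψpw i j * (xP i * xW j) := by
      refine Finset.sum_congr rfl fun i _ => ?_
      rw [Finset.sum_comm]
      refine Finset.sum_congr rfl fun j _ => ?_
      rw [hψpw, Finset.sum_mul]
    have hC : ∑ i, ∑ k, ∑ j, ψ i k j * xW j ^ 2 = ∑ j, ψw j * xW j ^ 2 := by
      rw [swap3]
      refine Finset.sum_congr rfl fun j _ => ?_
      rw [← tf_sum2_mul, ← hψw]
    have hu2 : ∑ i, ∑ k, ∑ j, ψ i k j * (xP i + xW j)^2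
        = (∑ i, ψp i * xP i ^ 2) + 2*(∑ i, ∑ j, ψpw i j * (xP i * xW j))
          + (∑ j, ψw j * xW j ^ 2) := by
      have hpt2 : ∀ i k (j : Fin (m+1)), ψ i k j * (xP i + xW j)^2
          = ψ i k j * xP i ^ 2 + 2*(ψ i k j * (xP i * xW j)) + ψ i k j * xW j ^ 2 :=
        fun i k j => by ring
      simp_rw [hpt2, Finset.sum_add_distrib, ← Finset.mul_sum]
      rw [hA, hB, hC]
    have hpt : ∀ i k (j : Fin (m+1)), ψ i k j *
          (xP i + xW j - ((∑ i', ψp i' * xP i') + (∑ j', ψw j' * xW j')))^2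
        = ψ i k j * (xP i + xW j)^2
          - 2*((∑ i', ψp i' * xP i') + (∑ j', ψw j' * xW j')) * (ψ i k j * (xP i + xW j))
          + ((∑ i', ψp i' * xP i') + (∑ j', ψw j' * xW j'))^2 * ψ i k j :=
      fun i k j => by ring
    simp_rw [hpt, Finset.sum_add_distrib, Finset.sum_sub_distrib, ← Finset.mul_sum]
    rw [hmeanu xP xW, hψ1, hu2]
    -- now compute the dot product on the right
    have hpullP : ∀ i, ∑ j, ψpw i j * (xP i * xW j)
        = xP i * ∑ j, ψpw i j * xW j := by
      intro i; rw [Finset.mul_sum]; exact Finset.sum_congr rfl fun j _ => by ring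
    have hpullW : ∀ j, ∑ i, ψpw i j * (xP i * xW j)
        = xW j * ∑ i, ψpw i j * xP i := by
      intro j; rw [Finset.mul_sum]; exact Finset.sum_congr rfl fun i _ => by ring
    have hBswap : ∑ i, ∑ j, ψpw i j * (xP i * xW j)
        = ∑ j, ∑ i, ψpw i j * (xP i * xW j) := Finset.sum_comm
    have hdot : Sum.elim xP xW ⬝ᵥ M.mulVec (Sum.elim xP xW)
        = (∑ i, ψp i * xP i ^ 2) + 2*(∑ i, ∑ j, ψpw i j * (xP i * xW j))
          + (∑ j, ψw j * xW j ^ 2)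
          - ((∑ i', ψp i' * xP i') + (∑ j', ψw j' * xW j'))^2 := by
      show ∑ s, Sum.elim xP xW s * M.mulVec (Sum.elim xP xW) s = _
      rw [Fintype.sum_sum_type]
      have h1 : ∑ i, Sum.elim xP xW (Sum.inl i) * M.mulVec (Sum.elim xP xW) (Sum.inl i)
          = (∑ i, ψp i * xP i ^ 2) - (∑ i', ψp i' * xP i') * (∑ i, ψp i * xP i)
            + (∑ i, ∑ j, ψpw i j * (xP i * xW j))
            - (∑ j', ψw j' * xW j') * (∑ i, ψp i * xP i) := by
        have e1 : ∀ i, Sum.elim xP xW (Sum.inl i) * M.mulVec (Sum.elim xP xW) (Sum.inl i)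
            = ψp i * xP i ^ 2 - (∑ i', ψp i' * xP i') * (ψp i * xP i)
              + (∑ j, ψpw i j * (xP i * xW j))
              - (∑ j', ψw j' * xW j') * (ψp i * xP i) := by
          intro i
          rw [hMrowP]
          simp only [Sum.elim_inl, Sum.elim_inr]
          rw [hpullP i]
          ring
        simp_rw [e1]
        rw [tf_split4, ← Finset.mul_sum, ← Finset.mul_sum]
      have h2 : ∑ j, Sum.elim xP xW (Sum.inr j) * M.mulVec (Sum.elim xP xW) (Sum.inr j)
          = (∑ j, ψw j * xW j ^ 2) - (∑ j', ψw j' * xW j') * (∑ j, ψw j * xW j)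
            + (∑ j, ∑ i, ψpw i j * (xP i * xW j))
            - (∑ i', ψp i' * xP i') * (∑ j, ψw j * xW j) := by
        have e2 : ∀ j, Sum.elim xP xW (Sum.inr j) * M.mulVec (Sum.elim xP xW) (Sum.inr j)
            = ψw j * xW j ^ 2 - (∑ j', ψw j' * xW j') * (ψw j * xW j)
              + (∑ i, ψpw i j * (xP i * xW j))
              - (∑ i', ψp i' * xP i') * (ψw j * xW j) := by
          intro j
          rw [hMrowW]
          simp only [Sum.elim_inl, Sum.elim_inr]
          rw [hpullW j]
          ring
        simp_rw [e2]
        rw [tf_split4, ← Finset.mul_sum, ← Finset.mul_sum]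
      rw [h1, h2, ← hBswap]
      ring
    rw [hdot]
    ring
  -- variance expansion
  have hvar : ∀ (xP : Fin (n+1) → ℝ) (xW : Fin (m+1) → ℝ),
      (∑ i, ∑ k, ∑ j, ψ i k j * (y i k + xP i + xW j
          - ∑ i', ∑ k', ∑ j', ψ i' k' j' * (y i' k' + xP i' + xW j'))^2)
        = σy2 - 2*((∑ i, cp i * xP i) + (∑ j, cw j * xW j))
          + Sum.elim xP xW ⬝ᵥ M.mulVec (Sum.elim xP xW) := by
    intro xP xW
    rw [hmean xP xW]
    have hpt : ∀ i k (j : Fin (m+1)), ψ i k j * (y i k + xP i + xW j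
          - (μy + ((∑ i', ψp i' * xP i') + (∑ j', ψw j' * xW j'))))^2
        = ψ i k j * (y i k - μy)^2
          + 2*(ψ i k j * (y i k - μy) * xP i)
          + 2*(ψ i k j * (y i k - μy) * xW j)
          - 2*((∑ i', ψp i' * xP i') + (∑ j', ψw j' * xW j')) * (ψ i k j * (y i k - μy))
          + ψ i k j * (xP i + xW j - ((∑ i', ψp i' * xP i') + (∑ j', ψw j' * xW j')))^2 :=
      fun i k j => by ring
    simp_rw [hpt]
    rw [tf_add3, tf_sub3, tf_add3, tf_add3, tf_mul3, tf_mul3, tf_mul3]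
    rw [← hσy2, hcross0, hcrossP xP, hcrossW xW, hQvar xP xW]
    ring
  -- master expansion of the objective
  have hFexp : ∀ (xP : Fin (n+1) → ℝ) (xW : Fin (m+1) → ℝ),
      F a xP xW = μy - a*σy2
        + ((∑ i, (ψp i + 2*a*cp i) * xP i) + (∑ j, (ψw j + 2*a*cw j) * xW j))
        - a * (Sum.elim xP xW ⬝ᵥ M.mulVec (Sum.elim xP xW)) := by
    intro xP xW
    rw [hF, hvar, hmean]
    have e1 : ∑ i, (ψp i + 2*a*cp i) * xP i
        = (∑ i, ψp i * xP i) + 2*a*(∑ i, cp i * xP i) := by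
      rw [Finset.mul_sum, ← Finset.sum_add_distrib]
      exact Finset.sum_congr rfl fun i _ => by ring
    have e2 : ∑ j, (ψw j + 2*a*cw j) * xW j
        = (∑ j, ψw j * xW j) + 2*a*(∑ j, cw j * xW j) := by
      rw [Finset.mul_sum, ← Finset.sum_add_distrib]
      exact Finset.sum_congr rfl fun j _ => by ring
    rw [e1, e2]
    ring
  -- ===== K machinery =====
  have hKxo : K.mulVec xo = Sum.elim (fun s => dhat s - bhat s) (fun _ => 0) := by
    rw [hxo, Matrix.mulVec_mulVec, hKK', Matrix.one_mulVec]
  have hKxInf : K.mulVec xInf = Sum.elim chat (fun _ => 0) := by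
    rw [hxInf, Matrix.mulVec_mulVec, hKK', Matrix.one_mulVec]
  have hKrow0 : ∀ v : Fin (n+1) ⊕ Fin (m+1) → ℝ,
      K.mulVec v (Sum.inr 0) = ∑ i, φp i * v (Sum.inl i) := by
    intro v
    show ∑ t, K (Sum.inr 0) t * v t = _
    rw [Fintype.sum_sum_type]
    simp_rw [hKB, hBp0, hBw0, zero_mul, Finset.sum_const_zero, add_zero]
  have hKrow1 : ∀ v : Fin (n+1) ⊕ Fin (m+1) → ℝ,
      K.mulVec v (Sum.inr 1) = ∑ j, φw j * v (Sum.inr j) := by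
    intro v
    show ∑ t, K (Sum.inr 1) t * v t = _
    rw [Fintype.sum_sum_type]
    simp_rw [hKB, hBp1, hBw1, zero_mul, Finset.sum_const_zero, zero_add]
  have hKrowM : ∀ (v : Fin (n+1) ⊕ Fin (m+1) → ℝ) (i : Fin n),
      K.mulVec v (Sum.inl (Sum.inl i)) = M.mulVec v (Sum.inl i.castSucc) := by
    intro v i
    show ∑ t, K (Sum.inl (Sum.inl i)) t * v t = ∑ t, M (Sum.inl i.castSucc) t * v t
    exact Finset.sum_congr rfl fun t _ => by rw [hKM, hMhatp]
  have hKrowN : ∀ (v : Fin (n+1) ⊕ Fin (m+1) → ℝ) (j : Fin m),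
      K.mulVec v (Sum.inl (Sum.inr j)) = M.mulVec v (Sum.inr j.castSucc) := by
    intro v j
    show ∑ t, K (Sum.inl (Sum.inr j)) t * v t = ∑ t, M (Sum.inr j.castSucc) t * v t
    exact Finset.sum_congr rfl fun t _ => by rw [hKM, hMhatw]
  have hoP : ∑ i, φp i * xo (Sum.inl i) = 0 := by
    rw [← hKrow0, hKxo]; rfl
  have hoW : ∑ j, φw j * xo (Sum.inr j) = 0 := by
    rw [← hKrow1, hKxo]; rfl
  have hiP : ∑ i, φp i * xInf (Sum.inl i) = 0 := by
    rw [← hKrow0, hKxInf]; rfl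
  have hiW : ∑ j, φw j * xInf (Sum.inr j) = 0 := by
    rw [← hKrow1, hKxInf]; rfl
  -- the candidate solution
  set xst : Fin (n+1) ⊕ Fin (m+1) → ℝ := fun s => xInf s + 1/(2*a) * xo s with hxst
  have hfeasP : ∑ i, φp i * xst (Sum.inl i) = 0 := by
    have hpt : ∀ i, φp i * xst (Sum.inl i)
        = φp i * xInf (Sum.inl i) + (1/(2*a)) * (φp i * xo (Sum.inl i)) := fun i => by
      rw [hxst]; ring
    simp_rw [hpt]
    rw [Finset.sum_add_distrib, ← Finset.mul_sum, hiP, hoP]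
    ring
  have hfeasW : ∑ j, φw j * xst (Sum.inr j) = 0 := by
    have hpt : ∀ j, φw j * xst (Sum.inr j)
        = φw j * xInf (Sum.inr j) + (1/(2*a)) * (φw j * xo (Sum.inr j)) := fun j => by
      rw [hxst]; ring
    simp_rw [hpt]
    rw [Finset.sum_add_distrib, ← Finset.mul_sum, hiW, hoW]
    ring
  -- value of M on candidate at hat rows
  have hMxsP : ∀ i : Fin n, M.mulVec xst (Sum.inl i.castSucc)
      = cp i.castSucc + 1/(2*a) * (ψp i.castSucc - φp i.castSucc) := by
    intro i
    rw [← hKrowM, hxst, tf_mulVec_lin K xInf xo (1/(2*a)), hKxo, hKxInf]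
    simp [hchatp, hdhatp, hbhatp]
  have hMxsW : ∀ j : Fin m, M.mulVec xst (Sum.inr j.castSucc)
      = cw j.castSucc + 1/(2*a) * (ψw j.castSucc - φw j.castSucc) := by
    intro j
    rw [← hKrowN, hxst, tf_mulVec_lin K xInf xo (1/(2*a)), hKxo, hKxInf]
    simp [hchatw, hdhatw, hbhatw]
  -- the gradient identity
  have hgP : ∀ i, ψp i + 2*a*cp i - 2*a * M.mulVec xst (Sum.inl i) = φp i := by
    have hcast : ∀ i : Fin n,
        ψp i.castSucc + 2*a*cp i.castSucc - 2*a * M.mulVec xst (Sum.inl i.castSucc)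
          = φp i.castSucc := by
      intro i
      rw [hMxsP i]
      field_simp
      ring
    intro i
    induction i using Fin.lastCases with
    | cast i => exact hcast i
    | last =>
      have hsum : ∑ i, (ψp i + 2*a*cp i - 2*a * M.mulVec xst (Sum.inl i)) = 1 := by
        rw [Finset.sum_sub_distrib, Finset.sum_add_distrib, ← Finset.mul_sum,
          ← Finset.mul_sum, hψpsum, hcpsum, hMsumP]
        ring
      rw [Fin.sum_univ_castSucc] at hsum
      rw [Finset.sum_congr rfl (fun i _ => hcast i)] at hsum
      have h3 : (∑ i : Fin n, φp i.castSucc) + φp (Fin.last n) = 1 := by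
        rw [← Fin.sum_univ_castSucc]; exact hφpsum
      linarith
  have hgW : ∀ j, ψw j + 2*a*cw j - 2*a * M.mulVec xst (Sum.inr j) = φw j := by
    have hcast : ∀ j : Fin m,
        ψw j.castSucc + 2*a*cw j.castSucc - 2*a * M.mulVec xst (Sum.inr j.castSucc)
          = φw j.castSucc := by
      intro j
      rw [hMxsW j]
      field_simp
      ring
    intro j
    induction j using Fin.lastCases with
    | cast j => exact hcast j
    | last =>
      have hsum : ∑ j, (ψw j + 2*a*cw j - 2*a * M.mulVec xst (Sum.inr j)) = 1 := by
        rw [Finset.sum_sub_distrib, Finset.sum_add_distrib, ← Finset.mul_sum,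
          ← Finset.mul_sum, hψwsum, hcwsum, hMsumW]
        ring
      rw [Fin.sum_univ_castSucc] at hsum
      rw [Finset.sum_congr rfl (fun j _ => hcast j)] at hsum
      have h3 : (∑ j : Fin m, φw j.castSucc) + φw (Fin.last m) = 1 := by
        rw [← Fin.sum_univ_castSucc]; exact hφwsum
      linarith
  -- candidate parts assemble to xst
  have hElim : Sum.elim (fun i => xst (Sum.inl i)) (fun j => xst (Sum.inr j)) = xst := by
    funext s; cases s <;> rfl
  -- positive semidefiniteness of M
  have hPSD : ∀ v : Fin (n+1) ⊕ Fin (m+1) → ℝ, 0 ≤ v ⬝ᵥ M.mulVec v := by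
    intro v
    have hE : Sum.elim (fun i => v (Sum.inl i)) (fun j => v (Sum.inr j)) = v := by
      funext s; cases s <;> rfl
    rw [← hE, ← hQvar]
    exact Finset.sum_nonneg fun i _ => Finset.sum_nonneg fun k _ =>
      Finset.sum_nonneg fun j _ => mul_nonneg (hψ0 i k j) (sq_nonneg _)
  -- the master comparison formula
  have hcompare : ∀ (xP : Fin (n+1) → ℝ) (xW : Fin (m+1) → ℝ),
      (∑ i, φp i * xP i) = 0 → (∑ j, φw j * xW j) = 0 →
      F a (fun i => xst (Sum.inl i)) (fun j => xst (Sum.inr j)) - F a xP xW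
        = a * ((fun s => xst s - Sum.elim xP xW s) ⬝ᵥ
            M.mulVec (fun s => xst s - Sum.elim xP xW s)) := by
    intro xP xW hfP hfW
    rw [hFexp, hFexp, hElim]
    -- quadratic difference identity
    have hquad : (Sum.elim xP xW) ⬝ᵥ M.mulVec (Sum.elim xP xW)
        = xst ⬝ᵥ M.mulVec xst
          - 2 * ((fun s => xst s - Sum.elim xP xW s) ⬝ᵥ M.mulVec xst)
          + (fun s => xst s - Sum.elim xP xW s) ⬝ᵥ
              M.mulVec (fun s => xst s - Sum.elim xP xW s) := by
      have he : Sum.elim xP xW = fun s => xst s - (xst s - Sum.elim xP xW s) := by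
        funext s; ring
      conv_lhs => rw [he]
      have hmv : M.mulVec (fun s => xst s - (xst s - Sum.elim xP xW s))
          = fun s' => M.mulVec xst s' - M.mulVec (fun s => xst s - Sum.elim xP xW s) s' := by
        funext s'; rw [tf_mulVec_sub]
      rw [hmv, tf_dot_sub]
      have hd1 : xst ⬝ᵥ (fun s' => M.mulVec xst s' - M.mulVec (fun s => xst s - Sum.elim xP xW s) s')
          = xst ⬝ᵥ M.mulVec xst - xst ⬝ᵥ M.mulVec (fun s => xst s - Sum.elim xP xW s) := by
        show ∑ s', xst s' * (M.mulVec xst s' - M.mulVec (fun s => xst s - Sum.elim xP xW s) s')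
            = (∑ s', xst s' * M.mulVec xst s')
              - ∑ s', xst s' * M.mulVec (fun s => xst s - Sum.elim xP xW s) s'
        rw [← Finset.sum_sub_distrib]
        exact Finset.sum_congr rfl fun s' _ => by ring
      have hd2 : (fun s => xst s - Sum.elim xP xW s) ⬝ᵥ
            (fun s' => M.mulVec xst s' - M.mulVec (fun s => xst s - Sum.elim xP xW s) s')
          = (fun s => xst s - Sum.elim xP xW s) ⬝ᵥ M.mulVec xst
            - (fun s => xst s - Sum.elim xP xW s) ⬝ᵥ M.mulVec (fun s => xst s - Sum.elim xP xW s) := by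
        show ∑ s', (xst s' - Sum.elim xP xW s') * (M.mulVec xst s' - M.mulVec (fun s => xst s - Sum.elim xP xW s) s')
            = (∑ s', (xst s' - Sum.elim xP xW s') * M.mulVec xst s')
              - ∑ s', (xst s' - Sum.elim xP xW s') * M.mulVec (fun s => xst s - Sum.elim xP xW s) s'
        rw [← Finset.sum_sub_distrib]
        exact Finset.sum_congr rfl fun s' _ => by ring
      rw [hd1, hd2, hsymdot xst (fun s => xst s - Sum.elim xP xW s)]
      ring
    -- linear difference vanishes against the gradient
    have hW' : (fun s => xst s - Sum.elim xP xW s) ⬝ᵥ M.mulVec xst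
        = ∑ i, (xst (Sum.inl i) - xP i) * M.mulVec xst (Sum.inl i)
          + ∑ j, (xst (Sum.inr j) - xW j) * M.mulVec xst (Sum.inr j) := by
      show ∑ s, _ = _
      rw [Fintype.sum_sum_type]
      simp only [Sum.elim_inl, Sum.elim_inr]
    have hA : (∑ i, (ψp i + 2*a*cp i) * xst (Sum.inl i)) - (∑ i, (ψp i + 2*a*cp i) * xP i)
        - 2*a*(∑ i, (xst (Sum.inl i) - xP i) * M.mulVec xst (Sum.inl i)) = 0 := by
      rw [← Finset.sum_sub_distrib, Finset.mul_sum, ← Finset.sum_sub_distrib]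
      have hpt : ∀ i ∈ Finset.univ,
          (ψp i + 2*a*cp i) * xst (Sum.inl i) - (ψp i + 2*a*cp i) * xP i
            - 2*a*((xst (Sum.inl i) - xP i) * M.mulVec xst (Sum.inl i))
          = φp i * xst (Sum.inl i) - φp i * xP i := fun i _ => by
        rw [← hgP i]; ring
      rw [Finset.sum_congr rfl hpt, Finset.sum_sub_distrib, hfeasP, hfP]
      ring
    have hB : (∑ j, (ψw j + 2*a*cw j) * xst (Sum.inr j)) - (∑ j, (ψw j + 2*a*cw j) * xW j)
        - 2*a*(∑ j, (xst (Sum.inr j) - xW j) * M.mulVec xst (Sum.inr j)) = 0 := by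
      rw [← Finset.sum_sub_distrib, Finset.mul_sum, ← Finset.sum_sub_distrib]
      have hpt : ∀ j ∈ Finset.univ,
          (ψw j + 2*a*cw j) * xst (Sum.inr j) - (ψw j + 2*a*cw j) * xW j
            - 2*a*((xst (Sum.inr j) - xW j) * M.mulVec xst (Sum.inr j))
          = φw j * xst (Sum.inr j) - φw j * xW j := fun j _ => by
        rw [← hgW j]; ring
      rw [Finset.sum_congr rfl hpt, Finset.sum_sub_distrib, hfeasW, hfW]
      ring
    rw [hW'] at hquad
    linear_combination a * hquad + hA + hB
  -- goal-form conversions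
  have hfun1 : (fun i => xInf (Sum.inl i) + 1/(2*a) * xo (Sum.inl i))
      = (fun i => xst (Sum.inl i)) := by
    funext i; rw [hxst]
  have hfun2 : (fun j => xInf (Sum.inr j) + 1/(2*a) * xo (Sum.inr j))
      = (fun j => xst (Sum.inr j)) := by
    funext j; rw [hxst]
  have hgoalP : ∑ i, φp i * (xInf (Sum.inl i) + 1/(2*a) * xo (Sum.inl i)) = 0 := hfeasP
  have hgoalW : ∑ j, φw j * (xInf (Sum.inr j) + 1/(2*a) * xo (Sum.inr j)) = 0 := hfeasW
  refine ⟨⟨hgoalP, hgoalW, ?_⟩, ?_⟩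
  · -- optimality
    intro xP xW hfP hfW
    have hc := hcompare xP xW hfP hfW
    have hps := hPSD (fun s => xst s - Sum.elim xP xW s)
    rw [hfun1, hfun2]
    nlinarith [hc, hps, ha]
  · -- uniqueness
    intro xP xW hfP hfW hopt
    have hle := hopt (fun i => xst (Sum.inl i)) (fun j => xst (Sum.inr j)) hfeasP hfeasW
    have hc := hcompare xP xW hfP hfW
    have hps := hPSD (fun s => xst s - Sum.elim xP xW s)
    have hQ0 : (fun s => xst s - Sum.elim xP xW s) ⬝ᵥ
        M.mulVec (fun s => xst s - Sum.elim xP xW s) = 0 := by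
      have h1 : a * ((fun s => xst s - Sum.elim xP xW s) ⬝ᵥ
          M.mulVec (fun s => xst s - Sum.elim xP xW s)) ≤ 0 := by
        rw [← hc]
        linarith [hle]
      have h2 : (fun s => xst s - Sum.elim xP xW s) ⬝ᵥ
          M.mulVec (fun s => xst s - Sum.elim xP xW s) ≤ 0 := by
        by_contra hq
        push_neg at hq
        linarith [mul_pos ha hq]
      exact le_antisymm h2 hps
    have hEh : Sum.elim (fun i => xst (Sum.inl i) - xP i) (fun j => xst (Sum.inr j) - xW j)
        = fun s => xst s - Sum.elim xP xW s := by
      funext s; cases s <;> rfl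
    have hsum0 : (∑ i, ∑ k, ∑ j, ψ i k j *
        ((xst (Sum.inl i) - xP i) + (xst (Sum.inr j) - xW j)
          - ((∑ i', ψp i' * (xst (Sum.inl i') - xP i'))
            + (∑ j', ψw j' * (xst (Sum.inr j') - xW j'))))^2) = 0 := by
      rw [hQvar (fun i => xst (Sum.inl i) - xP i) (fun j => xst (Sum.inr j) - xW j), hEh]
      exact hQ0
    have hterm1 : ∀ i k j, ψ i k j *
        ((xst (Sum.inl i) - xP i) + (xst (Sum.inr j) - xW j)
          - ((∑ i', ψp i' * (xst (Sum.inl i') - xP i'))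
            + (∑ j', ψw j' * (xst (Sum.inr j') - xW j')))) = 0 := by
      intro i k j
      have e1 := (Finset.sum_eq_zero_iff_of_nonneg (fun i _ =>
        Finset.sum_nonneg fun k _ => Finset.sum_nonneg fun j _ =>
          mul_nonneg (hψ0 _ _ _) (sq_nonneg _))).mp hsum0 i (Finset.mem_univ i)
      have e2 := (Finset.sum_eq_zero_iff_of_nonneg (fun k _ =>
        Finset.sum_nonneg fun j _ =>
          mul_nonneg (hψ0 _ _ _) (sq_nonneg _))).mp e1 k (Finset.mem_univ k)
      have e3 := (Finset.sum_eq_zero_iff_of_nonneg (fun j _ =>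
          mul_nonneg (hψ0 _ _ _) (sq_nonneg _))).mp e2 j (Finset.mem_univ j)
      rcases mul_eq_zero.mp e3 with h | h
      · rw [h, zero_mul]
      · rw [pow_eq_zero_iff two_ne_zero] at h
        rw [h, mul_zero]
    have hMh0P : ∀ i, M.mulVec (fun s => xst s - Sum.elim xP xW s) (Sum.inl i) = 0 := by
      intro i
      have hrow : M.mulVec (fun s => xst s - Sum.elim xP xW s) (Sum.inl i)
          = ∑ k, ∑ j, ψ i k j *
            ((xst (Sum.inl i) - xP i) + (xst (Sum.inr j) - xW j)
              - ((∑ i', ψp i' * (xst (Sum.inl i') - xP i'))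
                + (∑ j', ψw j' * (xst (Sum.inr j') - xW j')))) := by
        rw [hMrowP]
        simp only [Sum.elim_inl, Sum.elim_inr]
        have hsplit : ∀ k (j : Fin (m+1)), ψ i k j *
            ((xst (Sum.inl i) - xP i) + (xst (Sum.inr j) - xW j)
              - ((∑ i', ψp i' * (xst (Sum.inl i') - xP i'))
                + (∑ j', ψw j' * (xst (Sum.inr j') - xW j'))))
            = ψ i k j * ((xst (Sum.inl i) - xP i)
              - ((∑ i', ψp i' * (xst (Sum.inl i') - xP i'))
                + (∑ j', ψw j' * (xst (Sum.inr j') - xW j'))))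
              + ψ i k j * (xst (Sum.inr j) - xW j) := fun k j => by ring
        have hpart : ∑ k, ∑ j, ψ i k j *
            ((xst (Sum.inl i) - xP i) + (xst (Sum.inr j) - xW j)
              - ((∑ i', ψp i' * (xst (Sum.inl i') - xP i'))
                + (∑ j', ψw j' * (xst (Sum.inr j') - xW j'))))
            = ψp i * ((xst (Sum.inl i) - xP i)
              - ((∑ i', ψp i' * (xst (Sum.inl i') - xP i'))
                + (∑ j', ψw j' * (xst (Sum.inr j') - xW j'))))
              + ∑ j, ψpw i j * (xst (Sum.inr j) - xW j) := by
          simp_rw [hsplit, Finset.sum_add_distrib]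
          congr 1
          · rw [← tf_sum2_mul, ← hψp]
          · rw [Finset.sum_comm]
            exact Finset.sum_congr rfl fun j _ => by rw [hψpw, Finset.sum_mul]
        rw [hpart]
        ring
      rw [hrow]
      exact Finset.sum_eq_zero fun k _ => Finset.sum_eq_zero fun j _ => hterm1 i k j
    have hMh0W : ∀ j, M.mulVec (fun s => xst s - Sum.elim xP xW s) (Sum.inr j) = 0 := by
      intro j
      have hrow : M.mulVec (fun s => xst s - Sum.elim xP xW s) (Sum.inr j)
          = ∑ i, ∑ k, ψ i k j *
            ((xst (Sum.inl i) - xP i) + (xst (Sum.inr j) - xW j)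
              - ((∑ i', ψp i' * (xst (Sum.inl i') - xP i'))
                + (∑ j', ψw j' * (xst (Sum.inr j') - xW j')))) := by
        rw [hMrowW]
        simp only [Sum.elim_inl, Sum.elim_inr]
        have hsplit : ∀ (i : Fin (n+1)) (k : Fin l), ψ i k j *
            ((xst (Sum.inl i) - xP i) + (xst (Sum.inr j) - xW j)
              - ((∑ i', ψp i' * (xst (Sum.inl i') - xP i'))
                + (∑ j', ψw j' * (xst (Sum.inr j') - xW j'))))
            = ψ i k j * ((xst (Sum.inr j) - xW j)
              - ((∑ i', ψp i' * (xst (Sum.inl i') - xP i'))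
                + (∑ j', ψw j' * (xst (Sum.inr j') - xW j'))))
              + ψ i k j * (xst (Sum.inl i) - xP i) := fun i k => by ring
        have hpart : ∑ i, ∑ k, ψ i k j *
            ((xst (Sum.inl i) - xP i) + (xst (Sum.inr j) - xW j)
              - ((∑ i', ψp i' * (xst (Sum.inl i') - xP i'))
                + (∑ j', ψw j' * (xst (Sum.inr j') - xW j'))))
            = ψw j * ((xst (Sum.inr j) - xW j)
              - ((∑ i', ψp i' * (xst (Sum.inl i') - xP i'))
                + (∑ j', ψw j' * (xst (Sum.inr j') - xW j'))))
              + ∑ i, ψpw i j * (xst (Sum.inl i) - xP i) := by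
          simp_rw [hsplit, Finset.sum_add_distrib]
          congr 1
          · rw [← tf_sum2_mul, ← hψw]
          · exact Finset.sum_congr rfl fun i _ => by rw [hψpw, Finset.sum_mul]
        rw [hpart]
        ring
      rw [hrow]
      exact Finset.sum_eq_zero fun i _ => Finset.sum_eq_zero fun k _ => hterm1 i k j
    have hKh0 : K.mulVec (fun s => xst s - Sum.elim xP xW s) = 0 := by
      funext s
      rcases s with (i | j) | u
      · simp only [Pi.zero_apply]
        rw [hKrowM, hMh0P]
      · simp only [Pi.zero_apply]
        rw [hKrowN, hMh0W]
      · fin_cases u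
        · simp only [Pi.zero_apply]
          show K.mulVec (fun s => xst s - Sum.elim xP xW s) (Sum.inr 0) = 0
          rw [hKrow0]
          have hpt : ∀ i : Fin (n+1), φp i * (xst (Sum.inl i) - Sum.elim xP xW (Sum.inl i))
              = φp i * xst (Sum.inl i) - φp i * xP i := fun i => by
            simp only [Sum.elim_inl]; ring
          simp_rw [hpt]
          rw [Finset.sum_sub_distrib, hfeasP, hfP, sub_zero]
        · simp only [Pi.zero_apply]
          show K.mulVec (fun s => xst s - Sum.elim xP xW s) (Sum.inr 1) = 0
          rw [hKrow1]
          have hpt : ∀ j : Fin (m+1), φw j * (xst (Sum.inr j) - Sum.elim xP xW (Sum.inr j))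
              = φw j * xst (Sum.inr j) - φw j * xW j := fun j => by
            simp only [Sum.elim_inr]; ring
          simp_rw [hpt]
          rw [Finset.sum_sub_distrib, hfeasW, hfW, sub_zero]
    have h1 : K'.mulVec (K.mulVec (fun s => xst s - Sum.elim xP xW s))
        = (fun s => xst s - Sum.elim xP xW s) := by
      rw [Matrix.mulVec_mulVec, hK'K, Matrix.one_mulVec]
    funext s
    have h2 := congrFun h1 s
    rw [hKh0, Matrix.mulVec_zero] at h2
    have h3 : xst s - Sum.elim xP xW s = 0 := by simpa using h2.symm
    have h4 : xst s = xInf s + 1/(2*a) * xo s := by rw [hxst]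
    linarith
end

section
/- Assume K (the matrix obtained by stacking M̂ on top of B^T) is invertible and that the risk-neutral marginals agree with the real-world marginals: φ_p = ψ_p and φ_w = ψ_w. Then the unique optimal solution of the hedging problem is the same for all a > 0; namely, for every a > 0 the optimal solution equals x^∞ = K^{-1} · (ĉ, 0, 0). -/
open Finset Matrix

theorem stmt_15 (n m l : ℕ) (hl : 1 ≤ l)
    (p : Fin (n+1) → ℝ) (q : Fin l → ℝ) (w : Fin (m+1) → ℝ)
    (ψ : Fin (n+1) → Fin l → Fin (m+1) → ℝ)
    (hψ0 : ∀ i k j, 0 ≤ ψ i k j)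
    (hψ1 : ∑ i, ∑ k, ∑ j, ψ i k j = 1)
    (ψp : Fin (n+1) → ℝ) (hψp : ∀ i, ψp i = ∑ k, ∑ j, ψ i k j)
    (ψw : Fin (m+1) → ℝ) (hψw : ∀ j, ψw j = ∑ i, ∑ k, ψ i k j)
    (ψpw : Matrix (Fin (n+1)) (Fin (m+1)) ℝ) (hψpw : ∀ i j, ψpw i j = ∑ k, ψ i k j)
    (r : ℝ) (y : Fin (n+1) → Fin l → ℝ) (hy : ∀ i k, y i k = (r - p i) * q k)
    (μy : ℝ) (hμy : μy = ∑ i, ∑ k, ∑ j, ψ i k j * y i k)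
    (σy2 : ℝ) (hσy2 : σy2 = ∑ i, ∑ k, ∑ j, ψ i k j * (y i k - μy)^2)
    (vp : Fin (n+1) → ℝ) (hvp : ∀ i, vp i = ∑ k, ∑ j, ψ i k j * y i k)
    (vw : Fin (m+1) → ℝ) (hvw : ∀ j, vw j = ∑ i, ∑ k, ψ i k j * y i k)
    (cp : Fin (n+1) → ℝ) (hcp : ∀ i, cp i = μy * ψp i - vp i)
    (cw : Fin (m+1) → ℝ) (hcw : ∀ j, cw j = μy * ψw j - vw j)
    (M : Matrix (Fin (n+1) ⊕ Fin (m+1)) (Fin (n+1) ⊕ Fin (m+1)) ℝ)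
    (hMpp : ∀ i i', M (Sum.inl i) (Sum.inl i') = (if i = i' then ψp i else 0) - ψp i * ψp i')
    (hMww : ∀ j j', M (Sum.inr j) (Sum.inr j') = (if j = j' then ψw j else 0) - ψw j * ψw j')
    (hMpw : ∀ i j, M (Sum.inl i) (Sum.inr j) = ψpw i j - ψp i * ψw j)
    (hMwp : ∀ i j, M (Sum.inr j) (Sum.inl i) = ψpw i j - ψp i * ψw j)
    (φ : Fin (n+1) → Fin (m+1) → ℝ)
    (hφ0 : ∀ i j, 0 ≤ φ i j) (hφ1 : ∑ i, ∑ j, φ i j = 1)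
    (φp : Fin (n+1) → ℝ) (hφp : ∀ i, φp i = ∑ j, φ i j)
    (φw : Fin (m+1) → ℝ) (hφw : ∀ j, φw j = ∑ i, φ i j)
    (B : Matrix (Fin (n+1) ⊕ Fin (m+1)) (Fin 2) ℝ)
    (hBp0 : ∀ i, B (Sum.inl i) 0 = φp i) (hBp1 : ∀ i, B (Sum.inl i) 1 = 0)
    (hBw0 : ∀ j, B (Sum.inr j) 0 = 0) (hBw1 : ∀ j, B (Sum.inr j) 1 = φw j)
    (Mhat : Matrix (Fin n ⊕ Fin m) (Fin (n+1) ⊕ Fin (m+1)) ℝ)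
    (hMhatp : ∀ (i : Fin n) t, Mhat (Sum.inl i) t = M (Sum.inl i.castSucc) t)
    (hMhatw : ∀ (j : Fin m) t, Mhat (Sum.inr j) t = M (Sum.inr j.castSucc) t)
    (chat : Fin n ⊕ Fin m → ℝ)
    (hchatp : ∀ i : Fin n, chat (Sum.inl i) = cp i.castSucc)
    (hchatw : ∀ j : Fin m, chat (Sum.inr j) = cw j.castSucc)
    (dhat : Fin n ⊕ Fin m → ℝ)
    (hdhatp : ∀ i : Fin n, dhat (Sum.inl i) = ψp i.castSucc)
    (hdhatw : ∀ j : Fin m, dhat (Sum.inr j) = ψw j.castSucc)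
    (bhat : Fin n ⊕ Fin m → ℝ)
    (hbhatp : ∀ i : Fin n, bhat (Sum.inl i) = φp i.castSucc)
    (hbhatw : ∀ j : Fin m, bhat (Sum.inr j) = φw j.castSucc)
    (K : Matrix ((Fin n ⊕ Fin m) ⊕ Fin 2) (Fin (n+1) ⊕ Fin (m+1)) ℝ)
    (hKM : ∀ s t, K (Sum.inl s) t = Mhat s t)
    (hKB : ∀ (u : Fin 2) t, K (Sum.inr u) t = B t u)
    (K' : Matrix (Fin (n+1) ⊕ Fin (m+1)) ((Fin n ⊕ Fin m) ⊕ Fin 2) ℝ)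
    (hKK' : K * K' = 1) (hK'K : K' * K = 1)
    (F : ℝ → (Fin (n+1) → ℝ) → (Fin (m+1) → ℝ) → ℝ)
    (hF : ∀ (a : ℝ) (xP : Fin (n+1) → ℝ) (xW : Fin (m+1) → ℝ), F a xP xW =
      (∑ i, ∑ k, ∑ j, ψ i k j * (y i k + xP i + xW j)) -
      a * (∑ i, ∑ k, ∑ j, ψ i k j *
        (y i k + xP i + xW j - ∑ i', ∑ k', ∑ j', ψ i' k' j' * (y i' k' + xP i' + xW j'))^2))
    (hφpψ : φp = ψp) (hφwψ : φw = ψw)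
    (xInf : Fin (n+1) ⊕ Fin (m+1) → ℝ)
    (hxInf : xInf = K'.mulVec (Sum.elim chat (fun _ => 0))) :
    ∀ a : ℝ, 0 < a →
      ((∑ i, φp i * xInf (Sum.inl i)) = 0 ∧
       (∑ j, φw j * xInf (Sum.inr j)) = 0 ∧
       (∀ (xP : Fin (n+1) → ℝ) (xW : Fin (m+1) → ℝ),
         (∑ i, φp i * xP i) = 0 → (∑ j, φw j * xW j) = 0 →
         F a xP xW ≤ F a (fun i => xInf (Sum.inl i)) (fun j => xInf (Sum.inr j)))) ∧
      (∀ (xP : Fin (n+1) → ℝ) (xW : Fin (m+1) → ℝ),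
        (∑ i, φp i * xP i) = 0 → (∑ j, φw j * xW j) = 0 →
        (∀ (xP' : Fin (n+1) → ℝ) (xW' : Fin (m+1) → ℝ),
          (∑ i, φp i * xP' i) = 0 → (∑ j, φw j * xW' j) = 0 → F a xP' xW' ≤ F a xP xW) →
        Sum.elim xP xW = xInf) := by
  intro a ha
  -- reorder triple sums
  have reorder : ∀ f : Fin (n+1) → Fin l → Fin (m+1) → ℝ,
      (∑ i, ∑ k, ∑ j, f i k j) = ∑ j, ∑ i, ∑ k, f i k j := by
    intro f
    calc (∑ i, ∑ k, ∑ j, f i k j) = ∑ i, ∑ j, ∑ k, f i k j :=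
          Finset.sum_congr rfl fun i _ => Finset.sum_comm
      _ = ∑ j, ∑ i, ∑ k, f i k j := Finset.sum_comm
  have L1 : ∀ g : Fin (n+1) → ℝ, (∑ i, ∑ k, ∑ j, ψ i k j * g i) = ∑ i, ψp i * g i := by
    intro g; simp only [hψp, Finset.sum_mul]
  have L2 : ∀ g : Fin (m+1) → ℝ, (∑ i, ∑ k, ∑ j, ψ i k j * g j) = ∑ j, ψw j * g j := by
    intro g
    rw [reorder fun i k j => ψ i k j * g j]
    simp only [hψw, Finset.sum_mul]
  have L3 : ∀ g : Fin (n+1) → ℝ,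
      (∑ i, ∑ k, ∑ j, ψ i k j * y i k * g i) = ∑ i, vp i * g i := by
    intro g; simp only [hvp, Finset.sum_mul]
  have L4 : ∀ g : Fin (m+1) → ℝ,
      (∑ i, ∑ k, ∑ j, ψ i k j * y i k * g j) = ∑ j, vw j * g j := by
    intro g
    rw [reorder fun i k j => ψ i k j * y i k * g j]
    simp only [hvw, Finset.sum_mul]
  have total1 : (∑ i, ψp i) = 1 := by simp only [hψp]; exact hψ1
  have totalw : (∑ j, ψw j) = 1 := by
    simp only [hψw]; rw [← reorder fun i k j => ψ i k j]; exact hψ1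
  have hμp' : (∑ i, vp i) = μy := by simp only [hvp]; exact hμy.symm
  have hμw' : (∑ j, vw j) = μy := by
    simp only [hvw]; rw [← reorder fun i k j => ψ i k j * y i k]; exact hμy.symm
  have sum_cp : (∑ i, cp i) = 0 := by
    simp only [hcp, Finset.sum_sub_distrib, ← Finset.mul_sum]
    rw [total1, hμp']; ring
  have sum_cw : (∑ j, cw j) = 0 := by
    simp only [hcw, Finset.sum_sub_distrib, ← Finset.mul_sum]
    rw [totalw, hμw']; ring
  have mean : ∀ (xP : Fin (n+1) → ℝ) (xW : Fin (m+1) → ℝ),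
      (∑ i, ψp i * xP i) = 0 → (∑ j, ψw j * xW j) = 0 →
      (∑ i, ∑ k, ∑ j, ψ i k j * (y i k + xP i + xW j)) = μy := by
    intro xP xW h1 h2
    have e : ∀ (i : Fin (n+1)) (k : Fin l) (j : Fin (m+1)),
        ψ i k j * (y i k + xP i + xW j)
          = ψ i k j * y i k + ψ i k j * xP i + ψ i k j * xW j := by
      intro i k j; ring
    simp only [e, Finset.sum_add_distrib]
    rw [L1 xP, L2 xW, h1, h2, ← hμy]; ring
  have varid : ∀ (xP : Fin (n+1) → ℝ) (xW : Fin (m+1) → ℝ),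
      (∑ i, ψp i * xP i) = 0 → (∑ j, ψw j * xW j) = 0 →
      (∑ i, ∑ k, ∑ j, ψ i k j * (y i k + xP i + xW j - μy)^2)
        = σy2 + 2 * ((∑ i, vp i * xP i) + ∑ j, vw j * xW j)
          + ∑ i, ∑ k, ∑ j, ψ i k j * (xP i + xW j) * (xP i + xW j) := by
    intro xP xW h1 h2
    have e : ∀ (i : Fin (n+1)) (k : Fin l) (j : Fin (m+1)),
        ψ i k j * (y i k + xP i + xW j - μy)^2
          = ψ i k j * (y i k - μy)^2 + 2 * (ψ i k j * y i k * xP i)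
            + 2 * (ψ i k j * y i k * xW j) - 2 * μy * (ψ i k j * xP i)
            - 2 * μy * (ψ i k j * xW j)
            + ψ i k j * (xP i + xW j) * (xP i + xW j) := by
      intro i k j; ring
    simp only [e, Finset.sum_add_distrib, Finset.sum_sub_distrib, ← Finset.mul_sum]
    rw [L3 xP, L4 xW, L1 xP, L2 xW, h1, h2, ← hσy2]; ring
  have Mrow : ∀ u : Fin (n+1) ⊕ Fin (m+1) → ℝ,
      (∑ i, ψp i * u (Sum.inl i)) = 0 → (∑ j, ψw j * u (Sum.inr j)) = 0 →
      (∀ i, M.mulVec u (Sum.inl i)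
          = ∑ k, ∑ j, ψ i k j * (u (Sum.inl i) + u (Sum.inr j)))
      ∧ (∀ j, M.mulVec u (Sum.inr j)
          = ∑ i, ∑ k, ψ i k j * (u (Sum.inl i) + u (Sum.inr j))) := by
    intro u h1 h2
    constructor
    · intro i
      have expand : M.mulVec u (Sum.inl i)
          = (∑ i', M (Sum.inl i) (Sum.inl i') * u (Sum.inl i'))
            + ∑ j, M (Sum.inl i) (Sum.inr j) * u (Sum.inr j) := by
        simp [Matrix.mulVec, dotProduct, Fintype.sum_sum_type]
      rw [expand]
      have hA : (∑ i', M (Sum.inl i) (Sum.inl i') * u (Sum.inl i'))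
          = ψp i * u (Sum.inl i) - ψp i * ∑ i', ψp i' * u (Sum.inl i') := by
        have e : ∀ i', M (Sum.inl i) (Sum.inl i') * u (Sum.inl i')
            = (if i' = i then ψp i * u (Sum.inl i) else 0)
              - ψp i * (ψp i' * u (Sum.inl i')) := by
          intro i'
          rw [hMpp]
          by_cases h : i' = i
          · subst h; rw [if_pos rfl, if_pos rfl]; ring
          · rw [if_neg (Ne.symm h), if_neg h]; ring
        simp only [e, Finset.sum_sub_distrib, Finset.sum_ite_eq', Finset.mem_univ,
          if_true, ← Finset.mul_sum]
      have hB : (∑ j, M (Sum.inl i) (Sum.inr j) * u (Sum.inr j))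
          = (∑ j, ψpw i j * u (Sum.inr j)) - ψp i * ∑ j, ψw j * u (Sum.inr j) := by
        have e : ∀ j, M (Sum.inl i) (Sum.inr j) * u (Sum.inr j)
            = ψpw i j * u (Sum.inr j) - ψp i * (ψw j * u (Sum.inr j)) := by
          intro j; rw [hMpw]; ring
        simp only [e, Finset.sum_sub_distrib, ← Finset.mul_sum]
      rw [hA, hB, h1, h2]
      have e2 : ∀ (k : Fin l) (j : Fin (m+1)),
          ψ i k j * (u (Sum.inl i) + u (Sum.inr j))
            = ψ i k j * u (Sum.inl i) + ψ i k j * u (Sum.inr j) := fun k j => mul_add _ _ _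
      simp only [e2, Finset.sum_add_distrib]
      have r1 : (∑ k, ∑ j, ψ i k j * u (Sum.inl i)) = ψp i * u (Sum.inl i) := by
        rw [hψp]; simp only [Finset.sum_mul]
      have r2 : (∑ k, ∑ j, ψ i k j * u (Sum.inr j)) = ∑ j, ψpw i j * u (Sum.inr j) := by
        rw [Finset.sum_comm]
        refine Finset.sum_congr rfl fun j _ => ?_
        rw [hψpw, Finset.sum_mul]
      rw [r1, r2]; ring
    · intro j
      have expand : M.mulVec u (Sum.inr j)
          = (∑ i, M (Sum.inr j) (Sum.inl i) * u (Sum.inl i))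
            + ∑ j', M (Sum.inr j) (Sum.inr j') * u (Sum.inr j') := by
        simp [Matrix.mulVec, dotProduct, Fintype.sum_sum_type]
      rw [expand]
      have hA : (∑ i, M (Sum.inr j) (Sum.inl i) * u (Sum.inl i))
          = (∑ i, ψpw i j * u (Sum.inl i)) - ψw j * ∑ i, ψp i * u (Sum.inl i) := by
        have e : ∀ i, M (Sum.inr j) (Sum.inl i) * u (Sum.inl i)
            = ψpw i j * u (Sum.inl i) - ψw j * (ψp i * u (Sum.inl i)) := by
          intro i; rw [hMwp]; ring
        simp only [e, Finset.sum_sub_distrib, ← Finset.mul_sum]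
      have hB : (∑ j', M (Sum.inr j) (Sum.inr j') * u (Sum.inr j'))
          = ψw j * u (Sum.inr j) - ψw j * ∑ j', ψw j' * u (Sum.inr j') := by
        have e : ∀ j', M (Sum.inr j) (Sum.inr j') * u (Sum.inr j')
            = (if j' = j then ψw j * u (Sum.inr j) else 0)
              - ψw j * (ψw j' * u (Sum.inr j')) := by
          intro j'
          rw [hMww]
          by_cases h : j' = j
          · subst h; rw [if_pos rfl, if_pos rfl]; ring
          · rw [if_neg (Ne.symm h), if_neg h]; ring
        simp only [e, Finset.sum_sub_distrib, Finset.sum_ite_eq', Finset.mem_univ,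
          if_true, ← Finset.mul_sum]
      rw [hA, hB, h1, h2]
      have e2 : ∀ (i : Fin (n+1)) (k : Fin l),
          ψ i k j * (u (Sum.inl i) + u (Sum.inr j))
            = ψ i k j * u (Sum.inl i) + ψ i k j * u (Sum.inr j) := fun i k => mul_add _ _ _
      simp only [e2, Finset.sum_add_distrib]
      have r1 : (∑ i, ∑ k, ψ i k j * u (Sum.inl i)) = ∑ i, ψpw i j * u (Sum.inl i) := by
        refine Finset.sum_congr rfl fun i _ => ?_
        rw [hψpw, Finset.sum_mul]
      have r2 : (∑ i, ∑ k, ψ i k j * u (Sum.inr j)) = ψw j * u (Sum.inr j) := by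
        rw [hψw]; simp only [Finset.sum_mul]
      rw [r1, r2]; ring
  have hKx : K.mulVec xInf = Sum.elim chat fun _ => 0 := by
    rw [hxInf, Matrix.mulVec_mulVec, hKK', Matrix.one_mulVec]
  have hfeas1 : (∑ i, φp i * xInf (Sum.inl i)) = 0 := by
    have h := congrFun hKx (Sum.inr 0)
    simp [Matrix.mulVec, dotProduct, Fintype.sum_sum_type, hKB, hBp0, hBw0] at h
    exact h
  have hfeas2 : (∑ j, φw j * xInf (Sum.inr j)) = 0 := by
    have h := congrFun hKx (Sum.inr 1)
    simp [Matrix.mulVec, dotProduct, Fintype.sum_sum_type, hKB, hBp1, hBw1] at h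
    exact h
  have hψf1 : (∑ i, ψp i * xInf (Sum.inl i)) = 0 := by rw [← hφpψ]; exact hfeas1
  have hψf2 : (∑ j, ψw j * xInf (Sum.inr j)) = 0 := by rw [← hφwψ]; exact hfeas2
  have hMx := Mrow xInf hψf1 hψf2
  have hhat : ∀ i : Fin n, cp i.castSucc
      = ∑ k, ∑ j, ψ i.castSucc k j * (xInf (Sum.inl i.castSucc) + xInf (Sum.inr j)) := by
    intro i
    have h := congrFun hKx (Sum.inl (Sum.inl i))
    simp only [Sum.elim_inl, hchatp] at h
    have h2 : K.mulVec xInf (Sum.inl (Sum.inl i)) = M.mulVec xInf (Sum.inl i.castSucc) := by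
      simp only [Matrix.mulVec, dotProduct, hKM, hMhatp]
    rw [h2, hMx.1 i.castSucc] at h
    exact h.symm
  have hhatw : ∀ j : Fin m, cw j.castSucc
      = ∑ i, ∑ k, ψ i k j.castSucc * (xInf (Sum.inl i) + xInf (Sum.inr j.castSucc)) := by
    intro j
    have h := congrFun hKx (Sum.inl (Sum.inr j))
    simp only [Sum.elim_inl, hchatw] at h
    have h2 : K.mulVec xInf (Sum.inl (Sum.inr j)) = M.mulVec xInf (Sum.inr j.castSucc) := by
      simp only [Matrix.mulVec, dotProduct, hKM, hMhatw]
    rw [h2, hMx.2 j.castSucc] at h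
    exact h.symm
  have hcpAll : ∀ i, cp i
      = ∑ k, ∑ j, ψ i k j * (xInf (Sum.inl i) + xInf (Sum.inr j)) := by
    have hsum : (∑ i, (cp i
        - ∑ k, ∑ j, ψ i k j * (xInf (Sum.inl i) + xInf (Sum.inr j)))) = 0 := by
      rw [Finset.sum_sub_distrib, sum_cp]
      have e : ∀ (i : Fin (n+1)) (k : Fin l) (j : Fin (m+1)),
          ψ i k j * (xInf (Sum.inl i) + xInf (Sum.inr j))
            = ψ i k j * xInf (Sum.inl i) + ψ i k j * xInf (Sum.inr j) :=
        fun i k j => mul_add _ _ _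
      simp only [e, Finset.sum_add_distrib]
      rw [L1 (fun i => xInf (Sum.inl i)), L2 (fun j => xInf (Sum.inr j)), hψf1, hψf2]
      ring
    have hlast : cp (Fin.last n)
        - (∑ k, ∑ j, ψ (Fin.last n) k j * (xInf (Sum.inl (Fin.last n)) + xInf (Sum.inr j))) = 0 := by
      rw [Fin.sum_univ_castSucc] at hsum
      have hz : (∑ i : Fin n, (cp i.castSucc
          - ∑ k, ∑ j, ψ i.castSucc k j * (xInf (Sum.inl i.castSucc) + xInf (Sum.inr j)))) = 0 :=
        Finset.sum_eq_zero fun i _ => by rw [hhat i]; ring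
      rw [hz, zero_add] at hsum
      exact hsum
    intro i
    induction i using Fin.lastCases with
    | last => linarith [hlast]
    | cast i => exact hhat i
  have hcwAll : ∀ j, cw j
      = ∑ i, ∑ k, ψ i k j * (xInf (Sum.inl i) + xInf (Sum.inr j)) := by
    have hsum : (∑ j, (cw j
        - ∑ i, ∑ k, ψ i k j * (xInf (Sum.inl i) + xInf (Sum.inr j)))) = 0 := by
      rw [Finset.sum_sub_distrib, sum_cw]
      rw [← reorder fun i k j => ψ i k j * (xInf (Sum.inl i) + xInf (Sum.inr j))]
      have e : ∀ (i : Fin (n+1)) (k : Fin l) (j : Fin (m+1)),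
          ψ i k j * (xInf (Sum.inl i) + xInf (Sum.inr j))
            = ψ i k j * xInf (Sum.inl i) + ψ i k j * xInf (Sum.inr j) :=
        fun i k j => mul_add _ _ _
      simp only [e, Finset.sum_add_distrib]
      rw [L1 (fun i => xInf (Sum.inl i)), L2 (fun j => xInf (Sum.inr j)), hψf1, hψf2]
      ring
    have hlast : cw (Fin.last m)
        - (∑ i, ∑ k, ψ i k (Fin.last m) * (xInf (Sum.inl i) + xInf (Sum.inr (Fin.last m)))) = 0 := by
      rw [Fin.sum_univ_castSucc] at hsum
      have hz : (∑ j : Fin m, (cw j.castSucc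
          - ∑ i, ∑ k, ψ i k j.castSucc * (xInf (Sum.inl i) + xInf (Sum.inr j.castSucc)))) = 0 :=
        Finset.sum_eq_zero fun j _ => by rw [hhatw j]; ring
      rw [hz, zero_add] at hsum
      exact hsum
    intro j
    induction j using Fin.lastCases with
    | last => linarith [hlast]
    | cast j => exact hhatw j
  have Clem : ∀ (xP : Fin (n+1) → ℝ) (xW : Fin (m+1) → ℝ),
      (∑ i, cp i * xP i) + (∑ j, cw j * xW j)
        = ∑ i, ∑ k, ∑ j, ψ i k j * (xInf (Sum.inl i) + xInf (Sum.inr j)) * (xP i + xW j) := by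
    intro xP xW
    have hA : (∑ i, cp i * xP i)
        = ∑ i, ∑ k, ∑ j, ψ i k j * (xInf (Sum.inl i) + xInf (Sum.inr j)) * xP i := by
      simp only [hcpAll, Finset.sum_mul]
    have hB : (∑ j, cw j * xW j)
        = ∑ i, ∑ k, ∑ j, ψ i k j * (xInf (Sum.inl i) + xInf (Sum.inr j)) * xW j := by
      rw [reorder fun i k j => ψ i k j * (xInf (Sum.inl i) + xInf (Sum.inr j)) * xW j]
      simp only [hcwAll, Finset.sum_mul]
    rw [hA, hB]
    have e : ∀ (i : Fin (n+1)) (k : Fin l) (j : Fin (m+1)),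
        ψ i k j * (xInf (Sum.inl i) + xInf (Sum.inr j)) * (xP i + xW j)
          = ψ i k j * (xInf (Sum.inl i) + xInf (Sum.inr j)) * xP i
            + ψ i k j * (xInf (Sum.inl i) + xInf (Sum.inr j)) * xW j :=
      fun i k j => mul_add _ _ _
    simp only [e, Finset.sum_add_distrib]
  have Fval : ∀ (xP : Fin (n+1) → ℝ) (xW : Fin (m+1) → ℝ),
      (∑ i, φp i * xP i) = 0 → (∑ j, φw j * xW j) = 0 →
      F a xP xW = μy - a * (σy2
        - 2 * (∑ i, ∑ k, ∑ j, ψ i k j * (xInf (Sum.inl i) + xInf (Sum.inr j)) * (xP i + xW j))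
        + ∑ i, ∑ k, ∑ j, ψ i k j * (xP i + xW j) * (xP i + xW j)) := by
    intro xP xW h1 h2
    rw [hφpψ] at h1
    rw [hφwψ] at h2
    rw [hF, mean xP xW h1 h2, varid xP xW h1 h2]
    have hv1 : (∑ i, cp i * xP i) = -∑ i, vp i * xP i := by
      have e : ∀ i, cp i * xP i = μy * (ψp i * xP i) - vp i * xP i := by
        intro i; rw [hcp]; ring
      simp only [e, Finset.sum_sub_distrib, ← Finset.mul_sum]
      rw [h1]; ring
    have hv2 : (∑ j, cw j * xW j) = -∑ j, vw j * xW j := by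
      have e : ∀ j, cw j * xW j = μy * (ψw j * xW j) - vw j * xW j := by
        intro j; rw [hcw]; ring
      simp only [e, Finset.sum_sub_distrib, ← Finset.mul_sum]
      rw [h2]; ring
    have hC := Clem xP xW
    rw [hv1, hv2] at hC
    have hrw : (∑ i, vp i * xP i) + (∑ j, vw j * xW j)
        = -(∑ i, ∑ k, ∑ j, ψ i k j * (xInf (Sum.inl i) + xInf (Sum.inr j)) * (xP i + xW j)) := by
      linarith
    rw [hrw]; ring
  have expand2 : ∀ (vP : Fin (n+1) → ℝ) (vW : Fin (m+1) → ℝ),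
      (∑ i, ∑ k, ∑ j, ψ i k j * ((vP i - xInf (Sum.inl i)) + (vW j - xInf (Sum.inr j)))^2)
        = (∑ i, ∑ k, ∑ j, ψ i k j * (vP i + vW j) * (vP i + vW j))
          - 2 * (∑ i, ∑ k, ∑ j, ψ i k j * (xInf (Sum.inl i) + xInf (Sum.inr j)) * (vP i + vW j))
          + ∑ i, ∑ k, ∑ j, ψ i k j * (xInf (Sum.inl i) + xInf (Sum.inr j))
              * (xInf (Sum.inl i) + xInf (Sum.inr j)) := by
    intro vP vW
    have e : ∀ (i : Fin (n+1)) (k : Fin l) (j : Fin (m+1)),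
        ψ i k j * ((vP i - xInf (Sum.inl i)) + (vW j - xInf (Sum.inr j)))^2
          = ψ i k j * (vP i + vW j) * (vP i + vW j)
            - 2 * (ψ i k j * (xInf (Sum.inl i) + xInf (Sum.inr j)) * (vP i + vW j))
            + ψ i k j * (xInf (Sum.inl i) + xInf (Sum.inr j))
              * (xInf (Sum.inl i) + xInf (Sum.inr j)) := by
      intro i k j; ring
    simp only [e, Finset.sum_add_distrib, Finset.sum_sub_distrib, ← Finset.mul_sum]
  have Dnn : ∀ (vP : Fin (n+1) → ℝ) (vW : Fin (m+1) → ℝ),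
      0 ≤ ∑ i, ∑ k, ∑ j, ψ i k j * ((vP i - xInf (Sum.inl i)) + (vW j - xInf (Sum.inr j)))^2 :=
    fun vP vW => Finset.sum_nonneg fun i _ => Finset.sum_nonneg fun k _ =>
      Finset.sum_nonneg fun j _ => mul_nonneg (hψ0 i k j) (sq_nonneg _)
  have Fopt : ∀ (xP : Fin (n+1) → ℝ) (xW : Fin (m+1) → ℝ),
      (∑ i, φp i * xP i) = 0 → (∑ j, φw j * xW j) = 0 →
      F a xP xW ≤ F a (fun i => xInf (Sum.inl i)) (fun j => xInf (Sum.inr j)) := by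
    intro xP xW h1 h2
    rw [Fval xP xW h1 h2, Fval _ _ hfeas1 hfeas2]
    have hDnn := Dnn xP xW
    have hE := expand2 xP xW
    nlinarith [mul_nonneg ha.le hDnn, hE, ha]
  refine ⟨⟨hfeas1, hfeas2, Fopt⟩, ?_⟩
  intro xP xW h1 h2 hopt
  have hle := hopt (fun i => xInf (Sum.inl i)) (fun j => xInf (Sum.inr j)) hfeas1 hfeas2
  have hge := Fopt xP xW h1 h2
  have heq : F a xP xW = F a (fun i => xInf (Sum.inl i)) (fun j => xInf (Sum.inr j)) :=
    le_antisymm hge hle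
  rw [Fval xP xW h1 h2, Fval _ _ hfeas1 hfeas2] at heq
  have hE := expand2 xP xW
  have hDnn := Dnn xP xW
  set T := ∑ i, ∑ k, ∑ j, ψ i k j * (xInf (Sum.inl i) + xInf (Sum.inr j)) * (xP i + xW j) with hTd
  set Q := ∑ i, ∑ k, ∑ j, ψ i k j * (xP i + xW j) * (xP i + xW j) with hQd
  set C := ∑ i, ∑ k, ∑ j, ψ i k j * (xInf (Sum.inl i) + xInf (Sum.inr j))
      * (xInf (Sum.inl i) + xInf (Sum.inr j)) with hCd
  set D := ∑ i, ∑ k, ∑ j, ψ i k j * ((xP i - xInf (Sum.inl i)) + (xW j - xInf (Sum.inr j)))^2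
    with hDd
  have h5 : a * D = 0 := by
    have h6 : D = (σy2 - 2 * T + Q) - (σy2 - 2 * C + C) := by linarith
    calc a * D = (μy - a * (σy2 - 2 * C + C)) - (μy - a * (σy2 - 2 * T + Q)) := by
          rw [h6]; ring
      _ = 0 := by rw [heq]; ring
  have hD0 : D = 0 := by
    rcases mul_eq_zero.mp h5 with h | h
    · exact absurd h ha.ne'
    · exact h
  rw [hDd] at hD0
  have hterm : ∀ (i : Fin (n+1)) (k : Fin l) (j : Fin (m+1)),
      ψ i k j * ((xP i - xInf (Sum.inl i)) + (xW j - xInf (Sum.inr j))) = 0 := by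
    have p2 : ∀ (i : Fin (n+1)) (k : Fin l) (j : Fin (m+1)),
        0 ≤ ψ i k j * ((xP i - xInf (Sum.inl i)) + (xW j - xInf (Sum.inr j)))^2 :=
      fun i k j => mul_nonneg (hψ0 i k j) (sq_nonneg _)
    have h1' := (Finset.sum_eq_zero_iff_of_nonneg fun i _ =>
      Finset.sum_nonneg fun k _ => Finset.sum_nonneg fun j _ => p2 i k j).mp hD0
    intro i k j
    have h2' := (Finset.sum_eq_zero_iff_of_nonneg fun k _ =>
      Finset.sum_nonneg fun j _ => p2 i k j).mp (h1' i (Finset.mem_univ i))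
    have h3' := (Finset.sum_eq_zero_iff_of_nonneg fun j _ => p2 i k j).mp
      (h2' k (Finset.mem_univ k))
    have h4' := h3' j (Finset.mem_univ j)
    rcases mul_eq_zero.mp h4' with h | h
    · rw [h, zero_mul]
    · rw [pow_eq_zero_iff (two_ne_zero)] at h
      rw [h, mul_zero]
  have h1ψ : (∑ i, ψp i * xP i) = 0 := by rw [← hφpψ]; exact h1
  have h2ψ : (∑ j, ψw j * xW j) = 0 := by rw [← hφwψ]; exact h2
  have hu1 : (∑ i, ψp i * (xP i - xInf (Sum.inl i))) = 0 := by
    have e : ∀ i, ψp i * (xP i - xInf (Sum.inl i))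
        = ψp i * xP i - ψp i * xInf (Sum.inl i) := fun i => mul_sub _ _ _
    simp only [e, Finset.sum_sub_distrib]
    rw [h1ψ, hψf1]; ring
  have hu2 : (∑ j, ψw j * (xW j - xInf (Sum.inr j))) = 0 := by
    have e : ∀ j, ψw j * (xW j - xInf (Sum.inr j))
        = ψw j * xW j - ψw j * xInf (Sum.inr j) := fun j => mul_sub _ _ _
    simp only [e, Finset.sum_sub_distrib]
    rw [h2ψ, hψf2]; ring
  have hMu := Mrow (Sum.elim (fun i => xP i - xInf (Sum.inl i))
    (fun j => xW j - xInf (Sum.inr j))) hu1 hu2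
  have hrowP : ∀ i : Fin (n+1),
      M.mulVec (Sum.elim (fun i => xP i - xInf (Sum.inl i))
        (fun j => xW j - xInf (Sum.inr j))) (Sum.inl i) = 0 := by
    intro i
    rw [hMu.1 i]
    refine Finset.sum_eq_zero fun k _ => Finset.sum_eq_zero fun j _ => ?_
    simpa using hterm i k j
  have hrowW : ∀ j : Fin (m+1),
      M.mulVec (Sum.elim (fun i => xP i - xInf (Sum.inl i))
        (fun j => xW j - xInf (Sum.inr j))) (Sum.inr j) = 0 := by
    intro j
    rw [hMu.2 j]
    refine Finset.sum_eq_zero fun i _ => Finset.sum_eq_zero fun k _ => ?_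
    simpa using hterm i k j
  have hKu : K.mulVec (Sum.elim (fun i => xP i - xInf (Sum.inl i))
      (fun j => xW j - xInf (Sum.inr j))) = 0 := by
    funext s
    rw [Pi.zero_apply]
    cases s with
    | inl s =>
      cases s with
      | inl i =>
        have h2' : K.mulVec (Sum.elim (fun i => xP i - xInf (Sum.inl i))
            (fun j => xW j - xInf (Sum.inr j))) (Sum.inl (Sum.inl i))
            = M.mulVec (Sum.elim (fun i => xP i - xInf (Sum.inl i))
              (fun j => xW j - xInf (Sum.inr j))) (Sum.inl i.castSucc) := by
          simp only [Matrix.mulVec, dotProduct, hKM, hMhatp]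
        rw [h2', hrowP]
      | inr j =>
        have h2' : K.mulVec (Sum.elim (fun i => xP i - xInf (Sum.inl i))
            (fun j => xW j - xInf (Sum.inr j))) (Sum.inl (Sum.inr j))
            = M.mulVec (Sum.elim (fun i => xP i - xInf (Sum.inl i))
              (fun j => xW j - xInf (Sum.inr j))) (Sum.inr j.castSucc) := by
          simp only [Matrix.mulVec, dotProduct, hKM, hMhatw]
        rw [h2', hrowW]
    | inr t =>
      have hz0 : K.mulVec (Sum.elim (fun i => xP i - xInf (Sum.inl i))
          (fun j => xW j - xInf (Sum.inr j))) (Sum.inr 0) = 0 := by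
        have h2' : K.mulVec (Sum.elim (fun i => xP i - xInf (Sum.inl i))
            (fun j => xW j - xInf (Sum.inr j))) (Sum.inr 0)
            = ∑ i, φp i * (xP i - xInf (Sum.inl i)) := by
          simp [Matrix.mulVec, dotProduct, Fintype.sum_sum_type, hKB, hBp0, hBw0]
        rw [h2']
        have e : ∀ i, φp i * (xP i - xInf (Sum.inl i))
            = φp i * xP i - φp i * xInf (Sum.inl i) := fun i => mul_sub _ _ _
        simp only [e, Finset.sum_sub_distrib]
        rw [h1, hfeas1]; ring
      have hz1 : K.mulVec (Sum.elim (fun i => xP i - xInf (Sum.inl i))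
          (fun j => xW j - xInf (Sum.inr j))) (Sum.inr 1) = 0 := by
        have h2' : K.mulVec (Sum.elim (fun i => xP i - xInf (Sum.inl i))
            (fun j => xW j - xInf (Sum.inr j))) (Sum.inr 1)
            = ∑ j, φw j * (xW j - xInf (Sum.inr j)) := by
          simp [Matrix.mulVec, dotProduct, Fintype.sum_sum_type, hKB, hBp1, hBw1]
        rw [h2']
        have e : ∀ j, φw j * (xW j - xInf (Sum.inr j))
            = φw j * xW j - φw j * xInf (Sum.inr j) := fun j => mul_sub _ _ _
        simp only [e, Finset.sum_sub_distrib]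
        rw [h2, hfeas2]; ring
      fin_cases t
      · exact hz0
      · exact hz1
  have huz : (Sum.elim (fun i => xP i - xInf (Sum.inl i))
      (fun j => xW j - xInf (Sum.inr j)) : Fin (n+1) ⊕ Fin (m+1) → ℝ) = 0 := by
    have h7 : K'.mulVec (K.mulVec (Sum.elim (fun i => xP i - xInf (Sum.inl i))
        (fun j => xW j - xInf (Sum.inr j)))) = Sum.elim (fun i => xP i - xInf (Sum.inl i))
        (fun j => xW j - xInf (Sum.inr j)) := by
      rw [Matrix.mulVec_mulVec, hK'K, Matrix.one_mulVec]
    rw [hKu, Matrix.mulVec_zero] at h7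
    exact h7.symm
  funext s
  cases s with
  | inl i =>
    have h8 := congrFun huz (Sum.inl i)
    simp only [Sum.elim_inl, Pi.zero_apply] at h8 ⊢
    linarith
  | inr j =>
    have h8 := congrFun huz (Sum.inr j)
    simp only [Sum.elim_inr, Pi.zero_apply] at h8 ⊢
    linarith
end
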